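/- arXiv:1105.5954 — 13 statements merged into one kernel-verified Lean document; each statement's English description precedes it below -/
import Mathlib

section
/- The discrete HJB equation has exactly one solution: there exists a unique vector x ∈ ℝ^N such that min_{u∈U}{A_u x − b_u} = 0, i.e. for every component i one has min_{u∈U}(A_u x − b_u)_i = 0. -/
open Matrix Filter

/-- The set `K^o_N`: Z-matrices (non-positive off-diagonal entries) which are
strictly diagonally dominant. -/
def KoMat {N : ℕ} (A : Matrix (Fin N) (Fin N) ℝ) : Prop :=
  (∀ r s, r ≠ s → A r s ≤ 0) ∧
  ∀ r, ∑ s ∈ Finset.univ.erase r, |A r s| < A r r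

/-- The discrete HJB equation `min_{u ∈ U} {A_u x - b_u} = 0` has exactly one solution. -/
theorem discrete_HJB_unique_solution
    (N : ℕ) (hN : 0 < N) (a b : ℝ) (hab : a ≤ b)
    (𝔄 : ℝ → Matrix (Fin N) (Fin N) ℝ) (𝔅 : ℝ → (Fin N → ℝ))
    (hAcont : ContinuousOn 𝔄 (Set.Icc a b)) (hbcont : ContinuousOn 𝔅 (Set.Icc a b))
    (hKo : ∀ u ∈ Set.Icc a b, KoMat (𝔄 u)) :
    ∃! x : Fin N → ℝ,
      ∀ i : Fin N,
        IsLeast ((fun u => (𝔄 u *ᵥ x - 𝔅 u) i) '' Set.Icc a b) 0 := by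
  haveI : Nonempty (Fin N) := ⟨⟨0, hN⟩⟩
  have haI : a ∈ Set.Icc a b := ⟨le_refl a, hab⟩
  have hIne : (Set.Icc a b).Nonempty := ⟨a, haI⟩
  have hIc : IsCompact (Set.Icc a b) := isCompact_Icc
  -- entrywise continuity
  have hA : ∀ i j, ContinuousOn (fun u => 𝔄 u i j) (Set.Icc a b) := by
    intro i j
    exact ((continuous_apply j).comp (continuous_apply i)).comp_continuousOn hAcont
  have hB : ∀ i, ContinuousOn (fun u => 𝔅 u i) (Set.Icc a b) := fun i =>
    (continuous_apply i).comp_continuousOn hbcont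
  have hcont : ∀ (x : Fin N → ℝ) (i : Fin N),
      ContinuousOn (fun u => (𝔄 u *ᵥ x - 𝔅 u) i) (Set.Icc a b) := by
    intro x i
    have h : ContinuousOn (fun u => (∑ j, 𝔄 u i j * x j) - 𝔅 u i) (Set.Icc a b) :=
      ContinuousOn.sub
        (continuousOn_finset_sum _ (fun j _ => (hA i j).mul continuousOn_const)) (hB i)
    simpa [Matrix.mulVec, dotProduct] using h
  have hex : ∀ (x : Fin N → ℝ) (i : Fin N),
      ∃ m, IsLeast ((fun u => (𝔄 u *ᵥ x - 𝔅 u) i) '' Set.Icc a b) m := fun x i =>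
    (hIc.image_of_continuousOn (hcont x i)).exists_isLeast (hIne.image _)
  choose F hF using hex
  -- one-sided estimate
  have hFle : ∀ x y i, ∃ u ∈ Set.Icc a b, F x i - F y i ≤ (𝔄 u *ᵥ (x - y)) i := by
    intro x y i
    obtain ⟨u, hu, hue⟩ := (hF y i).1
    refine ⟨u, hu, ?_⟩
    have h1 : F x i ≤ (𝔄 u *ᵥ x - 𝔅 u) i := (hF x i).2 ⟨u, hu, rfl⟩
    have h2 : (𝔄 u *ᵥ (x - y)) i = (𝔄 u *ᵥ x - 𝔅 u) i - (𝔄 u *ᵥ y - 𝔅 u) i := by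
      simp [Matrix.mulVec_sub]
    rw [h2, ← hue]
    simp only at h1 ⊢
    linarith
  -- constants
  have hdiagpos : ∀ u ∈ Set.Icc a b, ∀ i, 0 < 𝔄 u i i := by
    intro u hu i
    have h := (hKo u hu).2 i
    have h0 : (0:ℝ) ≤ ∑ s ∈ Finset.univ.erase i, |𝔄 u i s| :=
      Finset.sum_nonneg fun _ _ => abs_nonneg _
    linarith
  -- M : uniform upper bound on diagonal entries
  have hdiagmax : ∀ i : Fin N, ∃ w ∈ Set.Icc a b, ∀ u ∈ Set.Icc a b, 𝔄 u i i ≤ 𝔄 w i i := by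
    intro i
    obtain ⟨w, hw, hwmax⟩ := hIc.exists_isMaxOn hIne (hA i i)
    exact ⟨w, hw, fun u hu => hwmax hu⟩
  choose v hvI hvmax using hdiagmax
  set M : ℝ := Finset.univ.sup' Finset.univ_nonempty (fun i => 𝔄 (v i) i i) with hMdef
  have hMle : ∀ u ∈ Set.Icc a b, ∀ i, 𝔄 u i i ≤ M := by
    intro u hu i
    rw [hMdef]
    exact (hvmax i u hu).trans (Finset.le_sup' (fun j => 𝔄 (v j) j j) (Finset.mem_univ i))
  have hM0 : 0 < M := by
    obtain ⟨i⟩ := (inferInstance : Nonempty (Fin N))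
    exact lt_of_lt_of_le (hdiagpos a haI i) (hMle a haI i)
  -- δ : uniform gap
  set g : Fin N → ℝ → ℝ := fun i u => 𝔄 u i i - ∑ s ∈ Finset.univ.erase i, |𝔄 u i s| with hgdef
  have hgcont : ∀ i, ContinuousOn (g i) (Set.Icc a b) := fun i =>
    (hA i i).sub (continuousOn_finset_sum _ (fun j _ => (hA i j).abs))
  have hgmin : ∀ i : Fin N, ∃ w ∈ Set.Icc a b, ∀ u ∈ Set.Icc a b, g i w ≤ g i u := by
    intro i
    obtain ⟨w, hw, hwmin⟩ := hIc.exists_isMinOn hIne (hgcont i)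
    exact ⟨w, hw, fun u hu => hwmin hu⟩
  choose w hwI hwmin using hgmin
  set δ : ℝ := Finset.univ.inf' Finset.univ_nonempty (fun i => g i (w i)) with hδdef
  have hδpos : 0 < δ := by
    rw [hδdef, Finset.lt_inf'_iff]
    intro i _
    have h := (hKo (w i) (hwI i)).2 i
    simp only [hgdef]
    linarith
  have hδle : ∀ u ∈ Set.Icc a b, ∀ i, δ ≤ g i u := fun u hu i =>
    (Finset.inf'_le _ (Finset.mem_univ i)).trans (hwmin i u hu)
  have hδM : δ ≤ M := by
    obtain ⟨i⟩ := (inferInstance : Nonempty (Fin N))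
    have h1 := hδle a haI i
    have h2 : (0:ℝ) ≤ ∑ s ∈ Finset.univ.erase i, |𝔄 a i s| :=
      Finset.sum_nonneg fun _ _ => abs_nonneg _
    have h3 := hMle a haI i
    simp only [hgdef] at h1
    linarith
  set l : ℝ := 1 / (M + 1) with hldef
  have hl0 : 0 < l := by positivity
  set q : ℝ := 1 - l * δ with hqdef
  have hlM : ∀ c : ℝ, c ≤ M → l * c ≤ 1 := by
    intro c hc
    rw [hldef, div_mul_eq_mul_div, div_le_one (by linarith)]
    linarith
  have hq0 : 0 ≤ q := by
    have := hlM δ hδM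
    rw [hqdef]; linarith
  have hq1 : q < 1 := by
    have : 0 < l * δ := mul_pos hl0 hδpos
    rw [hqdef]; linarith
  -- the key matrix bound
  have hbound : ∀ u ∈ Set.Icc a b, ∀ (z : Fin N → ℝ) (C : ℝ), 0 ≤ C → (∀ j, |z j| ≤ C) →
      ∀ i, |z i - l * (𝔄 u *ᵥ z) i| ≤ q * C := by
    intro u hu z C hC hz i
    have hsplit : (𝔄 u *ᵥ z) i = 𝔄 u i i * z i + ∑ j ∈ Finset.univ.erase i, 𝔄 u i j * z j := by
      simp only [Matrix.mulVec, dotProduct]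
      rw [← Finset.add_sum_erase _ _ (Finset.mem_univ i)]
    have key : z i - l * (𝔄 u *ᵥ z) i
        = (1 - l * 𝔄 u i i) * z i + ∑ j ∈ Finset.univ.erase i, (-l) * (𝔄 u i j * z j) := by
      rw [hsplit, ← Finset.mul_sum]
      ring
    have hdle : 𝔄 u i i ≤ M := hMle u hu i
    have hd1 : l * 𝔄 u i i ≤ 1 := hlM _ hdle
    have habs1 : |(1 - l * 𝔄 u i i) * z i| ≤ (1 - l * 𝔄 u i i) * C := by
      rw [abs_mul, abs_of_nonneg (by linarith)]
      exact mul_le_mul_of_nonneg_left (hz i) (by linarith)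
    have habs2 : ∀ j ∈ Finset.univ.erase i, |(-l) * (𝔄 u i j * z j)| ≤ l * (|𝔄 u i j| * C) := by
      intro j _
      rw [abs_mul, abs_mul, abs_neg, abs_of_nonneg hl0.le]
      exact mul_le_mul_of_nonneg_left
        (mul_le_mul_of_nonneg_left (hz j) (abs_nonneg _)) hl0.le
    have hsum : |z i - l * (𝔄 u *ᵥ z) i|
        ≤ (1 - l * 𝔄 u i i) * C + ∑ j ∈ Finset.univ.erase i, l * (|𝔄 u i j| * C) := by
      rw [key]
      refine (abs_add_le _ _).trans ?_
      refine add_le_add habs1 ?_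
      exact (Finset.abs_sum_le_sum_abs _ _).trans (Finset.sum_le_sum habs2)
    have hsum2 : l * (∑ j ∈ Finset.univ.erase i, |𝔄 u i j|) * C
        = ∑ j ∈ Finset.univ.erase i, l * (|𝔄 u i j| * C) := by
      rw [mul_assoc, Finset.sum_mul, Finset.mul_sum]
    have hg := hδle u hu i
    simp only [hgdef] at hg
    calc |z i - l * (𝔄 u *ᵥ z) i|
        ≤ (1 - l * 𝔄 u i i) * C + l * (∑ j ∈ Finset.univ.erase i, |𝔄 u i j|) * C := by
          rw [hsum2]; exact hsum
      _ = (1 - l * (𝔄 u i i - ∑ j ∈ Finset.univ.erase i, |𝔄 u i j|)) * C := by ring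
      _ ≤ (1 - l * δ) * C := by
          have : l * δ ≤ l * (𝔄 u i i - ∑ j ∈ Finset.univ.erase i, |𝔄 u i j|) :=
            mul_le_mul_of_nonneg_left hg hl0.le
          exact mul_le_mul_of_nonneg_right (by linarith) hC
      _ = q * C := by rw [hqdef]
  -- the contraction map
  set T : (Fin N → ℝ) → (Fin N → ℝ) := fun x i => x i - l * F x i with hTdef
  have hTdiff : ∀ x y : Fin N → ℝ, ∀ i, T x i - T y i ≤ q * dist x y := by
    intro x y i
    obtain ⟨u, hu, hle⟩ := hFle y x i
    have hz : ∀ j, |(y - x) j| ≤ dist x y := by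
      intro j
      rw [Pi.sub_apply, ← Real.dist_eq, dist_comm]
      exact dist_le_pi_dist x y j
    have hb := hbound u hu (y - x) (dist x y) dist_nonneg hz i
    have hb' := (abs_le.1 hb).1
    have hmul : l * (F y i - F x i) ≤ l * (𝔄 u *ᵥ (y - x)) i :=
      mul_le_mul_of_nonneg_left hle hl0.le
    have hzi : (y - x) i = y i - x i := rfl
    simp only [hTdef]
    rw [hzi] at hb'
    linarith
  have hlip : ∀ x y : Fin N → ℝ, dist (T x) (T y) ≤ q * dist x y := by
    intro x y
    rw [dist_pi_le_iff (mul_nonneg hq0 dist_nonneg)]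
    intro i
    rw [Real.dist_eq, abs_le]
    have h1 := hTdiff x y i
    have h2 := hTdiff y x i
    rw [dist_comm y x] at h2
    constructor <;> linarith
  have hcontr : ContractingWith ⟨q, hq0⟩ T := by
    constructor
    · exact_mod_cast hq1
    · exact LipschitzWith.of_dist_le_mul hlip
  haveI : Nonempty (Fin N → ℝ) := ⟨0⟩
  set x₀ : Fin N → ℝ := ContractingWith.fixedPoint T hcontr with hx₀def
  have hfix : Function.IsFixedPt T x₀ := ContractingWith.fixedPoint_isFixedPt hcontr
  have hF0 : ∀ i, F x₀ i = 0 := by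
    intro i
    have h := congrFun hfix i
    simp only [hTdef] at h
    have hl : l ≠ 0 := ne_of_gt hl0
    have : l * F x₀ i = 0 := by linarith
    exact (mul_eq_zero.1 this).resolve_left hl
  refine ⟨x₀, fun i => ?_, fun y hy => ?_⟩
  · have h := hF x₀ i
    rwa [hF0 i] at h
  · have hFy : ∀ i, F y i = 0 := fun i => (hF y i).unique (hy i)
    have hyfix : Function.IsFixedPt T y := by
      funext i
      simp [hTdef, hFy i]
    exact hcontr.fixedPoint_unique hyfix
end

section
/- The discrete HJB obstacle problem has exactly one solution: there exists a unique vector z ∈ ℝ^N such that min{ max_{u∈U}{A_u z − b_u}, Ãz − b̃ } = 0, i.e. for every component i one has min{ max_{u∈U}(A_u z − b_u)_i , (Ãz − b̃)_i } = 0. -/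
open Matrix Filter

lemma row_lip {N : ℕ} (i : Fin N) (c : Fin N → ℝ) (τ γ D : ℝ)
    (hτ : 0 ≤ τ) (hτc : τ * c i ≤ 1)
    (hγ : γ ≤ c i - ∑ j ∈ Finset.univ.erase i, |c j|)
    (x y : Fin N → ℝ) (hD : ∀ j, |x j - y j| ≤ D) (hD0 : 0 ≤ D) :
    |(x i - τ * ∑ j, c j * x j) - (y i - τ * ∑ j, c j * y j)| ≤ (1 - τ * γ) * D := by
  set w : Fin N → ℝ := fun j => x j - y j with hw
  have hsplit : ∀ v : Fin N → ℝ, ∑ j, c j * v j = c i * v i + ∑ j ∈ Finset.univ.erase i, c j * v j := by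
    intro v
    rw [← Finset.add_sum_erase _ _ (Finset.mem_univ i)]
  have key : (x i - τ * ∑ j, c j * x j) - (y i - τ * ∑ j, c j * y j)
      = (1 - τ * c i) * w i - τ * ∑ j ∈ Finset.univ.erase i, c j * w j := by
    have hsum : ∑ j ∈ Finset.univ.erase i, c j * w j
        = ∑ j ∈ Finset.univ.erase i, c j * x j - ∑ j ∈ Finset.univ.erase i, c j * y j := by
      rw [← Finset.sum_sub_distrib]
      exact Finset.sum_congr rfl fun j _ => by simp only [hw]; ring
    rw [hsplit x, hsplit y, hsum]
    simp only [hw]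
    ring
  rw [key]
  have h1 : |(1 - τ * c i) * w i| ≤ (1 - τ * c i) * D := by
    rw [abs_mul, abs_of_nonneg (by linarith)]
    exact mul_le_mul_of_nonneg_left (hD i) (by linarith)
  have h2 : |τ * ∑ j ∈ Finset.univ.erase i, c j * w j| ≤ τ * (∑ j ∈ Finset.univ.erase i, |c j|) * D := by
    rw [abs_mul, abs_of_nonneg hτ, mul_assoc]
    refine mul_le_mul_of_nonneg_left ?_ hτ
    calc |∑ j ∈ Finset.univ.erase i, c j * w j| ≤ ∑ j ∈ Finset.univ.erase i, |c j * w j| :=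
          Finset.abs_sum_le_sum_abs _ _
      _ ≤ ∑ j ∈ Finset.univ.erase i, |c j| * D := by
          refine Finset.sum_le_sum fun j _ => ?_
          rw [abs_mul]
          exact mul_le_mul_of_nonneg_left (hD j) (abs_nonneg _)
      _ = (∑ j ∈ Finset.univ.erase i, |c j|) * D := by rw [Finset.sum_mul]
  calc |(1 - τ * c i) * w i - τ * ∑ j ∈ Finset.univ.erase i, c j * w j|
      ≤ |(1 - τ * c i) * w i| + |τ * ∑ j ∈ Finset.univ.erase i, c j * w j| := abs_sub _ _
    _ ≤ (1 - τ * c i) * D + τ * (∑ j ∈ Finset.univ.erase i, |c j|) * D := add_le_add h1 h2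
    _ ≤ (1 - τ * γ) * D := by nlinarith [mul_le_mul_of_nonneg_left hγ hτ]

lemma tau_sSup_le {U : Set ℝ} (hU : U.Nonempty) (f g : ℝ → ℝ)
    (hf : BddAbove (f '' U)) (τ c : ℝ) (hτ : 0 ≤ τ)
    (h : ∀ u ∈ U, τ * g u ≤ c + τ * f u) :
    τ * sSup (g '' U) ≤ c + τ * sSup (f '' U) := by
  rcases hτ.eq_or_lt with rfl | hτ'
  · obtain ⟨u, hu⟩ := hU
    have := h u hu
    simpa using this
  · have hle : sSup (g '' U) ≤ (c + τ * sSup (f '' U)) / τ := by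
      refine csSup_le (hU.image g) ?_
      rintro v ⟨u, hu, rfl⟩
      rw [le_div_iff₀ hτ', mul_comm]
      have hfu : f u ≤ sSup (f '' U) := le_csSup hf ⟨u, hu, rfl⟩
      have := h u hu
      nlinarith
    calc τ * sSup (g '' U) ≤ τ * ((c + τ * sSup (f '' U)) / τ) :=
          mul_le_mul_of_nonneg_left hle hτ
      _ = c + τ * sSup (f '' U) := by field_simp

lemma abs_sub_tau_sSup_le {U : Set ℝ} (hU : U.Nonempty) (f g : ℝ → ℝ)
    (hf : BddAbove (f '' U)) (hg : BddAbove (g '' U))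
    (p q τ c : ℝ) (hτ : 0 ≤ τ)
    (h : ∀ u ∈ U, |(p - τ * f u) - (q - τ * g u)| ≤ c) :
    |(p - τ * sSup (f '' U)) - (q - τ * sSup (g '' U))| ≤ c := by
  rw [abs_le]
  constructor
  · have := tau_sSup_le hU g f hg τ (c + (p - q)) hτ (fun u hu => by
      have := h u hu; rw [abs_le] at this; linarith [this.1, this.2])
    linarith
  · have := tau_sSup_le hU f g hf τ (c + (q - p)) hτ (fun u hu => by
      have := h u hu; rw [abs_le] at this; linarith [this.1, this.2])
    linarith

/-- The discrete HJB obstacle problem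
`min { max_{u ∈ U} {A_u z - b_u}, Ã z - b̃ } = 0` has exactly one solution.
The inner maximum over the compact set `U` is expressed via `sSup` of the image
(the supremum is attained by compactness and continuity). -/
theorem discrete_HJB_obstacle_unique_solution
    (N : ℕ) (hN : 0 < N) (a b : ℝ) (hab : a ≤ b)
    (𝔄 : ℝ → Matrix (Fin N) (Fin N) ℝ) (𝔅 : ℝ → (Fin N → ℝ))
    (hAcont : ContinuousOn 𝔄 (Set.Icc a b)) (hbcont : ContinuousOn 𝔅 (Set.Icc a b))
    (hKo : ∀ u ∈ Set.Icc a b, KoMat (𝔄 u))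
    (At : Matrix (Fin N) (Fin N) ℝ) (bt : Fin N → ℝ) (hAt : KoMat At) :
    ∃! z : Fin N → ℝ,
      ∀ i : Fin N,
        min (sSup ((fun u => (𝔄 u *ᵥ z - 𝔅 u) i) '' Set.Icc a b))
          ((At *ᵥ z - bt) i) = 0 := by
  classical
  have finne : Nonempty (Fin N) := ⟨⟨0, hN⟩⟩
  have huniv : (Finset.univ : Finset (Fin N)).Nonempty := Finset.univ_nonempty
  set K : Set ℝ := Set.Icc a b with hKdef
  have hKne : K.Nonempty := Set.nonempty_Icc.2 hab
  have hKcpt : IsCompact K := isCompact_Icc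
  have hentry : ∀ i j : Fin N, ContinuousOn (fun u => 𝔄 u i j) K :=
    fun i j => (continuous_apply_apply i j).comp_continuousOn hAcont
  have hexprA : ∀ (z : Fin N → ℝ) (u : ℝ) (i : Fin N),
      (𝔄 u *ᵥ z - 𝔅 u) i = (∑ j, 𝔄 u i j * z j) - 𝔅 u i := by
    intro z u i
    simp [Matrix.mulVec, dotProduct]
  have hexprAt : ∀ (z : Fin N → ℝ) (i : Fin N),
      (At *ᵥ z - bt) i = (∑ j, At i j * z j) - bt i := by
    intro z i
    simp [Matrix.mulVec, dotProduct]
  have hconts : ∀ (z : Fin N → ℝ) (i : Fin N),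
      ContinuousOn (fun u => (𝔄 u *ᵥ z - 𝔅 u) i) K := by
    intro z i
    have heq : (fun u => (𝔄 u *ᵥ z - 𝔅 u) i) = fun u => (∑ j, 𝔄 u i j * z j) - 𝔅 u i := by
      funext u; exact hexprA z u i
    rw [heq]
    exact (continuousOn_finset_sum _ fun j _ => (hentry i j).mul continuousOn_const).sub
      ((continuous_apply i).comp_continuousOn hbcont)
  have hbdd : ∀ (z : Fin N → ℝ) (i : Fin N),
      BddAbove ((fun u => (𝔄 u *ᵥ z - 𝔅 u) i) '' K) :=
    fun z i => hKcpt.bddAbove_image (hconts z i)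
  -- uniform gap lower bound and diagonal upper bound for the family
  have hγex : ∀ i : Fin N, ∃ g : ℝ, 0 < g ∧
      ∀ u ∈ K, g ≤ 𝔄 u i i - ∑ j ∈ Finset.univ.erase i, |𝔄 u i j| := by
    intro i
    have hc : ContinuousOn (fun u => 𝔄 u i i - ∑ j ∈ Finset.univ.erase i, |𝔄 u i j|) K :=
      (hentry i i).sub (continuousOn_finset_sum _ fun j _ => (hentry i j).abs)
    obtain ⟨u0, hu0, hmin⟩ := hKcpt.exists_isMinOn hKne hc
    exact ⟨_, sub_pos.2 ((hKo u0 hu0).2 i), fun u hu => isMinOn_iff.mp hmin u hu⟩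
  choose γf hγfpos hγf using hγex
  have hMex : ∀ i : Fin N, ∃ m : ℝ, ∀ u ∈ K, 𝔄 u i i ≤ m := by
    intro i
    obtain ⟨u0, hu0, hmax⟩ := hKcpt.exists_isMaxOn hKne (hentry i i)
    exact ⟨_, fun u hu => isMaxOn_iff.mp hmax u hu⟩
  choose Mf hMf using hMex
  set γA : ℝ := Finset.univ.inf' huniv (fun i => At i i - ∑ j ∈ Finset.univ.erase i, |At i j|)
    with hγAdef
  set γ : ℝ := min (Finset.univ.inf' huniv γf) γA with hγdef
  set M : ℝ := max (max (Finset.univ.sup' huniv Mf) (Finset.univ.sup' huniv fun i => At i i)) γ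
    with hMdef
  have hγpos : 0 < γ := by
    refine lt_min ?_ ?_
    · exact (Finset.lt_inf'_iff huniv).2 fun i _ => hγfpos i
    · exact (Finset.lt_inf'_iff huniv).2 fun i _ => sub_pos.2 (hAt.2 i)
  have hγM : γ ≤ M := le_max_right _ _
  have hM0 : 0 < M := hγpos.trans_le hγM
  set τ : ℝ := 1 / M with hτdef
  have hτpos : 0 < τ := by positivity
  have hτ : 0 ≤ τ := hτpos.le
  have hτM : τ * M = 1 := one_div_mul_cancel hM0.ne'
  have hτγle : τ * γ ≤ 1 := by
    calc τ * γ ≤ τ * M := mul_le_mul_of_nonneg_left hγM hτ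
      _ = 1 := hτM
  set L : ℝ := 1 - τ * γ with hLdef
  have hL0 : 0 ≤ L := by simp only [hLdef]; linarith
  have hL1 : L < 1 := by
    simp only [hLdef]
    nlinarith
  -- bounds used in row_lip
  have hτA : ∀ (u : ℝ), u ∈ K → ∀ i : Fin N, τ * 𝔄 u i i ≤ 1 := by
    intro u hu i
    have h1 : 𝔄 u i i ≤ M :=
      (hMf i u hu).trans ((Finset.le_sup' Mf (Finset.mem_univ i)).trans
        ((le_max_left _ _).trans (le_max_left _ _)))
    calc τ * 𝔄 u i i ≤ τ * M := mul_le_mul_of_nonneg_left h1 hτ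
      _ = 1 := hτM
  have hγA' : ∀ (u : ℝ), u ∈ K → ∀ i : Fin N,
      γ ≤ 𝔄 u i i - ∑ j ∈ Finset.univ.erase i, |𝔄 u i j| := by
    intro u hu i
    exact (min_le_left _ _).trans ((Finset.inf'_le γf (Finset.mem_univ i)).trans (hγf i u hu))
  have hτAt : ∀ i : Fin N, τ * At i i ≤ 1 := by
    intro i
    have h1 : At i i ≤ M :=
      (Finset.le_sup' (fun i => At i i) (Finset.mem_univ i)).trans
        ((le_max_right _ _).trans (le_max_left _ _))
    calc τ * At i i ≤ τ * M := mul_le_mul_of_nonneg_left h1 hτ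
      _ = 1 := hτM
  have hγAt : ∀ i : Fin N, γ ≤ At i i - ∑ j ∈ Finset.univ.erase i, |At i j| := by
    intro i
    exact (min_le_right _ _).trans
      (Finset.inf'_le (fun i => At i i - ∑ j ∈ Finset.univ.erase i, |At i j|) (Finset.mem_univ i))
  -- the contraction map
  set T : (Fin N → ℝ) → (Fin N → ℝ) := fun z i =>
    max (z i - τ * sSup ((fun u => (𝔄 u *ᵥ z - 𝔅 u) i) '' K))
      (z i - τ * ((At *ᵥ z - bt) i)) with hT
  have hlip : ∀ (x y : Fin N → ℝ) (i : Fin N), |T x i - T y i| ≤ L * dist x y := by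
    intro x y i
    have hD : ∀ j, |x j - y j| ≤ dist x y := fun j => by
      rw [← Real.dist_eq]; exact dist_le_pi_dist x y j
    have hD0 : (0 : ℝ) ≤ dist x y := dist_nonneg
    have hobs : |(x i - τ * ((At *ᵥ x - bt) i)) - (y i - τ * ((At *ᵥ y - bt) i))|
        ≤ L * dist x y := by
      rw [hexprAt x i, hexprAt y i]
      have heq : (x i - τ * ((∑ j, At i j * x j) - bt i))
          - (y i - τ * ((∑ j, At i j * y j) - bt i))
          = (x i - τ * ∑ j, At i j * x j) - (y i - τ * ∑ j, At i j * y j) := by ring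
      rw [heq]
      exact row_lip i (At i) τ γ (dist x y) hτ (hτAt i) (hγAt i) x y hD hD0
    have hsup : |(x i - τ * sSup ((fun u => (𝔄 u *ᵥ x - 𝔅 u) i) '' K))
        - (y i - τ * sSup ((fun u => (𝔄 u *ᵥ y - 𝔅 u) i) '' K))| ≤ L * dist x y := by
      refine abs_sub_tau_sSup_le hKne _ _ (hbdd x i) (hbdd y i) (x i) (y i) τ (L * dist x y) hτ ?_
      intro u hu
      rw [hexprA x u i, hexprA y u i]
      have heq : (x i - τ * ((∑ j, 𝔄 u i j * x j) - 𝔅 u i))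
          - (y i - τ * ((∑ j, 𝔄 u i j * y j) - 𝔅 u i))
          = (x i - τ * ∑ j, 𝔄 u i j * x j) - (y i - τ * ∑ j, 𝔄 u i j * y j) := by ring
      rw [heq]
      exact row_lip i (𝔄 u i) τ γ (dist x y) hτ (hτA u hu i) (hγA' u hu i) x y hD hD0
    calc |T x i - T y i| ≤ max (|(x i - τ * sSup ((fun u => (𝔄 u *ᵥ x - 𝔅 u) i) '' K))
          - (y i - τ * sSup ((fun u => (𝔄 u *ᵥ y - 𝔅 u) i) '' K))|)
          (|(x i - τ * ((At *ᵥ x - bt) i)) - (y i - τ * ((At *ᵥ y - bt) i))|) :=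
        abs_max_sub_max_le_max _ _ _ _
      _ ≤ L * dist x y := max_le hsup hobs
  have hcontr : ContractingWith ⟨L, hL0⟩ T := by
    constructor
    · apply NNReal.coe_lt_coe.mp
      exact hL1
    · refine LipschitzWith.of_dist_le_mul fun x y => ?_
      show dist (T x) (T y) ≤ L * dist x y
      rw [dist_pi_le_iff (mul_nonneg hL0 dist_nonneg)]
      intro i
      rw [Real.dist_eq]
      exact hlip x y i
  -- the equation is equivalent to being a fixed point of T
  have hiff : ∀ z : Fin N → ℝ,
      (∀ i : Fin N,
        min (sSup ((fun u => (𝔄 u *ᵥ z - 𝔅 u) i) '' K)) ((At *ᵥ z - bt) i) = 0)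
      ↔ Function.IsFixedPt T z := by
    intro z
    rw [Function.IsFixedPt, funext_iff]
    refine forall_congr' fun i => ?_
    set S : ℝ := sSup ((fun u => (𝔄 u *ᵥ z - 𝔅 u) i) '' K) with hS
    set O : ℝ := (At *ᵥ z - bt) i with hO
    have hTzi : T z i = max (z i - τ * S) (z i - τ * O) := rfl
    have hid : max (z i - τ * S) (z i - τ * O) = z i - τ * min S O := by
      rcases le_total S O with hc | hc
      · rw [min_eq_left hc, max_eq_left (by nlinarith)]
      · rw [min_eq_right hc, max_eq_right (by nlinarith)]
    rw [hTzi, hid]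
    constructor
    · intro h; rw [h]; ring
    · intro h
      have h2 : τ * min S O = 0 := by linarith
      exact (mul_eq_zero.mp h2).resolve_left hτpos.ne'
  refine ⟨ContractingWith.fixedPoint T hcontr, ?_, ?_⟩
  · exact (hiff _).mpr hcontr.fixedPoint_isFixedPt
  · intro y hy
    exact hcontr.fixedPoint_unique ((hiff y).mp hy)
end

section
/- For any fixed u_0 ∈ U, ρ > 0 and penalty term Π, the penalised HJB equation (A_{u_0}x − b_{u_0}) − ρ·max_{u∈U} Π(b_u − A_u x) = 0 has at most one solution x ∈ ℝ^N: if x_1 and x_2 both solve it, then x_1 = x_2. -/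
open Matrix Filter

/-- A penalty term `Π(y) = (π₁(y₁),…,π_N(y_N))`: each `π i` is continuous,
non-decreasing, identically zero on `(-∞,0]` and strictly positive on `(0,∞)`. -/
structure PenaltyTerm (N : ℕ) where
  π : Fin N → ℝ → ℝ
  cont : ∀ i, Continuous (π i)
  mono : ∀ i, Monotone (π i)
  eq_zero : ∀ i y, y ≤ 0 → π i y = 0
  pos : ∀ i y, 0 < y → 0 < π i y

/-- The penalised HJB equation
`(A_{u₀} x - b_{u₀}) - ρ · max_{u∈U} Π(b_u - A_u x) = 0` (componentwise);
the maximum over the compact set `U` is expressed via `sSup` of the image. -/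
def PenHJBEq {N : ℕ} (𝔄 : ℝ → Matrix (Fin N) (Fin N) ℝ) (𝔅 : ℝ → (Fin N → ℝ))
    (U : Set ℝ) (P : PenaltyTerm N) (u₀ ρ : ℝ) (x : Fin N → ℝ) : Prop :=
  ∀ i : Fin N,
    (𝔄 u₀ *ᵥ x - 𝔅 u₀) i -
      ρ * sSup ((fun u => P.π i ((𝔅 u - 𝔄 u *ᵥ x) i)) '' U) = 0

/-- Key pointwise inequality for matrices in `K^o_N`. -/
lemma KoMat_mulVec_pos {N : ℕ} {A : Matrix (Fin N) (Fin N) ℝ}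
    (hA : KoMat A)
    {z : Fin N → ℝ} {δ : ℝ} (hδ : 0 < δ) (i : Fin N)
    (hle : ∀ s, z s ≤ δ) (hi : z i = δ) : 0 < (A *ᵥ z) i := by
  have h1 : (A *ᵥ z) i = ∑ s, A i s * z s := by
    simp [Matrix.mulVec, dotProduct]
  rw [h1, ← Finset.add_sum_erase _ _ (Finset.mem_univ i), hi]
  have h2 : ∀ s ∈ Finset.univ.erase i, A i s * δ ≤ A i s * z s := by
    intro s hs
    have hs' : s ≠ i := (Finset.mem_erase.mp hs).1
    exact mul_le_mul_of_nonpos_left (hle s) (hA.1 i s (Ne.symm hs'))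
  have h3 : ∑ s ∈ Finset.univ.erase i, A i s * δ ≤
      ∑ s ∈ Finset.univ.erase i, A i s * z s := Finset.sum_le_sum h2
  have h4 : 0 < A i i * δ + ∑ s ∈ Finset.univ.erase i, A i s * δ := by
    have h5 : -∑ s ∈ Finset.univ.erase i, A i s ≤
        ∑ s ∈ Finset.univ.erase i, |A i s| := by
      rw [← Finset.sum_neg_distrib]
      exact Finset.sum_le_sum fun s _ => neg_le_abs _
    have h6 : ∑ s ∈ Finset.univ.erase i, A i s * δ =
        (∑ s ∈ Finset.univ.erase i, A i s) * δ := (Finset.sum_mul _ _ _).symm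
    nlinarith [hA.2 i]
  linarith

/-- One-sided comparison for solutions of the penalised HJB equation. -/
lemma penalised_HJB_le
    (N : ℕ) (hN : 0 < N) (a b : ℝ) (hab : a ≤ b)
    (𝔄 : ℝ → Matrix (Fin N) (Fin N) ℝ) (𝔅 : ℝ → (Fin N → ℝ))
    (hAcont : ContinuousOn 𝔄 (Set.Icc a b)) (hbcont : ContinuousOn 𝔅 (Set.Icc a b))
    (hKo : ∀ u ∈ Set.Icc a b, KoMat (𝔄 u))
    (u₀ : ℝ) (hu₀ : u₀ ∈ Set.Icc a b) (ρ : ℝ) (hρ : 0 < ρ)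
    (P : PenaltyTerm N) (x₁ x₂ : Fin N → ℝ)
    (h₁ : PenHJBEq 𝔄 𝔅 (Set.Icc a b) P u₀ ρ x₁)
    (h₂ : PenHJBEq 𝔄 𝔅 (Set.Icc a b) P u₀ ρ x₂) :
    ∀ i, x₁ i ≤ x₂ i := by
  by_contra hcon
  push_neg at hcon
  obtain ⟨j, hj⟩ := hcon
  haveI : Nonempty (Fin N) := ⟨⟨0, hN⟩⟩
  set z : Fin N → ℝ := x₁ - x₂ with hz
  obtain ⟨i, -, hi⟩ := Finset.exists_mem_eq_sup' (Finset.univ_nonempty) z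
  set δ : ℝ := Finset.univ.sup' Finset.univ_nonempty z with hδdef
  have hle : ∀ s, z s ≤ δ := fun s => Finset.le_sup' z (Finset.mem_univ s)
  have hδ : 0 < δ := lt_of_lt_of_le (by simp [hz, Pi.sub_apply]; linarith) (hle j)
  have hzi : z i = δ := hi.symm
  -- For every u in Icc, (𝔄 u *ᵥ z) i > 0
  have hkey : ∀ u ∈ Set.Icc a b, 0 < (𝔄 u *ᵥ z) i := fun u hu =>
    KoMat_mulVec_pos (hKo u hu) hδ i hle hzi
  have hsplit : ∀ u, (𝔄 u *ᵥ z) i = (𝔄 u *ᵥ x₁) i - (𝔄 u *ᵥ x₂) i := by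
    intro u
    rw [hz, Matrix.mulVec_sub]
    simp
  -- continuity of u ↦ π i ((𝔅 u - 𝔄 u *ᵥ x₂) i) on Icc
  have hAi : ∀ (x : Fin N → ℝ), ContinuousOn (fun u => (𝔄 u *ᵥ x) i) (Set.Icc a b) := by
    intro x
    have : ∀ u, (𝔄 u *ᵥ x) i = ∑ s, 𝔄 u i s * x s := by
      intro u; simp [Matrix.mulVec, dotProduct]
    simp only [this]
    apply continuousOn_finset_sum
    intro s _
    exact (((continuous_apply s).comp (continuous_apply i)).comp_continuousOn hAcont).mul
      continuousOn_const
  have hfcont : ContinuousOn (fun u => P.π i ((𝔅 u - 𝔄 u *ᵥ x₂) i)) (Set.Icc a b) := by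
    have h1 : ContinuousOn (fun u => (𝔅 u - 𝔄 u *ᵥ x₂) i) (Set.Icc a b) := by
      simp only [Pi.sub_apply]
      exact (((continuous_apply i).comp_continuousOn hbcont).sub (hAi x₂))
    exact (P.cont i).comp_continuousOn h1
  set S₂ := sSup ((fun u => P.π i ((𝔅 u - 𝔄 u *ᵥ x₂) i)) '' Set.Icc a b) with hS₂
  set S₁ := sSup ((fun u => P.π i ((𝔅 u - 𝔄 u *ᵥ x₁) i)) '' Set.Icc a b) with hS₁
  have hbdd : BddAbove ((fun u => P.π i ((𝔅 u - 𝔄 u *ᵥ x₂) i)) '' Set.Icc a b) :=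
    (isCompact_Icc.image_of_continuousOn hfcont).bddAbove
  have hne : (Set.Icc a b).Nonempty := ⟨u₀, hu₀⟩
  -- S₁ ≤ S₂
  have hS₁leS₂ : S₁ ≤ S₂ := by
    apply csSup_le (hne.image _)
    rintro y ⟨u, hu, rfl⟩
    have h5 : (𝔅 u - 𝔄 u *ᵥ x₁) i ≤ (𝔅 u - 𝔄 u *ᵥ x₂) i := by
      have := hkey u hu
      rw [hsplit u] at this
      simp only [Pi.sub_apply]
      linarith
    calc P.π i ((𝔅 u - 𝔄 u *ᵥ x₁) i) ≤ P.π i ((𝔅 u - 𝔄 u *ᵥ x₂) i) := P.mono i h5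
      _ ≤ S₂ := le_csSup hbdd (Set.mem_image_of_mem _ hu)
  -- contradiction with the two equations at index i
  have e₁ := h₁ i
  have e₂ := h₂ i
  rw [← hS₁] at e₁
  rw [← hS₂] at e₂
  have h6 := hkey u₀ hu₀
  rw [hsplit u₀] at h6
  simp only [Pi.sub_apply] at e₁ e₂
  nlinarith

/-- The penalised HJB equation has at most one solution. -/
theorem penalised_HJB_unique
    (N : ℕ) (hN : 0 < N) (a b : ℝ) (hab : a ≤ b)
    (𝔄 : ℝ → Matrix (Fin N) (Fin N) ℝ) (𝔅 : ℝ → (Fin N → ℝ))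
    (hAcont : ContinuousOn 𝔄 (Set.Icc a b)) (hbcont : ContinuousOn 𝔅 (Set.Icc a b))
    (hKo : ∀ u ∈ Set.Icc a b, KoMat (𝔄 u))
    (u₀ : ℝ) (hu₀ : u₀ ∈ Set.Icc a b) (ρ : ℝ) (hρ : 0 < ρ)
    (P : PenaltyTerm N) (x₁ x₂ : Fin N → ℝ)
    (h₁ : PenHJBEq 𝔄 𝔅 (Set.Icc a b) P u₀ ρ x₁)
    (h₂ : PenHJBEq 𝔄 𝔅 (Set.Icc a b) P u₀ ρ x₂) :
    x₁ = x₂ := by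
  funext i
  exact le_antisymm
    (penalised_HJB_le N hN a b hab 𝔄 𝔅 hAcont hbcont hKo u₀ hu₀ ρ hρ P x₁ x₂ h₁ h₂ i)
    (penalised_HJB_le N hN a b hab 𝔄 𝔅 hAcont hbcont hKo u₀ hu₀ ρ hρ P x₂ x₁ h₂ h₁ i)
end

section
/- There exists a constant C > 0, depending only on N, U, u_0 and the maps u ↦ A_u, u ↦ b_u (in particular independent of ρ and of the penalty term Π), such that for every ρ > 0, every penalty term Π, and every solution x_ρ of the penalised HJB equation, one has ‖x_ρ‖∞ ≤ C. -/
open Matrix Filter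

/-- A penalty function is everywhere nonnegative. -/
lemma pen_nonneg {N : ℕ} (P : PenaltyTerm N) (i : Fin N) (y : ℝ) : 0 ≤ P.π i y := by
  rcases le_or_gt y 0 with h | h
  · exact (P.eq_zero i y h).ge
  · exact (P.pos i y h).le

/-- At an index attaining the maximum of `x`, the diagonally dominant part bounds
`(A *ᵥ x) i` from below. -/
lemma diag_bound_max {N : ℕ} (A : Matrix (Fin N) (Fin N) ℝ)
    (hA : ∀ r s, r ≠ s → A r s ≤ 0) (x : Fin N → ℝ) (i : Fin N)
    (hmax : ∀ j, x j ≤ x i) :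
    (A i i - ∑ s ∈ Finset.univ.erase i, |A i s|) * x i ≤ (A *ᵥ x) i := by
  have hAs : ∀ s ∈ Finset.univ.erase i, A i s ≤ 0 := fun s hs =>
    hA i s (Ne.symm (Finset.ne_of_mem_erase hs))
  have h1 : (A *ᵥ x) i = A i i * x i + ∑ s ∈ Finset.univ.erase i, A i s * x s := by
    simp only [Matrix.mulVec, dotProduct]
    exact (Finset.add_sum_erase _ _ (Finset.mem_univ i)).symm
  have habs : ∑ s ∈ Finset.univ.erase i, |A i s|
      = -∑ s ∈ Finset.univ.erase i, A i s := by
    rw [← Finset.sum_neg_distrib]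
    exact Finset.sum_congr rfl fun s hs => abs_of_nonpos (hAs s hs)
  have h2 : (A i i - ∑ s ∈ Finset.univ.erase i, |A i s|) * x i
      = A i i * x i + ∑ s ∈ Finset.univ.erase i, A i s * x i := by
    rw [habs, sub_neg_eq_add, add_mul, Finset.sum_mul]
  rw [h1, h2]
  refine add_le_add (le_refl _) (Finset.sum_le_sum fun s hs => ?_)
  exact mul_le_mul_of_nonpos_left (hmax s) (hAs s hs)

/-- At an index attaining the minimum of `x`, the diagonally dominant part bounds
`(A *ᵥ x) i` from above. -/
lemma diag_bound_min {N : ℕ} (A : Matrix (Fin N) (Fin N) ℝ)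
    (hA : ∀ r s, r ≠ s → A r s ≤ 0) (x : Fin N → ℝ) (i : Fin N)
    (hmin : ∀ j, x i ≤ x j) :
    (A *ᵥ x) i ≤ (A i i - ∑ s ∈ Finset.univ.erase i, |A i s|) * x i := by
  have hAs : ∀ s ∈ Finset.univ.erase i, A i s ≤ 0 := fun s hs =>
    hA i s (Ne.symm (Finset.ne_of_mem_erase hs))
  have h1 : (A *ᵥ x) i = A i i * x i + ∑ s ∈ Finset.univ.erase i, A i s * x s := by
    simp only [Matrix.mulVec, dotProduct]
    exact (Finset.add_sum_erase _ _ (Finset.mem_univ i)).symm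
  have habs : ∑ s ∈ Finset.univ.erase i, |A i s|
      = -∑ s ∈ Finset.univ.erase i, A i s := by
    rw [← Finset.sum_neg_distrib]
    exact Finset.sum_congr rfl fun s hs => abs_of_nonpos (hAs s hs)
  have h2 : (A i i - ∑ s ∈ Finset.univ.erase i, |A i s|) * x i
      = A i i * x i + ∑ s ∈ Finset.univ.erase i, A i s * x i := by
    rw [habs, sub_neg_eq_add, add_mul, Finset.sum_mul]
  rw [h1, h2]
  refine add_le_add (le_refl _) (Finset.sum_le_sum fun s hs => ?_)
  exact mul_le_mul_of_nonpos_left (hmin s) (hAs s hs)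

/-- Solutions of the penalised HJB equation are bounded in the maximum norm
by a constant independent of `ρ` and of the penalty term `Π`.
(The norm on `Fin N → ℝ` is the sup/maximum norm.) -/
theorem penalised_HJB_solution_bounded
    (N : ℕ) (hN : 0 < N) (a b : ℝ) (hab : a ≤ b)
    (𝔄 : ℝ → Matrix (Fin N) (Fin N) ℝ) (𝔅 : ℝ → (Fin N → ℝ))
    (hAcont : ContinuousOn 𝔄 (Set.Icc a b)) (hbcont : ContinuousOn 𝔅 (Set.Icc a b))
    (hKo : ∀ u ∈ Set.Icc a b, KoMat (𝔄 u))
    (u₀ : ℝ) (hu₀ : u₀ ∈ Set.Icc a b) :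
    ∃ C > (0:ℝ), ∀ ρ > (0:ℝ), ∀ P : PenaltyTerm N, ∀ x : Fin N → ℝ,
      PenHJBEq 𝔄 𝔅 (Set.Icc a b) P u₀ ρ x → ‖x‖ ≤ C := by
  haveI : Nonempty (Fin N) := ⟨⟨0, hN⟩⟩
  set S := Set.Icc a b with hSdef
  have hScomp : IsCompact S := isCompact_Icc
  have hSne : S.Nonempty := ⟨u₀, hu₀⟩
  -- entrywise continuity
  have hentry : ∀ i j, ContinuousOn (fun u => 𝔄 u i j) S := fun i j =>
    (continuous_apply j).comp_continuousOn ((continuous_apply i).comp_continuousOn hAcont)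
  have hbentry : ∀ i, ContinuousOn (fun u => 𝔅 u i) S := fun i =>
    (continuous_apply i).comp_continuousOn hbcont
  -- the "dominance gap" functions
  set h : Fin N → ℝ → ℝ :=
    fun i u => 𝔄 u i i - ∑ s ∈ Finset.univ.erase i, |𝔄 u i s| with hhdef
  have hhcont : ∀ i, ContinuousOn (h i) S := fun i =>
    (hentry i i).sub
      (continuousOn_finset_sum _ fun s _ => (hentry i s).abs)
  have hhpos : ∀ i, ∀ u ∈ S, 0 < h i u := fun i u hu => sub_pos.2 ((hKo u hu).2 i)
  -- uniform lower bound δ on the gap, via compactness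
  have hδex : ∀ i : Fin N, ∃ d > (0:ℝ), ∀ u ∈ S, d ≤ h i u := by
    intro i
    obtain ⟨u', hu', hmin⟩ := hScomp.exists_isMinOn hSne (hhcont i)
    exact ⟨h i u', hhpos i u' hu', fun u hu => hmin hu⟩
  choose d hd hdle using hδex
  set δ := Finset.univ.inf' Finset.univ_nonempty d with hδdef
  have hδpos : 0 < δ := (Finset.lt_inf'_iff _).2 fun i _ => hd i
  have hδle : ∀ i, ∀ u ∈ S, δ ≤ h i u := fun i u hu =>
    le_trans (Finset.inf'_le d (Finset.mem_univ i)) (hdle i u hu)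
  -- uniform bound B on the right-hand sides
  obtain ⟨B, hB⟩ := hScomp.exists_bound_of_continuousOn hbcont
  have hB0 : 0 ≤ B := le_trans (norm_nonneg _) (hB u₀ hu₀)
  have hBi : ∀ u ∈ S, ∀ i, |𝔅 u i| ≤ B := fun u hu i => by
    calc |𝔅 u i| = ‖𝔅 u i‖ := (Real.norm_eq_abs _).symm
    _ ≤ ‖𝔅 u‖ := norm_le_pi_norm (𝔅 u) i
    _ ≤ B := hB u hu
  refine ⟨B / δ + 1, by positivity, ?_⟩
  intro ρ hρ P x hx
  -- continuity of the penalised residual in u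
  have hmv : ∀ i, ContinuousOn (fun u => (𝔅 u - 𝔄 u *ᵥ x) i) S := by
    intro i
    have hrw : ∀ u, (𝔅 u - 𝔄 u *ᵥ x) i = 𝔅 u i - ∑ j, 𝔄 u i j * x j := by
      intro u; simp [Matrix.mulVec, dotProduct]
    simp only [hrw]
    exact (hbentry i).sub
      (continuousOn_finset_sum _ fun j _ => (hentry i j).mul continuousOn_const)
  have hTbdd : ∀ i, BddAbove ((fun u => P.π i ((𝔅 u - 𝔄 u *ᵥ x) i)) '' S) := fun i =>
    (hScomp.image_of_continuousOn ((P.cont i).comp_continuousOn (hmv i))).bddAbove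
  have hTne : ∀ i, ((fun u => P.π i ((𝔅 u - 𝔄 u *ᵥ x) i)) '' S).Nonempty := fun i =>
    ⟨_, ⟨u₀, hu₀, rfl⟩⟩
  have hTpos : ∀ i, 0 ≤ sSup ((fun u => P.π i ((𝔅 u - 𝔄 u *ᵥ x) i)) '' S) := fun i =>
    le_trans (pen_nonneg P i _) (le_csSup (hTbdd i) ⟨u₀, hu₀, rfl⟩)
  -- lower bound: A(u₀) x ≥ b(u₀)
  have hlow : ∀ i, 𝔅 u₀ i ≤ (𝔄 u₀ *ᵥ x) i := by
    intro i
    have heq := hx i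
    have hnn : 0 ≤ ρ * sSup ((fun u => P.π i ((𝔅 u - 𝔄 u *ᵥ x) i)) '' S) :=
      mul_nonneg hρ.le (hTpos i)
    have : (𝔄 u₀ *ᵥ x) i - 𝔅 u₀ i
        - ρ * sSup ((fun u => P.π i ((𝔅 u - 𝔄 u *ᵥ x) i)) '' S) = 0 := heq
    linarith
  -- upper bound: for each i there is u with (A(u) x)ᵢ ≤ b(u)ᵢ
  have key : ∀ i, ∃ u ∈ S, (𝔄 u *ᵥ x) i ≤ 𝔅 u i := by
    intro i
    rcases eq_or_lt_of_le (hTpos i) with hzero | hpos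
    · refine ⟨u₀, hu₀, ?_⟩
      have heq := hx i
      have : (𝔄 u₀ *ᵥ x) i - 𝔅 u₀ i
          - ρ * sSup ((fun u => P.π i ((𝔅 u - 𝔄 u *ᵥ x) i)) '' S) = 0 := heq
      rw [← hzero, mul_zero] at this
      linarith
    · obtain ⟨t, ⟨u, hu, rfl⟩, ht⟩ := exists_lt_of_lt_csSup (hTne i) hpos
      refine ⟨u, hu, ?_⟩
      by_contra hcon
      push_neg at hcon
      have hle0 : (𝔅 u - 𝔄 u *ᵥ x) i ≤ 0 := by
        have : (𝔅 u - 𝔄 u *ᵥ x) i = 𝔅 u i - (𝔄 u *ᵥ x) i := rfl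
        rw [this]; linarith
      have ht' : 0 < P.π i ((𝔅 u - 𝔄 u *ᵥ x) i) := ht
      rw [P.eq_zero i _ hle0] at ht'
      exact lt_irrefl 0 ht'
  -- extract max and min indices
  obtain ⟨i₀, -, hmax⟩ := Finset.exists_max_image Finset.univ x Finset.univ_nonempty
  obtain ⟨i₁, -, hmin⟩ := Finset.exists_min_image Finset.univ x Finset.univ_nonempty
  -- bound the maximum coordinate
  have hxmax : x i₀ ≤ B / δ := by
    obtain ⟨u, hu, hle⟩ := key i₀
    have h1 : h i₀ u * x i₀ ≤ 𝔅 u i₀ :=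
      le_trans (diag_bound_max (𝔄 u) (hKo u hu).1 x i₀
        (fun j => hmax j (Finset.mem_univ j))) hle
    have h2 : 𝔅 u i₀ ≤ B := le_trans (le_abs_self _) (hBi u hu i₀)
    rcases le_or_gt 0 (x i₀) with hx0 | hx0
    · have h3 : δ * x i₀ ≤ h i₀ u * x i₀ :=
        mul_le_mul_of_nonneg_right (hδle i₀ u hu) hx0
      rw [le_div_iff₀ hδpos]
      nlinarith
    · calc x i₀ ≤ 0 := hx0.le
      _ ≤ B / δ := div_nonneg hB0 hδpos.le
  -- bound the minimum coordinate
  have hxmin : -(B / δ) ≤ x i₁ := by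
    have h1 : 𝔅 u₀ i₁ ≤ h i₁ u₀ * x i₁ :=
      le_trans (hlow i₁) (diag_bound_min (𝔄 u₀) (hKo u₀ hu₀).1 x i₁
        (fun j => hmin j (Finset.mem_univ j)))
    have h2 : -B ≤ 𝔅 u₀ i₁ := neg_le_of_abs_le (hBi u₀ hu₀ i₁)
    rcases le_or_gt (x i₁) 0 with hx0 | hx0
    · have h3 : h i₁ u₀ * x i₁ ≤ δ * x i₁ :=
        mul_le_mul_of_nonpos_right (hδle i₁ u₀ hu₀) hx0
      rw [← neg_div, div_le_iff₀ hδpos]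
      nlinarith
    · calc -(B / δ) ≤ 0 := neg_nonpos_of_nonneg (div_nonneg hB0 hδpos.le)
      _ ≤ x i₁ := hx0.le
  -- conclude
  have hfinal : ∀ i, ‖x i‖ ≤ B / δ + 1 := by
    intro i
    rw [Real.norm_eq_abs, abs_le]
    constructor
    · have := hmin i (Finset.mem_univ i); linarith
    · have := hmax i (Finset.mem_univ i); linarith
  exact (pi_norm_le_iff_of_nonneg (by positivity)).2 hfinal
end

section
/- There exists a constant C > 0, independent of ρ and of the penalty term Π, such that for every ρ > 0, every penalty term Π, and every solution x_ρ of the penalised HJB equation, one has ‖ min_{u∈U} [ max{A_u x_ρ − b_u , 0} − Π(b_u − A_u x_ρ) ] ‖∞ ≤ C/ρ, where the i-th component of the vector inside the norm is min_{u∈U} ( max{(A_u x_ρ − b_u)_i , 0} − π_i((b_u − A_u x_ρ)_i) ). -/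
open Matrix Filter

/-- `‖ min_{u∈U} [ max{A_u x_ρ - b_u, 0} - Π(b_u - A_u x_ρ) ] ‖∞ ≤ C/ρ`
with `C > 0` independent of `ρ` and of the penalty term `Π`;
the minimum over `U` is expressed via `sInf` of the image (attained by compactness). -/
theorem penalised_HJB_residual_estimate
    (N : ℕ) (hN : 0 < N) (a b : ℝ) (hab : a ≤ b)
    (𝔄 : ℝ → Matrix (Fin N) (Fin N) ℝ) (𝔅 : ℝ → (Fin N → ℝ))
    (hAcont : ContinuousOn 𝔄 (Set.Icc a b)) (hbcont : ContinuousOn 𝔅 (Set.Icc a b))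
    (hKo : ∀ u ∈ Set.Icc a b, KoMat (𝔄 u))
    (u₀ : ℝ) (hu₀ : u₀ ∈ Set.Icc a b) :
    ∃ C > (0:ℝ), ∀ ρ > (0:ℝ), ∀ P : PenaltyTerm N, ∀ x : Fin N → ℝ,
      PenHJBEq 𝔄 𝔅 (Set.Icc a b) P u₀ ρ x →
      ‖(fun i : Fin N =>
          sInf ((fun u => max ((𝔄 u *ᵥ x - 𝔅 u) i) 0 -
            P.π i ((𝔅 u - 𝔄 u *ᵥ x) i)) '' Set.Icc a b))‖ ≤ C / ρ := by
  have hIcc : IsCompact (Set.Icc a b) := isCompact_Icc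
  have hne : (Set.Icc a b).Nonempty := Set.nonempty_Icc.2 hab
  have i0 : Fin N := ⟨0, hN⟩
  -- continuity of entries
  have hA_entry : ∀ i j, ContinuousOn (fun u => 𝔄 u i j) (Set.Icc a b) := fun i j =>
    (continuous_apply j).comp_continuousOn ((continuous_apply i).comp_continuousOn hAcont)
  have hb_entry : ∀ i, ContinuousOn (fun u => 𝔅 u i) (Set.Icc a b) := fun i =>
    (continuous_apply i).comp_continuousOn hbcont
  have hmv : ∀ (x : Fin N → ℝ) (i : Fin N),
      ContinuousOn (fun u => (𝔄 u *ᵥ x) i) (Set.Icc a b) := by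
    intro x i
    have : (fun u => (𝔄 u *ᵥ x) i) = fun u => ∑ j, 𝔄 u i j * x j := by
      ext u; simp [Matrix.mulVec, dotProduct]
    rw [this]
    exact continuousOn_finset_sum _ (fun j _ => (hA_entry i j).mul continuousOn_const)
  -- the uniform diagonal dominance gap δ
  have hgap : ∀ i : Fin N, ∃ δi > (0:ℝ), ∀ u ∈ Set.Icc a b,
      δi ≤ 𝔄 u i i - ∑ j ∈ Finset.univ.erase i, |𝔄 u i j| := by
    intro i
    have hc : ContinuousOn (fun u => 𝔄 u i i - ∑ j ∈ Finset.univ.erase i, |𝔄 u i j|)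
        (Set.Icc a b) :=
      (hA_entry i i).sub (continuousOn_finset_sum _ (fun j _ => (hA_entry i j).abs))
    obtain ⟨u₁, hu₁, hmin⟩ := hIcc.exists_isMinOn hne hc
    have hpos : 0 < 𝔄 u₁ i i - ∑ j ∈ Finset.univ.erase i, |𝔄 u₁ i j| := by
      linarith [(hKo u₁ hu₁).2 i]
    exact ⟨_, hpos, fun u hu => hmin hu⟩
  choose δf hδfpos hδf using hgap
  set δ : ℝ := Finset.univ.inf' ⟨i0, Finset.mem_univ i0⟩ δf with hδdef
  have hδpos : 0 < δ := by
    rw [hδdef]; exact (Finset.lt_inf'_iff _).2 fun i _ => hδfpos i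
  have hδle : ∀ i : Fin N, ∀ u ∈ Set.Icc a b,
      δ ≤ 𝔄 u i i - ∑ j ∈ Finset.univ.erase i, |𝔄 u i j| := fun i u hu =>
    le_trans (Finset.inf'_le _ (Finset.mem_univ i)) (hδf i u hu)
  -- row sums bounded below by δ
  have hrow : ∀ i : Fin N, ∀ u ∈ Set.Icc a b, δ ≤ ∑ j, 𝔄 u i j := by
    intro i u hu
    have h1 : 𝔄 u i i - ∑ j ∈ Finset.univ.erase i, |𝔄 u i j| ≤ ∑ j, 𝔄 u i j := by
      rw [← Finset.sum_erase_add _ _ (Finset.mem_univ i)]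
      have : ∀ j ∈ Finset.univ.erase i, -|𝔄 u i j| ≤ 𝔄 u i j := fun j _ => neg_abs_le _
      have h2 : ∑ j ∈ Finset.univ.erase i, -|𝔄 u i j| ≤ ∑ j ∈ Finset.univ.erase i, 𝔄 u i j :=
        Finset.sum_le_sum this
      rw [Finset.sum_neg_distrib] at h2
      linarith
    exact le_trans (hδle i u hu) h1
  -- bound on 𝔅
  obtain ⟨B₀, hB₀⟩ := hIcc.exists_bound_of_continuousOn hbcont
  set B : ℝ := max B₀ 0 with hBdef
  have hB : ∀ u ∈ Set.Icc a b, ∀ i, |𝔅 u i| ≤ B := by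
    intro u hu i
    calc |𝔅 u i| = ‖𝔅 u i‖ := rfl
      _ ≤ ‖𝔅 u‖ := norm_le_pi_norm _ i
      _ ≤ B₀ := hB₀ u hu
      _ ≤ B := le_max_left _ _
  have hBnn : 0 ≤ B := le_max_right _ _
  set M : ℝ := B / δ with hMdef
  have hMnn : 0 ≤ M := div_nonneg hBnn hδpos.le
  set K : ℝ := ∑ i, ∑ j, |𝔄 u₀ i j| with hKdef
  have hKnn : 0 ≤ K := Finset.sum_nonneg fun i _ => Finset.sum_nonneg fun j _ => abs_nonneg _
  refine ⟨K * M + B + 1, by positivity, ?_⟩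
  intro ρ hρ P x hx
  -- basic facts about π and the sup S
  have hπnn : ∀ i y, 0 ≤ P.π i y := by
    intro i y
    rcases le_or_gt y 0 with h | h
    · exact le_of_eq (P.eq_zero i y h).symm
    · exact (P.pos i y h).le
  have hπcontOn : ∀ i, ContinuousOn (fun u => P.π i ((𝔅 u - 𝔄 u *ᵥ x) i)) (Set.Icc a b) := by
    intro i
    exact (P.cont i).comp_continuousOn ((hb_entry i).sub (hmv x i))
  set S : Fin N → ℝ := fun i => sSup ((fun u => P.π i ((𝔅 u - 𝔄 u *ᵥ x) i)) '' Set.Icc a b)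
    with hSdef
  have hScpt : ∀ i, IsCompact ((fun u => P.π i ((𝔅 u - 𝔄 u *ᵥ x) i)) '' Set.Icc a b) :=
    fun i => hIcc.image_of_continuousOn (hπcontOn i)
  have hSne : ∀ i, ((fun u => P.π i ((𝔅 u - 𝔄 u *ᵥ x) i)) '' Set.Icc a b).Nonempty :=
    fun i => hne.image _
  have hSle : ∀ i, ∀ u ∈ Set.Icc a b, P.π i ((𝔅 u - 𝔄 u *ᵥ x) i) ≤ S i := fun i u hu =>
    le_csSup (hScpt i).bddAbove ⟨u, hu, rfl⟩
  have hSnn : ∀ i, 0 ≤ S i := fun i => le_trans (hπnn i _) (hSle i u₀ hu₀)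
  have hSmem : ∀ i, S i ∈ (fun u => P.π i ((𝔅 u - 𝔄 u *ᵥ x) i)) '' Set.Icc a b :=
    fun i => (hScpt i).sSup_mem (hSne i)
  -- the equation
  have heq : ∀ i, (𝔄 u₀ *ᵥ x) i - 𝔅 u₀ i = ρ * S i := by
    intro i
    have h := hx i
    have h2 : (𝔄 u₀ *ᵥ x - 𝔅 u₀) i = (𝔄 u₀ *ᵥ x) i - 𝔅 u₀ i := rfl
    rw [h2] at h
    simp only [hSdef]
    linarith
  -- the key inequality: if x j ≤ x i for all j and 0 ≤ x i, then δ * x i ≤ (𝔄 u *ᵥ x) i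
  have hkey : ∀ u ∈ Set.Icc a b, ∀ i : Fin N, (∀ j, x j ≤ x i) → 0 ≤ x i →
      δ * x i ≤ (𝔄 u *ᵥ x) i := by
    intro u hu i hmax hpos
    have h1 : (∑ j, 𝔄 u i j) * x i ≤ (𝔄 u *ᵥ x) i := by
      have : (𝔄 u *ᵥ x) i = ∑ j, 𝔄 u i j * x j := by simp [Matrix.mulVec, dotProduct]
      rw [this, Finset.sum_mul]
      refine Finset.sum_le_sum fun j _ => ?_
      rcases eq_or_ne j i with rfl | hji
      · exact le_rfl
      · exact mul_le_mul_of_nonpos_left (hmax j) ((hKo u hu).1 i j (Ne.symm hji))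
    calc δ * x i ≤ (∑ j, 𝔄 u i j) * x i := mul_le_mul_of_nonneg_right (hrow i u hu) hpos
      _ ≤ (𝔄 u *ᵥ x) i := h1
  have hkey' : ∀ u ∈ Set.Icc a b, ∀ i : Fin N, (∀ j, x i ≤ x j) → x i ≤ 0 →
      (𝔄 u *ᵥ x) i ≤ δ * x i := by
    intro u hu i hmin hneg
    have h1 : (𝔄 u *ᵥ x) i ≤ (∑ j, 𝔄 u i j) * x i := by
      have : (𝔄 u *ᵥ x) i = ∑ j, 𝔄 u i j * x j := by simp [Matrix.mulVec, dotProduct]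
      rw [this, Finset.sum_mul]
      refine Finset.sum_le_sum fun j _ => ?_
      rcases eq_or_ne j i with rfl | hji
      · exact le_rfl
      · exact mul_le_mul_of_nonpos_left (hmin j) ((hKo u hu).1 i j (Ne.symm hji))
    calc (𝔄 u *ᵥ x) i ≤ (∑ j, 𝔄 u i j) * x i := h1
      _ ≤ δ * x i := mul_le_mul_of_nonpos_right (hrow i u hu) hneg
  -- lower bound on x
  have hxge : ∀ i, -M ≤ x i := by
    obtain ⟨i₁, _, hmin⟩ := Finset.exists_min_image Finset.univ x ⟨i0, Finset.mem_univ i0⟩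
    have hmin' : ∀ j, x i₁ ≤ x j := fun j => hmin j (Finset.mem_univ j)
    intro i
    rcases le_or_gt 0 (x i₁) with h | h
    · linarith [hmin' i, hMnn]
    · have h1 : (𝔄 u₀ *ᵥ x) i₁ ≤ δ * x i₁ := hkey' u₀ hu₀ i₁ hmin' h.le
      have h2 : 𝔅 u₀ i₁ ≤ (𝔄 u₀ *ᵥ x) i₁ := by
        have := heq i₁
        nlinarith [hSnn i₁]
      have h3 : -B ≤ 𝔅 u₀ i₁ := neg_le_of_abs_le (hB u₀ hu₀ i₁)
      have h4 : -B ≤ δ * x i₁ := by linarith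
      have h5 : -M ≤ x i₁ := by
        rw [hMdef, ← neg_div, div_le_iff₀ hδpos]
        nlinarith
      linarith [hmin' i]
  -- upper bound on x
  have hxle : ∀ i, x i ≤ M := by
    obtain ⟨i₀, _, hmax⟩ := Finset.exists_max_image Finset.univ x ⟨i0, Finset.mem_univ i0⟩
    have hmax' : ∀ j, x j ≤ x i₀ := fun j => hmax j (Finset.mem_univ j)
    intro i
    rcases le_or_gt (x i₀) 0 with h | h
    · linarith [hmax' i, hMnn]
    · -- find u with (𝔄 u *ᵥ x) i₀ ≤ 𝔅 u i₀
      have hfind : ∃ u ∈ Set.Icc a b, (𝔄 u *ᵥ x) i₀ ≤ 𝔅 u i₀ := by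
        rcases eq_or_lt_of_le (hSnn i₀) with hS0 | hSpos
        · refine ⟨u₀, hu₀, ?_⟩
          have := heq i₀
          rw [← hS0] at this
          linarith
        · obtain ⟨u', hu', hval⟩ := hSmem i₀
          have hval' : P.π i₀ ((𝔅 u' - 𝔄 u' *ᵥ x) i₀) = S i₀ := hval
          refine ⟨u', hu', ?_⟩
          by_contra hcon
          push_neg at hcon
          have : (𝔅 u' - 𝔄 u' *ᵥ x) i₀ ≤ 0 := by simp only [Pi.sub_apply]; linarith
          rw [P.eq_zero i₀ _ this] at hval'
          linarith
      obtain ⟨u, hu, hub⟩ := hfind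
      have h1 : δ * x i₀ ≤ (𝔄 u *ᵥ x) i₀ := hkey u hu i₀ hmax' h.le
      have h2 : 𝔅 u i₀ ≤ B := le_of_abs_le (hB u hu i₀)
      have h5 : x i₀ ≤ M := by
        rw [hMdef, le_div_iff₀ hδpos]
        nlinarith
      linarith [hmax' i]
  have hxabs : ∀ i, |x i| ≤ M := fun i => abs_le.2 ⟨hxge i, hxle i⟩
  -- bound ρ * S i ≤ C
  have hρS : ∀ i, ρ * S i ≤ K * M + B + 1 := by
    intro i
    have h1 : |(𝔄 u₀ *ᵥ x) i| ≤ K * M := by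
      have : (𝔄 u₀ *ᵥ x) i = ∑ j, 𝔄 u₀ i j * x j := by simp [Matrix.mulVec, dotProduct]
      rw [this]
      calc |∑ j, 𝔄 u₀ i j * x j| ≤ ∑ j, |𝔄 u₀ i j * x j| := Finset.abs_sum_le_sum_abs _ _
        _ ≤ ∑ j, |𝔄 u₀ i j| * M := by
            refine Finset.sum_le_sum fun j _ => ?_
            rw [abs_mul]
            exact mul_le_mul_of_nonneg_left (hxabs j) (abs_nonneg _)
        _ = (∑ j, |𝔄 u₀ i j|) * M := by rw [Finset.sum_mul]
        _ ≤ K * M := by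
            refine mul_le_mul_of_nonneg_right ?_ hMnn
            rw [hKdef]
            exact Finset.single_le_sum (f := fun i => ∑ j, |𝔄 u₀ i j|)
              (fun i _ => Finset.sum_nonneg fun j _ => abs_nonneg _) (Finset.mem_univ i)
    have h2 : |𝔅 u₀ i| ≤ B := hB u₀ hu₀ i
    have := heq i
    have h3 := abs_le.1 h1
    have h4 := abs_le.1 h2
    linarith
  have hSC : ∀ i, S i ≤ (K * M + B + 1) / ρ := by
    intro i
    rw [le_div_iff₀ hρ]
    calc S i * ρ = ρ * S i := mul_comm _ _
      _ ≤ K * M + B + 1 := hρS i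
  -- now the final estimate
  have hCρnn : 0 ≤ (K * M + B + 1) / ρ := by positivity
  rw [pi_norm_le_iff_of_nonneg hCρnn]
  intro i
  set f : ℝ → ℝ := fun u => max ((𝔄 u *ᵥ x - 𝔅 u) i) 0 - P.π i ((𝔅 u - 𝔄 u *ᵥ x) i) with hfdef
  have hfcont : ContinuousOn f (Set.Icc a b) := by
    have h1 : ContinuousOn (fun u => (𝔄 u *ᵥ x - 𝔅 u) i) (Set.Icc a b) :=
      (hmv x i).sub (hb_entry i)
    exact (h1.sup continuousOn_const).sub (hπcontOn i)
  have hTcpt : IsCompact (f '' Set.Icc a b) := hIcc.image_of_continuousOn hfcont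
  have hTne : (f '' Set.Icc a b).Nonempty := hne.image _
  have hlow : ∀ t ∈ f '' Set.Icc a b, -(S i) ≤ t := by
    rintro t ⟨u, hu, rfl⟩
    simp only [hfdef]
    rcases le_or_gt ((𝔅 u - 𝔄 u *ᵥ x) i) 0 with h | h
    · rw [P.eq_zero i _ h]
      have := le_max_right ((𝔄 u *ᵥ x - 𝔅 u) i) 0
      linarith [hSnn i]
    · have := hSle i u hu
      have := le_max_right ((𝔄 u *ᵥ x - 𝔅 u) i) 0
      linarith
  have hinf_low : -(S i) ≤ sInf (f '' Set.Icc a b) := le_csInf hTne hlow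
  have hinf_up : sInf (f '' Set.Icc a b) ≤ 0 := by
    rcases eq_or_lt_of_le (hSnn i) with hS0 | hSpos
    · have hmem : f u₀ ∈ f '' Set.Icc a b := ⟨u₀, hu₀, rfl⟩
      have hval : f u₀ = 0 := by
        have h1 : (𝔄 u₀ *ᵥ x - 𝔅 u₀) i = 0 := by
          have := heq i
          simp only [Pi.sub_apply]
          rw [← hS0] at this
          linarith
        have h2 : (𝔅 u₀ - 𝔄 u₀ *ᵥ x) i = 0 := by
          simp only [Pi.sub_apply] at h1 ⊢
          linarith
        simp only [hfdef]
        simp only [h1, h2, max_self, P.eq_zero i 0 le_rfl]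
        simp
      have := csInf_le hTcpt.bddBelow hmem
      linarith
    · obtain ⟨u', hu', hval0⟩ := hSmem i
      have hval : P.π i ((𝔅 u' - 𝔄 u' *ᵥ x) i) = S i := hval0
      have hy : 0 < (𝔅 u' - 𝔄 u' *ᵥ x) i := by
        by_contra hcon
        push_neg at hcon
        rw [P.eq_zero i _ hcon] at hval
        linarith
      have hfu' : f u' = -(S i) := by
        simp only [hfdef]
        have h1 : (𝔄 u' *ᵥ x - 𝔅 u') i ≤ 0 := by
          simp only [Pi.sub_apply] at hy ⊢
          linarith
        rw [max_eq_right h1, hval]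
        ring
      have hmem : f u' ∈ f '' Set.Icc a b := ⟨u', hu', rfl⟩
      have := csInf_le hTcpt.bddBelow hmem
      rw [hfu'] at this
      linarith
  rw [Real.norm_eq_abs, abs_le]
  constructor
  · have := hSC i
    linarith
  · linarith
end

section
/- Fix u_0 ∈ U and a penalty term Π, and suppose that for every ρ > 0 there is a solution x_ρ of the penalised HJB equation. Then there exists x* ∈ ℝ^N such that x_ρ → x* as ρ → ∞, and x* solves the discrete HJB equation min_{u∈U}{A_u x* − b_u} = 0. -/
open Matrix Filter

lemma koMat_mulVec_pos {N : ℕ} {A : Matrix (Fin N) (Fin N) ℝ} (hA : KoMat A)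
    {d : Fin N → ℝ} {i : Fin N} (hmax : ∀ j, d j ≤ d i) (hpos : 0 < d i) :
    0 < (A *ᵥ d) i := by
  have h1 : ∀ j ∈ Finset.univ.erase i, A i j * d i ≤ A i j * d j := by
    intro j hj
    exact mul_le_mul_of_nonpos_left (hmax j) (hA.1 i j (Finset.ne_of_mem_erase hj).symm)
  have h2 : -∑ j ∈ Finset.univ.erase i, |A i j| ≤ ∑ j ∈ Finset.univ.erase i, A i j := by
    rw [← Finset.sum_neg_distrib]
    exact Finset.sum_le_sum fun j _ => neg_abs_le _
  have h3 : (A *ᵥ d) i = A i i * d i + ∑ j ∈ Finset.univ.erase i, A i j * d j := by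
    simp only [Matrix.mulVec, dotProduct]
    exact (Finset.add_sum_erase _ _ (Finset.mem_univ i)).symm
  have h4 : ∑ j ∈ Finset.univ.erase i, A i j * d i ≤ ∑ j ∈ Finset.univ.erase i, A i j * d j :=
    Finset.sum_le_sum h1
  have h5 : (A i i + ∑ j ∈ Finset.univ.erase i, A i j) * d i ≤ A i i * d i + ∑ j ∈ Finset.univ.erase i, A i j * d i := by
    rw [add_mul, Finset.sum_mul]
  have h6 : 0 < (A i i - ∑ j ∈ Finset.univ.erase i, |A i j|) * d i := by
    apply mul_pos _ hpos
    linarith [hA.2 i]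
  have h7 : (A i i - ∑ j ∈ Finset.univ.erase i, |A i j|) * d i ≤ (A i i + ∑ j ∈ Finset.univ.erase i, A i j) * d i := by
    apply mul_le_mul_of_nonneg_right _ hpos.le
    linarith
  linarith

/-- As `ρ → ∞`, the solutions `x_ρ` of the penalised HJB equation converge to a
limit `x*` which solves the discrete HJB equation `min_{u∈U}{A_u x* - b_u} = 0`. -/
theorem penalised_HJB_convergence
    (N : ℕ) (hN : 0 < N) (a b : ℝ) (hab : a ≤ b)
    (𝔄 : ℝ → Matrix (Fin N) (Fin N) ℝ) (𝔅 : ℝ → (Fin N → ℝ))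
    (hAcont : ContinuousOn 𝔄 (Set.Icc a b)) (hbcont : ContinuousOn 𝔅 (Set.Icc a b))
    (hKo : ∀ u ∈ Set.Icc a b, KoMat (𝔄 u))
    (u₀ : ℝ) (hu₀ : u₀ ∈ Set.Icc a b)
    (P : PenaltyTerm N) (x : ℝ → (Fin N → ℝ))
    (hx : ∀ ρ > (0:ℝ), PenHJBEq 𝔄 𝔅 (Set.Icc a b) P u₀ ρ (x ρ)) :
    ∃ xstar : Fin N → ℝ,
      Tendsto x atTop (nhds xstar) ∧
      ∀ i : Fin N,
        IsLeast ((fun u => (𝔄 u *ᵥ xstar - 𝔅 u) i) '' Set.Icc a b) 0 := by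
  have hUne : (Set.Icc a b).Nonempty := Set.nonempty_Icc.2 hab
  have hUc : IsCompact (Set.Icc a b) := isCompact_Icc
  have haU : a ∈ Set.Icc a b := ⟨le_refl a, hab⟩
  -- continuity of entries
  have hAij : ∀ i j, ContinuousOn (fun u => 𝔄 u i j) (Set.Icc a b) := by
    intro i j
    exact ((continuous_apply j).comp (continuous_apply i)).comp_continuousOn hAcont
  have hbi : ∀ i, ContinuousOn (fun u => 𝔅 u i) (Set.Icc a b) :=
    fun i => (continuous_apply i).comp_continuousOn hbcont
  -- continuity of the mulVec in u
  have hAv : ∀ (v : Fin N → ℝ) (i : Fin N),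
      ContinuousOn (fun u => (𝔄 u *ᵥ v) i) (Set.Icc a b) := by
    intro v i
    have : ∀ u, (𝔄 u *ᵥ v) i = ∑ j, 𝔄 u i j * v j := by
      intro u; simp [Matrix.mulVec, dotProduct]
    simp only [this]
    exact continuousOn_finset_sum _ fun j _ => (hAij i j).mul continuousOn_const
  have hgcont : ∀ (v : Fin N → ℝ) (i : Fin N),
      ContinuousOn (fun u => (𝔅 u - 𝔄 u *ᵥ v) i) (Set.Icc a b) := by
    intro v i
    have : ∀ u, (𝔅 u - 𝔄 u *ᵥ v) i = 𝔅 u i - (𝔄 u *ᵥ v) i := fun u => rfl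
    simp only [this]
    exact (hbi i).sub (hAv v i)
  -- continuity of mulVec in x for fixed u
  have hAx : ∀ (u : ℝ) (i : Fin N), Continuous fun v : Fin N → ℝ => (𝔄 u *ᵥ v) i := by
    intro u i
    have : ∀ v : Fin N → ℝ, (𝔄 u *ᵥ v) i = ∑ j, 𝔄 u i j * v j := by
      intro v; simp [Matrix.mulVec, dotProduct]
    simp only [this]
    exact continuous_finset_sum _ fun j _ => continuous_const.mul (continuous_apply j)
  -- the penalty function and its sup
  set φ : Fin N → (Fin N → ℝ) → ℝ → ℝ := fun i v u => P.π i ((𝔅 u - 𝔄 u *ᵥ v) i) with hφdef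
  set S : Fin N → (Fin N → ℝ) → ℝ := fun i v => sSup (φ i v '' Set.Icc a b) with hSdef
  have hφcont : ∀ i v, ContinuousOn (φ i v) (Set.Icc a b) :=
    fun i v => (P.cont i).comp_continuousOn (hgcont v i)
  have hπ0 : ∀ i y, 0 ≤ P.π i y := by
    intro i y
    rcases le_or_gt y 0 with h | h
    · rw [P.eq_zero i y h]
    · exact (P.pos i y h).le
  have hSbdd : ∀ i v, BddAbove (φ i v '' Set.Icc a b) :=
    fun i v => ((hUc.image_of_continuousOn (hφcont i v)).bddAbove)
  have hSne : ∀ i v, (φ i v '' Set.Icc a b).Nonempty := fun i v => hUne.image _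
  have hS_ge : ∀ i v u, u ∈ Set.Icc a b → φ i v u ≤ S i v :=
    fun i v u hu => le_csSup (hSbdd i v) ⟨u, hu, rfl⟩
  have hS0 : ∀ i v, 0 ≤ S i v :=
    fun i v => le_trans (hπ0 i _) (hS_ge i v a haU)
  have hS_le : ∀ i v c, (∀ u ∈ Set.Icc a b, φ i v u ≤ c) → S i v ≤ c := by
    intro i v c h
    exact csSup_le (hSne i v) (by rintro z ⟨u, hu, rfl⟩; exact h u hu)
  have hS_zero : ∀ i v, (∀ u ∈ Set.Icc a b, (𝔅 u - 𝔄 u *ᵥ v) i ≤ 0) → S i v = 0 := by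
    intro i v h
    refine le_antisymm (hS_le i v 0 fun u hu => le_of_eq (P.eq_zero i _ (h u hu))) (hS0 i v)
  -- the equation, restated
  have heq : ∀ ρ : ℝ, 0 < ρ → ∀ i, (𝔄 u₀ *ᵥ x ρ) i - 𝔅 u₀ i = ρ * S i (x ρ) := by
    intro ρ hρ i
    have h := hx ρ hρ i
    have h2 : (𝔄 u₀ *ᵥ x ρ - 𝔅 u₀) i - ρ * S i (x ρ) = 0 := h
    have h3 : (𝔄 u₀ *ᵥ x ρ - 𝔅 u₀) i = (𝔄 u₀ *ᵥ x ρ) i - 𝔅 u₀ i := rfl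
    linarith
  -- comparison principle
  have comp : ∀ ρ : ℝ, 0 ≤ ρ → ∀ v w : Fin N → ℝ,
      (∀ i, ((𝔄 u₀ *ᵥ v) i - 𝔅 u₀ i) - ρ * S i v ≤ ((𝔄 u₀ *ᵥ w) i - 𝔅 u₀ i) - ρ * S i w) →
      ∀ i, v i ≤ w i := by
    intro ρ hρ v w h i0
    by_contra hlt
    push_neg at hlt
    obtain ⟨i, -, hi⟩ := Finset.exists_max_image Finset.univ (fun j => v j - w j)
      ⟨i0, Finset.mem_univ i0⟩
    have hdi : 0 < v i - w i := lt_of_lt_of_le (by linarith) (hi i0 (Finset.mem_univ i0))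
    have hd : ∀ u ∈ Set.Icc a b, 0 < (𝔄 u *ᵥ (v - w)) i := by
      intro u hu
      exact koMat_mulVec_pos (hKo u hu) (fun j => hi j (Finset.mem_univ j)) hdi
    have hsplit : ∀ u, (𝔄 u *ᵥ (v - w)) i = (𝔄 u *ᵥ v) i - (𝔄 u *ᵥ w) i := by
      intro u; rw [Matrix.mulVec_sub]; rfl
    have hφle : ∀ u ∈ Set.Icc a b, φ i v u ≤ φ i w u := by
      intro u hu
      apply P.mono i
      have h1 := hd u hu
      rw [hsplit u] at h1
      show 𝔅 u i - (𝔄 u *ᵥ v) i ≤ 𝔅 u i - (𝔄 u *ᵥ w) i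
      linarith
    have hSle : S i v ≤ S i w :=
      hS_le i v _ (fun u hu => (hφle u hu).trans (hS_ge i w u hu))
    have h1 : 0 < (𝔄 u₀ *ᵥ (v - w)) i := hd u₀ hu₀
    rw [hsplit u₀] at h1
    have h2 := h i
    nlinarith [mul_nonneg hρ (sub_nonneg.2 hSle)]
  -- uniform bounds
  have hMex : ∀ i : Fin N, ∃ M : ℝ, 0 ≤ M ∧ ∀ u ∈ Set.Icc a b, |𝔅 u i| ≤ M := by
    intro i
    obtain ⟨M, hM⟩ := (hUc.image_of_continuousOn (hbi i).abs).bddAbove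
    exact ⟨M, le_trans (abs_nonneg _) (hM ⟨a, haU, rfl⟩),
      fun u hu => hM ⟨u, hu, rfl⟩⟩
  choose M hM0 hMle using hMex
  have hδex : ∀ i : Fin N, ∃ δ : ℝ, 0 < δ ∧ ∀ u ∈ Set.Icc a b, δ ≤ (𝔄 u *ᵥ (fun _ => (1:ℝ))) i := by
    intro i
    obtain ⟨us, husU, hus⟩ := hUc.exists_isMinOn hUne (hAv (fun _ => (1:ℝ)) i)
    refine ⟨(𝔄 us *ᵥ (fun _ => (1:ℝ))) i, ?_, fun u hu => isMinOn_iff.mp hus u hu⟩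
    exact koMat_mulVec_pos (hKo us husU) (fun j => le_refl 1) one_pos
  choose δ hδ0 hδle using hδex
  have hsum0 : 0 ≤ ∑ i, M i / δ i :=
    Finset.sum_nonneg fun i _ => div_nonneg (hM0 i) (hδ0 i).le
  set T : ℝ := (∑ i, M i / δ i) + 1 with hTdef
  have hT0 : 0 < T := by rw [hTdef]; linarith
  have hTb : ∀ i : Fin N, ∀ u ∈ Set.Icc a b, |𝔅 u i| ≤ T * (𝔄 u *ᵥ (fun _ => (1:ℝ))) i := by
    intro i u hu
    have h1 : M i / δ i ≤ T := by
      have := Finset.single_le_sum (f := fun i => M i / δ i)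
        (fun j _ => div_nonneg (hM0 j) (hδ0 j).le) (Finset.mem_univ i)
      linarith
    have h2 : M i ≤ T * δ i := by
      have := mul_le_mul_of_nonneg_right h1 (hδ0 i).le
      rwa [div_mul_cancel₀ _ (hδ0 i).ne'] at this
    have h3 : T * δ i ≤ T * (𝔄 u *ᵥ (fun _ => (1:ℝ))) i :=
      mul_le_mul_of_nonneg_left (hδle i u hu) hT0.le
    exact le_trans (hMle i u hu) (le_trans h2 h3)
  have hconstmul : ∀ (c : ℝ) (u : ℝ) (i : Fin N),
      (𝔄 u *ᵥ (fun _ => c)) i = c * (𝔄 u *ᵥ (fun _ => (1:ℝ))) i := by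
    intro c u i
    simp [Matrix.mulVec, dotProduct, Finset.mul_sum, mul_comm]
  -- upper and lower bounds on x ρ
  have hub : ∀ ρ : ℝ, 0 < ρ → ∀ i, x ρ i ≤ T := by
    intro ρ hρ i
    refine comp ρ hρ.le (x ρ) (fun _ => T) (fun i => ?_) i
    have hzero := heq ρ hρ i
    have hSz : S i (fun _ => T) = 0 := by
      apply hS_zero
      intro u hu
      show 𝔅 u i - (𝔄 u *ᵥ (fun _ => T)) i ≤ 0
      rw [hconstmul]
      have := hTb i u hu
      have := abs_nonneg (𝔅 u i)
      have h4 := le_abs_self (𝔅 u i)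
      linarith
    rw [hSz]
    have h5 := hTb i u₀ hu₀
    have h6 := le_abs_self (𝔅 u₀ i)
    rw [hconstmul]
    linarith
  have hlb : ∀ ρ : ℝ, 0 < ρ → ∀ i, -T ≤ x ρ i := by
    intro ρ hρ i
    refine comp ρ hρ.le (fun _ => -T) (x ρ) (fun i => ?_) i
    have hzero := heq ρ hρ i
    have h5 := hTb i u₀ hu₀
    have h6 := neg_abs_le (𝔅 u₀ i)
    have h7 := mul_nonneg hρ.le (hS0 i (fun _ => -T))
    rw [hconstmul]
    linarith
  -- monotonicity in ρ
  have hmono : ∀ ρ₁ ρ₂ : ℝ, 0 < ρ₁ → ρ₁ ≤ ρ₂ → ∀ i, x ρ₁ i ≤ x ρ₂ i := by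
    intro ρ₁ ρ₂ hρ₁ h12 i
    refine comp ρ₁ hρ₁.le (x ρ₁) (x ρ₂) (fun i => ?_) i
    have h1 := heq ρ₁ hρ₁ i
    have h2 := heq ρ₂ (lt_of_lt_of_le hρ₁ h12) i
    have h3 := hS0 i (x ρ₂)
    nlinarith
  -- the limit
  set xstar : Fin N → ℝ := fun i => sSup ((fun ρ => x ρ i) '' Set.Ici 1) with hxsdef
  have hbddi : ∀ i, BddAbove ((fun ρ => x ρ i) '' Set.Ici 1) := by
    intro i
    refine ⟨T, ?_⟩
    rintro z ⟨ρ, hρ, rfl⟩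
    exact hub ρ (by simp only [Set.mem_Ici] at hρ; linarith) i
  have hnei : ∀ i, ((fun ρ => x ρ i) '' Set.Ici 1).Nonempty :=
    fun i => ⟨x 1 i, 1, Set.self_mem_Ici, rfl⟩
  have hle_star : ∀ ρ : ℝ, 1 ≤ ρ → ∀ i, x ρ i ≤ xstar i :=
    fun ρ hρ i => le_csSup (hbddi i) ⟨ρ, hρ, rfl⟩
  have htendi : ∀ i, Tendsto (fun ρ => x ρ i) atTop (nhds (xstar i)) := by
    intro i
    rw [Metric.tendsto_atTop]
    intro ε hε
    obtain ⟨z, ⟨ρ₀, hρ₀, rfl⟩, hz⟩ := exists_lt_of_lt_csSup (hnei i)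
      (show xstar i - ε < xstar i by linarith)
    simp only [Set.mem_Ici] at hρ₀
    refine ⟨ρ₀, fun ρ hρ => ?_⟩
    have h1 : x ρ₀ i ≤ x ρ i := hmono ρ₀ ρ (by linarith) hρ i
    have h2 : x ρ i ≤ xstar i := hle_star ρ (le_trans hρ₀ hρ) i
    rw [Real.dist_eq, abs_lt]
    constructor <;> linarith
  have htends : Tendsto x atTop (nhds xstar) := tendsto_pi_nhds.2 htendi
  have hAvtend : ∀ (u : ℝ) (i : Fin N),
      Tendsto (fun ρ => (𝔄 u *ᵥ x ρ) i) atTop (nhds ((𝔄 u *ᵥ xstar) i)) :=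
    fun u i => ((hAx u i).tendsto xstar).comp htends
  refine ⟨xstar, htends, ?_⟩
  intro i
  -- lower bound : the limit is a supersolution
  have hlow : ∀ u ∈ Set.Icc a b, 0 ≤ (𝔄 u *ᵥ xstar) i - 𝔅 u i := by
    intro u hu
    by_contra hneg
    push_neg at hneg
    set c : ℝ := 𝔅 u i - (𝔄 u *ᵥ xstar) i with hcdef
    have hc : 0 < c := by rw [hcdef]; linarith
    set p : ℝ := P.π i (c / 2) with hpdef
    have hp : 0 < p := P.pos i _ (by linarith)
    set L : ℝ := (𝔄 u₀ *ᵥ xstar) i - 𝔅 u₀ i with hLdef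
    have htc : Tendsto (fun ρ => 𝔅 u i - (𝔄 u *ᵥ x ρ) i) atTop (nhds c) :=
      tendsto_const_nhds.sub (hAvtend u i)
    have hev1 : ∀ᶠ ρ in atTop, c / 2 ≤ 𝔅 u i - (𝔄 u *ᵥ x ρ) i :=
      htc.eventually (eventually_ge_nhds (by linarith))
    have htL : Tendsto (fun ρ => (𝔄 u₀ *ᵥ x ρ) i - 𝔅 u₀ i) atTop (nhds L) :=
      (hAvtend u₀ i).sub tendsto_const_nhds
    have hev2 : ∀ᶠ ρ in atTop, (𝔄 u₀ *ᵥ x ρ) i - 𝔅 u₀ i ≤ L + 1 :=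
      htL.eventually (eventually_le_nhds (by linarith))
    have hev3 : ∀ᶠ ρ : ℝ in atTop, max 1 ((L + 1) / p + 1) ≤ ρ := eventually_ge_atTop _
    obtain ⟨ρ, h1, h2, h3⟩ := (hev1.and (hev2.and hev3)).exists
    have hρ1 : (1:ℝ) ≤ ρ := le_trans (le_max_left _ _) h3
    have hρ0 : (0:ℝ) < ρ := by linarith
    have h4 : p ≤ S i (x ρ) := by
      have h5 : P.π i ((𝔅 u - 𝔄 u *ᵥ x ρ) i) ≤ S i (x ρ) := hS_ge i (x ρ) u hu
      have h6 : (𝔅 u - 𝔄 u *ᵥ x ρ) i = 𝔅 u i - (𝔄 u *ᵥ x ρ) i := rfl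
      calc p ≤ P.π i (𝔅 u i - (𝔄 u *ᵥ x ρ) i) := P.mono i h1
        _ ≤ S i (x ρ) := by rw [← h6]; exact h5
    have h7 := heq ρ hρ0 i
    have h8 : ρ * p ≤ ρ * S i (x ρ) := mul_le_mul_of_nonneg_left h4 hρ0.le
    have h9 : (L + 1) / p + 1 ≤ ρ := le_trans (le_max_right _ _) h3
    have h10 : L + 1 < ρ * p := by
      have : (L + 1) / p < ρ := by linarith
      calc L + 1 = (L + 1) / p * p := by field_simp
        _ < ρ * p := by exact mul_lt_mul_of_pos_right this hp
    linarith
  constructor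
  · -- 0 is attained
    obtain ⟨us, husU, hminOn⟩ := hUc.exists_isMinOn hUne ((hAv xstar i).sub (hbi i))
    have hmin : ∀ u ∈ Set.Icc a b, (𝔄 us *ᵥ xstar) i - 𝔅 us i ≤ (𝔄 u *ᵥ xstar) i - 𝔅 u i :=
      fun u hu => isMinOn_iff.mp hminOn u hu
    set m : ℝ := (𝔄 us *ᵥ xstar) i - 𝔅 us i with hmdef
    have hm0 : 0 ≤ m := hlow us husU
    rcases eq_or_lt_of_le hm0 with hm | hm
    · exact ⟨us, husU, by simp only [Pi.sub_apply]; rw [← hmdef]; exact hm.symm⟩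
    · exfalso
      -- entry bounds
      have hCex : ∀ j : Fin N, ∃ C : ℝ, 0 ≤ C ∧ ∀ u ∈ Set.Icc a b, |𝔄 u i j| ≤ C := by
        intro j
        obtain ⟨C, hC⟩ := (hUc.image_of_continuousOn (hAij i j).abs).bddAbove
        exact ⟨C, le_trans (abs_nonneg _) (hC ⟨a, haU, rfl⟩), fun u hu => hC ⟨u, hu, rfl⟩⟩
      choose C hC0 hCle using hCex
      have hCs0 : 0 ≤ ∑ j, C j := Finset.sum_nonneg fun j _ => hC0 j
      set ε' : ℝ := m / (2 * ((∑ j, C j) + 1)) with hε'def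
      have hε' : 0 < ε' := by
        rw [hε'def]; positivity
      have hev4 : ∀ᶠ ρ : ℝ in atTop, ∀ j, dist (x ρ j) (xstar j) < ε' := by
        rw [eventually_all]
        intro j
        obtain ⟨R, hR⟩ := Metric.tendsto_atTop.mp (htendi j) ε' hε'
        exact eventually_atTop.2 ⟨R, hR⟩
      have hev5 : ∀ᶠ ρ : ℝ in atTop, (1:ℝ) ≤ ρ := eventually_ge_atTop 1
      have heveq : ∀ᶠ ρ : ℝ in atTop, (𝔄 u₀ *ᵥ x ρ) i - 𝔅 u₀ i = 0 := by
        filter_upwards [hev4, hev5] with ρ h4 h5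
        have hρ0 : (0:ℝ) < ρ := by linarith
        have hSz : S i (x ρ) = 0 := by
          apply hS_zero
          intro u hu
          show 𝔅 u i - (𝔄 u *ᵥ x ρ) i ≤ 0
          have hd1 : (𝔄 u *ᵥ xstar) i - (𝔄 u *ᵥ x ρ) i = ∑ j, 𝔄 u i j * (xstar j - x ρ j) := by
            have e1 : (𝔄 u *ᵥ (xstar - x ρ)) i = (𝔄 u *ᵥ xstar) i - (𝔄 u *ᵥ x ρ) i := by
              rw [Matrix.mulVec_sub]; rfl
            rw [← e1]
            simp [Matrix.mulVec, dotProduct]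
          have hd2 : |(𝔄 u *ᵥ xstar) i - (𝔄 u *ᵥ x ρ) i| ≤ (∑ j, C j) * ε' := by
            rw [hd1]
            calc |∑ j, 𝔄 u i j * (xstar j - x ρ j)| ≤ ∑ j, |𝔄 u i j * (xstar j - x ρ j)| :=
                  Finset.abs_sum_le_sum_abs _ _
              _ ≤ ∑ j, C j * ε' := by
                  apply Finset.sum_le_sum
                  intro j _
                  rw [abs_mul]
                  apply mul_le_mul (hCle j u hu) _ (abs_nonneg _) (hC0 j)
                  have := h4 j
                  rw [Real.dist_eq] at this
                  rw [abs_sub_comm]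
                  exact this.le
              _ = (∑ j, C j) * ε' := by rw [← Finset.sum_mul]
          have hd3 : (∑ j, C j) * ε' ≤ m / 2 := by
            rw [hε'def]
            have h2 : (0:ℝ) < 2 * ((∑ j, C j) + 1) := by nlinarith
            rw [show (∑ j, C j) * (m / (2 * ((∑ j, C j) + 1)))
                = ((∑ j, C j) * m) / (2 * ((∑ j, C j) + 1)) from (mul_div_assoc _ _ _).symm,
              div_le_div_iff₀ h2 (by norm_num : (0:ℝ) < 2)]
            nlinarith
          have hd4 : m ≤ (𝔄 u *ᵥ xstar) i - 𝔅 u i := hmin u hu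
          have hd5 : (𝔄 u *ᵥ xstar) i - (𝔄 u *ᵥ x ρ) i ≤ m / 2 :=
            le_trans (le_abs_self _) (le_trans hd2 hd3)
          linarith
        have h7 := heq ρ hρ0 i
        rw [hSz] at h7
        linarith
      have htL : Tendsto (fun ρ => (𝔄 u₀ *ᵥ x ρ) i - 𝔅 u₀ i) atTop
          (nhds ((𝔄 u₀ *ᵥ xstar) i - 𝔅 u₀ i)) :=
        (hAvtend u₀ i).sub tendsto_const_nhds
      have hzero : (𝔄 u₀ *ᵥ xstar) i - 𝔅 u₀ i = 0 :=
        tendsto_nhds_unique htL (Tendsto.congr' (heveq.mono fun ρ h => h.symm) tendsto_const_nhds)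
      have := hmin u₀ hu₀
      linarith
  · rintro z ⟨u, hu, rfl⟩
    simp only [Pi.sub_apply]
    exact hlow u hu
end

section
/- Fix u_0 ∈ U, a constant c_min > 0, and a penalty term Π such that each π_i is continuously differentiable on (0,∞) with π_i'(y) ≥ c_min for all y ∈ (0,∞) and all i. Suppose that for every ρ > 0 there is a solution x_ρ of the penalised HJB equation, and let x* be the solution of the discrete HJB equation min_{u∈U}{A_u x* − b_u} = 0. Then there exists a constant C > 0, depending on c_min but not on ρ or Π, such that ‖x* − x_ρ‖∞ ≤ C/ρ for every ρ > 0. -/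
open Matrix Filter

/-- Row estimate for strictly diagonally dominant Z-matrices: at an index where a
nonnegative maximum of `e` is attained, `(A e)_r ≥ δ e_r` where `δ` is the dominance
margin. -/
private lemma row_est {N : ℕ} (A : Matrix (Fin N) (Fin N) ℝ) (δ : ℝ)
    (hoff : ∀ r s, r ≠ s → A r s ≤ 0) (r : Fin N)
    (hdom : δ ≤ A r r - ∑ s ∈ Finset.univ.erase r, |A r s|)
    (e : Fin N → ℝ) (hmax : ∀ i, e i ≤ e r) (hnn : 0 ≤ e r) :
    δ * e r ≤ (A *ᵥ e) r := by
  have h1 : (∑ s, A r s) * e r ≤ (A *ᵥ e) r := by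
    rw [Finset.sum_mul, Matrix.mulVec, dotProduct]
    refine Finset.sum_le_sum fun s _ => ?_
    rcases eq_or_ne s r with h | h
    · subst h; rfl
    · exact mul_le_mul_of_nonpos_left (hmax s) (hoff r s (Ne.symm h))
  have h2 : δ ≤ ∑ s, A r s := by
    have h4 := Finset.add_sum_erase Finset.univ (fun s => A r s) (Finset.mem_univ r)
    have h3 : -∑ s ∈ Finset.univ.erase r, |A r s| ≤ ∑ s ∈ Finset.univ.erase r, A r s := by
      rw [← Finset.sum_neg_distrib]
      exact Finset.sum_le_sum fun s _ => neg_abs_le _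
    linarith
  calc δ * e r ≤ (∑ s, A r s) * e r := mul_le_mul_of_nonneg_right h2 hnn
    _ ≤ (A *ᵥ e) r := h1

/-- A penalty function with derivative `≥ cmin` on `(0,∞)` satisfies
`π i y ≥ cmin * y` for `y > 0`. -/
private lemma pi_linear {N : ℕ} (P : PenaltyTerm N) (dπ : Fin N → ℝ → ℝ) (cmin : ℝ)
    (hder : ∀ i y, 0 < y → HasDerivAt (P.π i) (dπ i y) y)
    (hge : ∀ i y, 0 < y → cmin ≤ dπ i y)
    (i : Fin N) (y : ℝ) (hy : 0 < y) : cmin * y ≤ P.π i y := by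
  set g : ℝ → ℝ := fun t => P.π i t - cmin * t with hg
  have hderg : ∀ t ∈ Set.Ioo (0:ℝ) y, HasDerivAt g (dπ i t - cmin) t := by
    intro t ht
    exact (hder i t ht.1).sub (by simpa using (hasDerivAt_id t).const_mul cmin)
  have hmono : MonotoneOn g (Set.Icc 0 y) := by
    apply monotoneOn_of_deriv_nonneg (convex_Icc 0 y)
    · exact ((P.cont i).sub (continuous_const.mul continuous_id)).continuousOn
    · rw [interior_Icc]
      exact fun t ht => ((hderg t ht).differentiableAt).differentiableWithinAt
    · rw [interior_Icc]
      intro t ht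
      rw [(hderg t ht).deriv]
      have := hge i t ht.1
      linarith
  have h0 : g 0 ≤ g y := hmono (Set.left_mem_Icc.2 hy.le) (Set.right_mem_Icc.2 hy.le) hy.le
  have hz : P.π i 0 = 0 := P.eq_zero i 0 le_rfl
  have h0' : P.π i 0 - cmin * 0 ≤ P.π i y - cmin * y := h0
  linarith

/-- First-order penalisation error estimate `‖x* - x_ρ‖∞ ≤ C/ρ`, with `C > 0`
depending on `c_min` but not on `ρ` nor on the penalty term `Π` (assumed to be
continuously differentiable on `(0,∞)` with derivative `≥ c_min` there). -/
theorem penalised_HJB_error_estimate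
    (N : ℕ) (hN : 0 < N) (a b : ℝ) (hab : a ≤ b)
    (𝔄 : ℝ → Matrix (Fin N) (Fin N) ℝ) (𝔅 : ℝ → (Fin N → ℝ))
    (hAcont : ContinuousOn 𝔄 (Set.Icc a b)) (hbcont : ContinuousOn 𝔅 (Set.Icc a b))
    (hKo : ∀ u ∈ Set.Icc a b, KoMat (𝔄 u))
    (u₀ : ℝ) (hu₀ : u₀ ∈ Set.Icc a b)
    (cmin : ℝ) (hcmin : 0 < cmin)
    (xstar : Fin N → ℝ)
    (hxstar : ∀ i : Fin N,
      IsLeast ((fun u => (𝔄 u *ᵥ xstar - 𝔅 u) i) '' Set.Icc a b) 0) :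
    ∃ C > (0:ℝ),
      ∀ (P : PenaltyTerm N) (dπ : Fin N → ℝ → ℝ),
        (∀ i y, 0 < y → HasDerivAt (P.π i) (dπ i y) y) →
        (∀ i, ContinuousOn (dπ i) (Set.Ioi (0:ℝ))) →
        (∀ i y, 0 < y → cmin ≤ dπ i y) →
        ∀ ρ > (0:ℝ), ∀ xρ : Fin N → ℝ,
          PenHJBEq 𝔄 𝔅 (Set.Icc a b) P u₀ ρ xρ →
          ‖xstar - xρ‖ ≤ C / ρ := by
  haveI : Nonempty (Fin N) := ⟨⟨0, hN⟩⟩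
  have hUne : (Set.Icc a b).Nonempty := ⟨a, Set.left_mem_Icc.2 hab⟩
  have hUcomp : IsCompact (Set.Icc a b) := isCompact_Icc
  -- continuity of the matrix entries and of 𝔅 components
  have hentry : ∀ r s : Fin N, ContinuousOn (fun u => 𝔄 u r s) (Set.Icc a b) := by
    intro r s
    have h : Continuous (fun A : Matrix (Fin N) (Fin N) ℝ => A r s) :=
      (continuous_apply s).comp (continuous_apply r)
    exact h.comp_continuousOn hAcont
  have hbe : ∀ i : Fin N, ContinuousOn (fun u => 𝔅 u i) (Set.Icc a b) :=
    fun i => (continuous_apply i).comp_continuousOn hbcont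
  have hmvcont : ∀ (x : Fin N → ℝ) (r : Fin N),
      ContinuousOn (fun u => (𝔄 u *ᵥ x) r) (Set.Icc a b) := by
    intro x r
    simp only [Matrix.mulVec, dotProduct]
    exact continuousOn_finset_sum _ fun s _ => (hentry r s).mul continuousOn_const
  -- the uniform dominance margin δ
  have hmargin : ∀ r : Fin N, ∃ m > (0:ℝ), ∀ u ∈ Set.Icc a b,
      m ≤ 𝔄 u r r - ∑ s ∈ Finset.univ.erase r, |𝔄 u r s| := by
    intro r
    have hcont : ContinuousOn
        (fun u => 𝔄 u r r - ∑ s ∈ Finset.univ.erase r, |𝔄 u r s|) (Set.Icc a b) :=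
      (hentry r r).sub (continuousOn_finset_sum _ fun s _ => (hentry r s).abs)
    obtain ⟨u, hu, hmin⟩ := hUcomp.exists_isMinOn hUne hcont
    refine ⟨𝔄 u r r - ∑ s ∈ Finset.univ.erase r, |𝔄 u r s|,
      by linarith [(hKo u hu).2 r], fun v hv => ?_⟩
    simpa using isMinOn_iff.1 hmin v hv
  choose m hmpos hmle using hmargin
  set δ : ℝ := Finset.univ.inf' Finset.univ_nonempty m with hδ
  have hδpos : 0 < δ := by
    rw [hδ, Finset.lt_inf'_iff]
    exact fun r _ => hmpos r
  have hδle : ∀ u ∈ Set.Icc a b, ∀ r : Fin N,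
      δ ≤ 𝔄 u r r - ∑ s ∈ Finset.univ.erase r, |𝔄 u r s| :=
    fun u hu r => le_trans (Finset.inf'_le m (Finset.mem_univ r)) (hmle r u hu)
  set M : ℝ := ‖𝔄 u₀ *ᵥ xstar - 𝔅 u₀‖ with hM
  refine ⟨(M + 1) / (cmin * δ), div_pos (by positivity) (by positivity), ?_⟩
  intro P dπ hder hdcont hge ρ hρ xρ heq
  have hstar_nonneg : ∀ i : Fin N, ∀ u ∈ Set.Icc a b, 0 ≤ (𝔄 u *ᵥ xstar - 𝔅 u) i :=
    fun i u hu => (hxstar i).2 ⟨u, hu, rfl⟩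
  -- Step B : xρ ≤ xstar
  have hB : ∀ i, xρ i ≤ xstar i := by
    by_contra hcon
    push_neg at hcon
    obtain ⟨j, hj⟩ := hcon
    obtain ⟨r, -, hr⟩ := Finset.exists_max_image Finset.univ (fun i => xρ i - xstar i)
      Finset.univ_nonempty
    have hrpos : 0 < xρ r - xstar r := lt_of_lt_of_le (by linarith) (hr j (Finset.mem_univ j))
    have hrow : ∀ u ∈ Set.Icc a b, δ * (xρ r - xstar r) ≤ (𝔄 u *ᵥ (xρ - xstar)) r := by
      intro u hu
      exact row_est (𝔄 u) δ (hKo u hu).1 r (hδle u hu r) (xρ - xstar)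
        (fun i => by simpa using hr i (Finset.mem_univ i)) hrpos.le
    have hzero : ∀ u ∈ Set.Icc a b, P.π r ((𝔅 u - 𝔄 u *ᵥ xρ) r) = 0 := by
      intro u hu
      apply P.eq_zero
      have h1 : (𝔅 u - 𝔄 u *ᵥ xρ) r
          = -((𝔄 u *ᵥ xstar - 𝔅 u) r) - (𝔄 u *ᵥ (xρ - xstar)) r := by
        simp only [Matrix.mulVec_sub, Pi.sub_apply, Pi.neg_apply]
        ring
      have h2 := hstar_nonneg r u hu
      have h3 := hrow u hu
      have h4 : 0 < δ * (xρ r - xstar r) := mul_pos hδpos hrpos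
      linarith
    have hS : ((fun u => P.π r ((𝔅 u - 𝔄 u *ᵥ xρ) r)) '' Set.Icc a b) = {0} := by
      apply Set.eq_singleton_iff_nonempty_unique_mem.2
      refine ⟨hUne.image _, ?_⟩
      rintro x ⟨u, hu, rfl⟩
      exact hzero u hu
    have heqr := heq r
    rw [hS, csSup_singleton, mul_zero, sub_zero] at heqr
    have hAf : (𝔄 u₀ *ᵥ (xρ - xstar)) r
        = (𝔄 u₀ *ᵥ xρ - 𝔅 u₀) r - (𝔄 u₀ *ᵥ xstar - 𝔅 u₀) r := by
      simp only [Matrix.mulVec_sub, Pi.sub_apply]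
      ring
    have h2 := hstar_nonneg r u₀ hu₀
    have h3 := hrow u₀ hu₀
    have h4 : 0 < δ * (xρ r - xstar r) := mul_pos hδpos hrpos
    linarith
  -- Step A : upper bound on xstar - xρ
  obtain ⟨r, -, hr⟩ := Finset.exists_max_image Finset.univ (fun i => xstar i - xρ i)
    Finset.univ_nonempty
  have henn : 0 ≤ xstar r - xρ r := by linarith [hB r]
  have hkey : xstar r - xρ r ≤ (M + 1) / (cmin * δ) / ρ := by
    rcases eq_or_lt_of_le henn with h | hpos
    · rw [← h]; positivity
    · -- the optimal control at r
      obtain ⟨uh, huh, huhz⟩ := (hxstar r).1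
      have hrow : ∀ u ∈ Set.Icc a b, δ * (xstar r - xρ r) ≤ (𝔄 u *ᵥ (xstar - xρ)) r := by
        intro u hu
        exact row_est (𝔄 u) δ (hKo u hu).1 r (hδle u hu r) (xstar - xρ)
          (fun i => by simpa using hr i (Finset.mem_univ i)) henn
      have harg : δ * (xstar r - xρ r) ≤ (𝔅 uh - 𝔄 uh *ᵥ xρ) r := by
        have h1 : (𝔅 uh - 𝔄 uh *ᵥ xρ) r
            = (𝔄 uh *ᵥ (xstar - xρ)) r - ((fun u => (𝔄 u *ᵥ xstar - 𝔅 u) r) uh) := by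
          simp only [Matrix.mulVec_sub, Pi.sub_apply]
          ring
        rw [h1, huhz, sub_zero]
        exact hrow uh huh
      have hbdd : BddAbove ((fun u => P.π r ((𝔅 u - 𝔄 u *ᵥ xρ) r)) '' Set.Icc a b) := by
        refine (hUcomp.image_of_continuousOn ?_).bddAbove
        exact (P.cont r).comp_continuousOn ((hbe r).sub (hmvcont xρ r))
      have hsup : cmin * (δ * (xstar r - xρ r))
          ≤ sSup ((fun u => P.π r ((𝔅 u - 𝔄 u *ᵥ xρ) r)) '' Set.Icc a b) := by
        calc cmin * (δ * (xstar r - xρ r))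
            ≤ P.π r (δ * (xstar r - xρ r)) :=
              pi_linear P dπ cmin hder hge r _ (mul_pos hδpos hpos)
          _ ≤ P.π r ((𝔅 uh - 𝔄 uh *ᵥ xρ) r) := P.mono r harg
          _ ≤ _ := le_csSup hbdd ⟨uh, huh, rfl⟩
      have heqr : (𝔄 u₀ *ᵥ xρ - 𝔅 u₀) r
          = ρ * sSup ((fun u => P.π r ((𝔅 u - 𝔄 u *ᵥ xρ) r)) '' Set.Icc a b) :=
        sub_eq_zero.1 (heq r)
      have hAe : (𝔄 u₀ *ᵥ (xstar - xρ)) r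
          = (𝔄 u₀ *ᵥ xstar - 𝔅 u₀) r - (𝔄 u₀ *ᵥ xρ - 𝔅 u₀) r := by
        simp only [Matrix.mulVec_sub, Pi.sub_apply]
        ring
      have hMle : (𝔄 u₀ *ᵥ xstar - 𝔅 u₀) r ≤ M := by
        have h := norm_le_pi_norm (𝔄 u₀ *ᵥ xstar - 𝔅 u₀) r
        rw [Real.norm_eq_abs] at h
        exact le_trans (le_abs_self _) h
      have hmain : ρ * (cmin * (δ * (xstar r - xρ r))) ≤ M := by
        have h1 := hrow u₀ hu₀
        have h2 : ρ * (cmin * (δ * (xstar r - xρ r)))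
            ≤ ρ * sSup ((fun u => P.π r ((𝔅 u - 𝔄 u *ᵥ xρ) r)) '' Set.Icc a b) :=
          mul_le_mul_of_nonneg_left hsup hρ.le
        have h4 : 0 ≤ δ * (xstar r - xρ r) := mul_nonneg hδpos.le henn
        linarith
      rw [div_div, le_div_iff₀ (by positivity)]
      nlinarith [hmain]
  rw [pi_norm_le_iff_of_nonneg (by positivity)]
  intro i
  have h1 : 0 ≤ xstar i - xρ i := by linarith [hB i]
  have h2 : xstar i - xρ i ≤ xstar r - xρ r := hr i (Finset.mem_univ i)
  simpa [Real.norm_eq_abs, Pi.sub_apply, abs_of_nonneg h1] using le_trans h2 hkey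
end

section
/- For every u_0 ∈ U and every ρ > 0 there exists a unique x_ρ ∈ ℝ^N satisfying the penalised HJB equation with penalty term Π(y) = max{y,0}: (A_{u_0}x_ρ − b_{u_0}) − ρ·max_{u∈U} max{b_u − A_u x_ρ , 0} = 0, where the i-th component of max_{u∈U} max{b_u − A_u x_ρ , 0} is max_{u∈U} max{(b_u − A_u x_ρ)_i , 0}. -/
open Matrix Filter

private lemma aux_max_shift {p t T : ℝ} (hT : 0 ≤ T) (ht : t ≤ T) :
    max (p + t) 0 ≤ max p 0 + T :=
  max_le (by nlinarith [le_max_left p 0]) (by nlinarith [le_max_right p 0])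

set_option maxHeartbeats 1000000 in
/-- For every `u₀ ∈ U` and every `ρ > 0`, the penalised HJB equation with
penalty term `Π(y) = max{y,0}` has a unique solution; the componentwise
maximum over the compact set `U` is expressed via `sSup` of the image. -/
theorem penalised_HJB_max_penalty_exists_unique
    (N : ℕ) (hN : 0 < N) (a b : ℝ) (hab : a ≤ b)
    (𝔄 : ℝ → Matrix (Fin N) (Fin N) ℝ) (𝔅 : ℝ → (Fin N → ℝ))
    (hAcont : ContinuousOn 𝔄 (Set.Icc a b)) (hbcont : ContinuousOn 𝔅 (Set.Icc a b))
    (hKo : ∀ u ∈ Set.Icc a b, KoMat (𝔄 u))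
    (u₀ : ℝ) (hu₀ : u₀ ∈ Set.Icc a b) (ρ : ℝ) (hρ : 0 < ρ) :
    ∃! x : Fin N → ℝ,
      ∀ i : Fin N,
        (𝔄 u₀ *ᵥ x - 𝔅 u₀) i -
          ρ * sSup ((fun u => max ((𝔅 u - 𝔄 u *ᵥ x) i) 0) '' Set.Icc a b) = 0 := by
  have hUne : (Set.Icc a b).Nonempty := Set.nonempty_Icc.2 hab
  have hFinNe : Nonempty (Fin N) := Fin.pos_iff_nonempty.mp hN
  have huniv : (Finset.univ : Finset (Fin N)).Nonempty := Finset.univ_nonempty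
  -- continuity of entries
  have hentry : ∀ i j : Fin N, ContinuousOn (fun u => 𝔄 u i j) (Set.Icc a b) :=
    fun i j => (continuous_apply j).comp_continuousOn
      ((continuous_apply i).comp_continuousOn hAcont)
  have hbi : ∀ i : Fin N, ContinuousOn (fun u => 𝔅 u i) (Set.Icc a b) :=
    fun i => (continuous_apply i).comp_continuousOn hbcont
  have hrow0 : ∀ u ∈ Set.Icc a b, ∀ i : Fin N,
      0 ≤ ∑ j ∈ Finset.univ.erase i, |𝔄 u i j| :=
    fun u hu i => Finset.sum_nonneg fun j _ => abs_nonneg _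
  have hdpos : ∀ u ∈ Set.Icc a b, ∀ i : Fin N, 0 < 𝔄 u i i := fun u hu i =>
    lt_of_le_of_lt (hrow0 u hu i) ((hKo u hu).2 i)
  -- the uniform dominance ratio q1 < 1
  have hq1i : ∀ i : Fin N, ∃ qi : ℝ, 0 ≤ qi ∧ qi < 1 ∧ ∀ u ∈ Set.Icc a b,
      ∑ j ∈ Finset.univ.erase i, |𝔄 u i j| ≤ qi * 𝔄 u i i := by
    intro i
    have hcont : ContinuousOn
        (fun u => (∑ j ∈ Finset.univ.erase i, |𝔄 u i j|) / 𝔄 u i i) (Set.Icc a b) := by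
      refine ContinuousOn.div ?_ (hentry i i) (fun u hu => (hdpos u hu i).ne')
      exact continuousOn_finset_sum _ fun j _ => (hentry i j).abs
    obtain ⟨u₁, hu₁, hmax⟩ := isCompact_Icc.exists_isMaxOn hUne hcont
    refine ⟨_, div_nonneg (hrow0 u₁ hu₁ i) (hdpos u₁ hu₁ i).le,
      (div_lt_one (hdpos u₁ hu₁ i)).2 ((hKo u₁ hu₁).2 i), fun u hu => ?_⟩
    have h1 : (∑ j ∈ Finset.univ.erase i, |𝔄 u i j|) / 𝔄 u i i ≤
        (∑ j ∈ Finset.univ.erase i, |𝔄 u₁ i j|) / 𝔄 u₁ i i := hmax hu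
    have h2 : 0 < 𝔄 u i i := hdpos u hu i
    calc ∑ j ∈ Finset.univ.erase i, |𝔄 u i j|
        = (∑ j ∈ Finset.univ.erase i, |𝔄 u i j|) / 𝔄 u i i * 𝔄 u i i := by
          field_simp
      _ ≤ _ := mul_le_mul_of_nonneg_right h1 h2.le
  choose q1f hq1f0 hq1f1 hq1f using hq1i
  set q1 : ℝ := Finset.univ.sup' huniv q1f with hq1def
  have hq10 : 0 ≤ q1 :=
    le_trans (hq1f0 ⟨0, hN⟩) (Finset.le_sup' q1f (Finset.mem_univ _))
  have hq11 : q1 < 1 := (Finset.sup'_lt_iff huniv).2 fun i _ => hq1f1 i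
  have hq1 : ∀ u ∈ Set.Icc a b, ∀ i : Fin N,
      ∑ j ∈ Finset.univ.erase i, |𝔄 u i j| ≤ q1 * 𝔄 u i i := fun u hu i =>
    le_trans (hq1f i u hu)
      (mul_le_mul_of_nonneg_right (Finset.le_sup' q1f (Finset.mem_univ i)) (hdpos u hu i).le)
  -- upper bound C for the diagonal entries
  have hCi : ∀ i : Fin N, ∃ u₁ ∈ Set.Icc a b, IsMaxOn (fun u => 𝔄 u i i) (Set.Icc a b) u₁ :=
    fun i => isCompact_Icc.exists_isMaxOn hUne (hentry i i)
  choose uC huC hmaxC using hCi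
  set C : ℝ := max 1 (Finset.univ.sup' huniv (fun i => 𝔄 (uC i) i i)) with hCdef
  have hC1 : (1 : ℝ) ≤ C := le_max_left _ _
  have hC0 : (0 : ℝ) < C := lt_of_lt_of_le one_pos hC1
  have hC : ∀ u ∈ Set.Icc a b, ∀ i : Fin N, 𝔄 u i i ≤ C := fun u hu i =>
    le_trans (hmaxC i hu)
      (le_trans (Finset.le_sup' (fun i => 𝔄 (uC i) i i) (Finset.mem_univ i)) (le_max_right _ _))
  -- lower bound c for the diagonal at u₀
  set c : ℝ := Finset.univ.inf' huniv (fun i => 𝔄 u₀ i i) with hcdef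
  have hc0 : 0 < c := (Finset.lt_inf'_iff huniv).2 fun i _ => hdpos u₀ hu₀ i
  have hc : ∀ i : Fin N, c ≤ 𝔄 u₀ i i := fun i => Finset.inf'_le _ (Finset.mem_univ i)
  -- the step size and contraction constant
  set lam : ℝ := (C * (1 + ρ))⁻¹ with hlamdef
  have hlam0 : 0 < lam := inv_pos.2 (by positivity)
  have hlamC : lam * C + lam * C * ρ = 1 := by
    have : lam * (C * (1 + ρ)) = 1 := inv_mul_cancel₀ (by positivity)
    nlinarith [this]
  have hlamC1 : lam * C ≤ 1 := by
    have h1 : 0 ≤ lam * C * ρ := by positivity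
    linarith
  set q : ℝ := max q1 (1 - lam * c * (1 - q1)) with hqdef
  have hq0 : 0 ≤ q := le_trans hq10 (le_max_left _ _)
  have hqlt : q < 1 := by
    refine max_lt hq11 ?_
    have := mul_pos (mul_pos hlam0 hc0) (show (0:ℝ) < 1 - q1 by linarith)
    linarith
  have hq1q : q1 ≤ q := le_max_left _ _
  have hq2q : 1 - lam * c * (1 - q1) ≤ q := le_max_right _ _
  -- basic facts about the sSup penalty
  have hgc : ∀ (x : Fin N → ℝ) (i : Fin N),
      ContinuousOn (fun u => max ((𝔅 u - 𝔄 u *ᵥ x) i) 0) (Set.Icc a b) := by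
    intro x i
    have h0 : ContinuousOn (fun u => ∑ j, 𝔄 u i j * x j) (Set.Icc a b) :=
      continuousOn_finset_sum Finset.univ
        (fun j _ => (hentry i j).mul continuousOn_const)
    have h1 : ContinuousOn (fun u => (𝔄 u *ᵥ x) i) (Set.Icc a b) :=
      h0.congr (fun u hu => by simp [Matrix.mulVec, dotProduct])
    have h2 : ContinuousOn (fun u => (𝔅 u - 𝔄 u *ᵥ x) i) (Set.Icc a b) := by
      refine ((hbi i).sub h1).congr (fun u hu => ?_)
      simp [Pi.sub_apply]
    exact continuous_max.comp_continuousOn (h2.prodMk continuousOn_const)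
  have hPbdd : ∀ (x : Fin N → ℝ) (i : Fin N),
      BddAbove ((fun u => max ((𝔅 u - 𝔄 u *ᵥ x) i) 0) '' Set.Icc a b) :=
    fun x i => (isCompact_Icc.image_of_continuousOn (hgc x i)).bddAbove
  -- key one-sided estimate on the penalty difference
  have hkey : ∀ (x y : Fin N → ℝ) (m : ℝ), (∀ j, |x j - y j| ≤ m) → ∀ i : Fin N,
      sSup ((fun u => max ((𝔅 u - 𝔄 u *ᵥ x) i) 0) '' Set.Icc a b) ≤
      sSup ((fun u => max ((𝔅 u - 𝔄 u *ᵥ y) i) 0) '' Set.Icc a b) +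
        C * max (q1 * m - (x i - y i)) 0 := by
    intro x y m hm i
    have hm0 : 0 ≤ m := le_trans (abs_nonneg _) (hm i)
    have hT0 : 0 ≤ C * max (q1 * m - (x i - y i)) 0 :=
      mul_nonneg hC0.le (le_max_right _ _)
    refine csSup_le (hUne.image _) ?_
    rintro v ⟨u, hu, rfl⟩
    dsimp only
    have htu : (𝔄 u *ᵥ (y - x)) i ≤ C * max (q1 * m - (x i - y i)) 0 := by
      have hfull : (𝔄 u *ᵥ (y - x)) i = ∑ j, 𝔄 u i j * (y j - x j) := by
        simp [Matrix.mulVec, dotProduct]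
      have hsplit : (𝔄 u *ᵥ (y - x)) i =
          (∑ j ∈ Finset.univ.erase i, 𝔄 u i j * (y j - x j)) + 𝔄 u i i * (y i - x i) := by
        rw [hfull, ← Finset.sum_erase_add Finset.univ (fun j => 𝔄 u i j * (y j - x j))
          (Finset.mem_univ i)]
      have hsum : (∑ j ∈ Finset.univ.erase i, 𝔄 u i j * (y j - x j)) ≤
          q1 * 𝔄 u i i * m := by
        calc (∑ j ∈ Finset.univ.erase i, 𝔄 u i j * (y j - x j))
            ≤ ∑ j ∈ Finset.univ.erase i, |𝔄 u i j| * m := by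
              refine Finset.sum_le_sum fun j _ => ?_
              have h1 : 𝔄 u i j * (y j - x j) ≤ |𝔄 u i j * (y j - x j)| := le_abs_self _
              rw [abs_mul] at h1
              refine h1.trans (mul_le_mul_of_nonneg_left ?_ (abs_nonneg _))
              rw [abs_sub_comm]; exact hm j
          _ = (∑ j ∈ Finset.univ.erase i, |𝔄 u i j|) * m := (Finset.sum_mul _ _ _).symm
          _ ≤ q1 * 𝔄 u i i * m :=
              mul_le_mul_of_nonneg_right (hq1 u hu i) hm0
      have hd0 : 0 < 𝔄 u i i := hdpos u hu i
      have hdC : 𝔄 u i i ≤ C := hC u hu i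
      rcases le_total (q1 * m - (x i - y i)) 0 with h | h
      · rw [max_eq_right h]
        nlinarith
      · rw [max_eq_left h]
        nlinarith
    have hxy : (𝔅 u - 𝔄 u *ᵥ x) i = (𝔅 u - 𝔄 u *ᵥ y) i + (𝔄 u *ᵥ (y - x)) i := by
      simp only [Matrix.mulVec_sub, Pi.sub_apply]
      ring
    rw [hxy]
    calc max ((𝔅 u - 𝔄 u *ᵥ y) i + (𝔄 u *ᵥ (y - x)) i) 0
        ≤ max ((𝔅 u - 𝔄 u *ᵥ y) i) 0 + C * max (q1 * m - (x i - y i)) 0 :=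
          aux_max_shift hT0 htu
      _ ≤ _ := by
          refine add_le_add_left (le_csSup (hPbdd y i) ?_) _
          exact ⟨u, hu, rfl⟩
  -- the per-component contraction estimate for S = id - lam * F
  have hcomp : ∀ (x y : Fin N → ℝ) (m : ℝ), (∀ j, |x j - y j| ≤ m) → ∀ i : Fin N,
      (x i - lam * ((𝔄 u₀ *ᵥ x - 𝔅 u₀) i -
          ρ * sSup ((fun u => max ((𝔅 u - 𝔄 u *ᵥ x) i) 0) '' Set.Icc a b))) -
      (y i - lam * ((𝔄 u₀ *ᵥ y - 𝔅 u₀) i -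
          ρ * sSup ((fun u => max ((𝔅 u - 𝔄 u *ᵥ y) i) 0) '' Set.Icc a b)))
        ≤ q * m := by
    intro x y m hm i
    have hm0 : 0 ≤ m := le_trans (abs_nonneg _) (hm i)
    have hsm : x i - y i ≤ m := le_trans (le_abs_self _) (hm i)
    have hd0 : 0 < 𝔄 u₀ i i := hdpos u₀ hu₀ i
    have hdC : 𝔄 u₀ i i ≤ C := hC u₀ hu₀ i
    have hcd : c ≤ 𝔄 u₀ i i := hc i
    -- decomposition of the linear part
    have hAx : (𝔄 u₀ *ᵥ x - 𝔅 u₀) i - (𝔄 u₀ *ᵥ y - 𝔅 u₀) i =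
        𝔄 u₀ i i * (x i - y i) +
          ∑ j ∈ Finset.univ.erase i, 𝔄 u₀ i j * (x j - y j) := by
      have h0 : (𝔄 u₀ *ᵥ x - 𝔅 u₀) i - (𝔄 u₀ *ᵥ y - 𝔅 u₀) i = (𝔄 u₀ *ᵥ (x - y)) i := by
        simp only [Matrix.mulVec_sub, Pi.sub_apply]
        ring
      have hfull : (𝔄 u₀ *ᵥ (x - y)) i = ∑ j, 𝔄 u₀ i j * (x j - y j) := by
        simp [Matrix.mulVec, dotProduct]
      rw [h0, hfull, ← Finset.sum_erase_add Finset.univ (fun j => 𝔄 u₀ i j * (x j - y j))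
        (Finset.mem_univ i)]
      ring
    have hE : -(q1 * 𝔄 u₀ i i * m) ≤
        ∑ j ∈ Finset.univ.erase i, 𝔄 u₀ i j * (x j - y j) := by
      have h1 : ∑ j ∈ Finset.univ.erase i, -(|𝔄 u₀ i j| * m) ≤
          ∑ j ∈ Finset.univ.erase i, 𝔄 u₀ i j * (x j - y j) := by
        refine Finset.sum_le_sum fun j _ => ?_
        have h2 : |𝔄 u₀ i j * (x j - y j)| ≤ |𝔄 u₀ i j| * m := by
          rw [abs_mul]
          exact mul_le_mul_of_nonneg_left (hm j) (abs_nonneg _)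
        have h3 := neg_abs_le (𝔄 u₀ i j * (x j - y j))
        linarith
      have h2 : ∑ j ∈ Finset.univ.erase i, -(|𝔄 u₀ i j| * m) =
          -((∑ j ∈ Finset.univ.erase i, |𝔄 u₀ i j|) * m) := by
        rw [Finset.sum_neg_distrib, Finset.sum_mul]
      have h3 : (∑ j ∈ Finset.univ.erase i, |𝔄 u₀ i j|) * m ≤ q1 * 𝔄 u₀ i i * m :=
        mul_le_mul_of_nonneg_right (hq1 u₀ hu₀ i) hm0
      rw [h2] at h1
      linarith
    have hΔ := hkey x y m hm i
    set Px := sSup ((fun u => max ((𝔅 u - 𝔄 u *ᵥ x) i) 0) '' Set.Icc a b) with hPxdef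
    set Py := sSup ((fun u => max ((𝔅 u - 𝔄 u *ᵥ y) i) 0) '' Set.Icc a b) with hPydef
    set D : ℝ := 𝔄 u₀ i i with hDdef
    set E : ℝ := ∑ j ∈ Finset.univ.erase i, 𝔄 u₀ i j * (x j - y j) with hEdef
    have hkey2 : (x i - lam * ((𝔄 u₀ *ᵥ x - 𝔅 u₀) i - ρ * Px)) -
        (y i - lam * ((𝔄 u₀ *ᵥ y - 𝔅 u₀) i - ρ * Py)) =
        (x i - y i) - lam * (D * (x i - y i) + E) + lam * ρ * (Px - Py) := by
      linear_combination (-lam) * hAx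
    rw [hkey2]
    have hlamD : lam * D ≤ lam * C := mul_le_mul_of_nonneg_left hdC hlam0.le
    have hX1 : lam * D + lam * ρ * C ≤ 1 := by nlinarith [hlamC, hlamD]
    rcases le_total (x i - y i) (q1 * m) with h | h
    · have hmax : max (q1 * m - (x i - y i)) 0 = q1 * m - (x i - y i) :=
        max_eq_left (by linarith)
      rw [hmax] at hΔ
      have hp1 : 0 ≤ lam * (E + q1 * D * m) := mul_nonneg hlam0.le (by linarith)
      have hp2 : 0 ≤ lam * ρ * (C * (q1 * m - (x i - y i)) - (Px - Py)) :=
        mul_nonneg (by positivity) (by linarith)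
      have hp3 : 0 ≤ (1 - (lam * D + lam * ρ * C)) * (q1 * m - (x i - y i)) :=
        mul_nonneg (by linarith) (by linarith)
      have hp4 : 0 ≤ (q - q1) * m := mul_nonneg (by linarith) hm0
      nlinarith [hp1, hp2, hp3, hp4]
    · have hmax : max (q1 * m - (x i - y i)) 0 = 0 := max_eq_right (by linarith)
      rw [hmax] at hΔ
      have hp1 : 0 ≤ lam * (E + q1 * D * m) := mul_nonneg hlam0.le (by linarith)
      have hp2 : 0 ≤ lam * ρ * (Py - Px) := mul_nonneg (by positivity) (by linarith)
      have hp3 : 0 ≤ (1 - lam * D) * (m - (x i - y i)) := by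
        refine mul_nonneg (by linarith) (by linarith)
      have hp4 : 0 ≤ lam * (1 - q1) * (D - c) * m :=
        mul_nonneg (mul_nonneg (mul_nonneg hlam0.le (by linarith)) (by linarith)) hm0
      have hp5 : 0 ≤ (q - (1 - lam * c * (1 - q1))) * m := mul_nonneg (by linarith) hm0
      nlinarith [hp1, hp2, hp3, hp4, hp5]
  -- package S and prove it is a contraction
  set S : (Fin N → ℝ) → (Fin N → ℝ) := fun x i =>
    x i - lam * ((𝔄 u₀ *ᵥ x - 𝔅 u₀) i -
      ρ * sSup ((fun u => max ((𝔅 u - 𝔄 u *ᵥ x) i) 0) '' Set.Icc a b)) with hSdef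
  have hlip : ∀ x y : Fin N → ℝ, dist (S x) (S y) ≤ q * dist x y := by
    intro x y
    have hm : ∀ j, |x j - y j| ≤ dist x y := fun j => by
      rw [← Real.dist_eq]; exact dist_le_pi_dist x y j
    have hm' : ∀ j, |y j - x j| ≤ dist x y := fun j => by
      rw [abs_sub_comm]; exact hm j
    rw [dist_pi_le_iff (mul_nonneg hq0 dist_nonneg)]
    intro i
    rw [Real.dist_eq, abs_sub_le_iff]
    exact ⟨hcomp x y _ hm i, hcomp y x _ hm' i⟩
  have hcontr : ContractingWith ⟨q, hq0⟩ S := by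
    constructor
    · exact_mod_cast hqlt
    · exact LipschitzWith.of_dist_le_mul fun x y => hlip x y
  -- translate the equation into the fixed point property
  have hiff : ∀ x : Fin N → ℝ,
      (∀ i : Fin N, (𝔄 u₀ *ᵥ x - 𝔅 u₀) i -
        ρ * sSup ((fun u => max ((𝔅 u - 𝔄 u *ᵥ x) i) 0) '' Set.Icc a b) = 0) ↔
      Function.IsFixedPt S x := by
    intro x
    constructor
    · intro h
      have : S x = x := by
        funext i
        simp only [hSdef, h i, mul_zero, sub_zero]
      exact this
    · intro h i
      have h1 := congrFun h i
      simp only [hSdef] at h1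
      have h2 : lam * ((𝔄 u₀ *ᵥ x - 𝔅 u₀) i -
          ρ * sSup ((fun u => max ((𝔅 u - 𝔄 u *ᵥ x) i) 0) '' Set.Icc a b)) = 0 := by
        linarith
      rcases mul_eq_zero.1 h2 with h3 | h3
      · exact absurd h3 hlam0.ne'
      · exact h3
  refine ⟨ContractingWith.fixedPoint S hcontr, ?_, ?_⟩
  · exact (hiff _).2 (hcontr.fixedPoint_isFixedPt)
  · intro x hx
    exact hcontr.fixedPoint_unique ((hiff x).1 hx)
end

section
/- Let (x^n)_{n≥0} be a sequence generated by the Newton-like iteration for the penalised HJB equation with Π(y) = max{y,0} from an arbitrary starting value x^0 ∈ ℝ^N. Then the iteration is well defined (each matrix A_{u_0} + ρ A^min(x^n) lies in K^o_N and is invertible) and the iterates are monotone: x^n ≤ x^{n+1} componentwise for every n ≥ 1. -/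
open Matrix Filter

/-- The matrix `A^min(y)`: its `i`-th row is the `i`-th row of `A_{u^min(y,i)}`
if `(b_{u^min(y,i)} - A_{u^min(y,i)} y)_i > 0`, and the zero row otherwise. -/
noncomputable def AminMat {N : ℕ} (𝔄 : ℝ → Matrix (Fin N) (Fin N) ℝ)
    (𝔅 : ℝ → (Fin N → ℝ)) (umin : (Fin N → ℝ) → Fin N → ℝ) (y : Fin N → ℝ) :
    Matrix (Fin N) (Fin N) ℝ :=
  fun i j =>
    if 0 < (𝔅 (umin y i) - 𝔄 (umin y i) *ᵥ y) i then 𝔄 (umin y i) i j else 0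

/-- The vector `b^min(y)`: its `i`-th entry is `(b_{u^min(y,i)})_i`
if `(b_{u^min(y,i)} - A_{u^min(y,i)} y)_i > 0`, and `0` otherwise. -/
noncomputable def bminVec {N : ℕ} (𝔄 : ℝ → Matrix (Fin N) (Fin N) ℝ)
    (𝔅 : ℝ → (Fin N → ℝ)) (umin : (Fin N → ℝ) → Fin N → ℝ) (y : Fin N → ℝ) :
    Fin N → ℝ :=
  fun i =>
    if 0 < (𝔅 (umin y i) - 𝔄 (umin y i) *ᵥ y) i then 𝔅 (umin y i) i else 0

/-- A matrix in `K^o_N` is invertible. -/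
lemma koMat_isUnit {N : ℕ} {A : Matrix (Fin N) (Fin N) ℝ} (hA : KoMat A) : IsUnit A := by
  rw [Matrix.isUnit_iff_isUnit_det, isUnit_iff_ne_zero]
  apply det_ne_zero_of_sum_row_lt_diag
  intro k
  have h := hA.2 k
  have hd : 0 ≤ A k k := le_trans (Finset.sum_nonneg fun s _ => abs_nonneg _) h.le
  simpa [Real.norm_eq_abs, abs_of_nonneg hd] using h

/-- A matrix in `K^o_N` is inverse-positive (monotone). -/
lemma koMat_inv_nonneg {N : ℕ} {A : Matrix (Fin N) (Fin N) ℝ} (hA : KoMat A)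
    {w : Fin N → ℝ} (hw : 0 ≤ A *ᵥ w) : 0 ≤ w := by
  by_contra hcon
  rw [Pi.le_def, not_forall] at hcon
  obtain ⟨i, hi⟩ := hcon
  push_neg at hi
  simp only [Pi.zero_apply] at hi
  obtain ⟨i₀, -, hmin⟩ := Finset.exists_min_image Finset.univ w ⟨i, Finset.mem_univ i⟩
  have hi₀ : w i₀ < 0 := lt_of_le_of_lt (hmin i (Finset.mem_univ i)) hi
  have key : (A *ᵥ w) i₀ < 0 := by
    have h1 : (A *ᵥ w) i₀ ≤ (∑ s, A i₀ s) * w i₀ := by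
      rw [Matrix.mulVec, dotProduct, Finset.sum_mul]
      apply Finset.sum_le_sum
      intro s _
      rcases eq_or_ne s i₀ with rfl | hs
      · exact le_rfl
      · exact mul_le_mul_of_nonpos_left (hmin s (Finset.mem_univ s)) (hA.1 i₀ s (Ne.symm hs))
    have h2 : 0 < ∑ s, A i₀ s := by
      rw [← Finset.add_sum_erase _ _ (Finset.mem_univ i₀)]
      have : -∑ s ∈ Finset.univ.erase i₀, |A i₀ s| ≤ ∑ s ∈ Finset.univ.erase i₀, A i₀ s := by
        rw [← Finset.sum_neg_distrib]
        exact Finset.sum_le_sum fun s _ => neg_abs_le _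
      linarith [hA.2 i₀]
    exact lt_of_le_of_lt h1 (mul_neg_of_pos_of_neg h2 hi₀)
  exact absurd (hw i₀) (not_le.mpr key)

/-- The Newton-like iteration for the penalised HJB equation (with
`Π(y) = max{y,0}`) is well defined and its iterates are monotone from step 1 on. -/
theorem newton_like_HJB_monotone
    (N : ℕ) (hN : 0 < N) (a b : ℝ) (hab : a ≤ b)
    (𝔄 : ℝ → Matrix (Fin N) (Fin N) ℝ) (𝔅 : ℝ → (Fin N → ℝ))
    (hAcont : ContinuousOn 𝔄 (Set.Icc a b)) (hbcont : ContinuousOn 𝔅 (Set.Icc a b))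
    (hKo : ∀ u ∈ Set.Icc a b, KoMat (𝔄 u))
    (u₀ : ℝ) (hu₀ : u₀ ∈ Set.Icc a b) (ρ : ℝ) (hρ : 0 < ρ)
    (umin : (Fin N → ℝ) → Fin N → ℝ)
    (hsel : ∀ (y : Fin N → ℝ) (i : Fin N), umin y i ∈ Set.Icc a b ∧
      IsGreatest ((fun v => (𝔅 v - 𝔄 v *ᵥ y) i) '' Set.Icc a b)
        ((𝔅 (umin y i) - 𝔄 (umin y i) *ᵥ y) i))
    (x : ℕ → (Fin N → ℝ))
    (hiter : ∀ n : ℕ,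
      (𝔄 u₀ + ρ • AminMat 𝔄 𝔅 umin (x n)) *ᵥ x (n + 1) =
        𝔅 u₀ + ρ • bminVec 𝔄 𝔅 umin (x n)) :
    (∀ y : Fin N → ℝ,
        KoMat (𝔄 u₀ + ρ • AminMat 𝔄 𝔅 umin y) ∧
        IsUnit (𝔄 u₀ + ρ • AminMat 𝔄 𝔅 umin y)) ∧
    ∀ n : ℕ, 1 ≤ n → x n ≤ x (n + 1) := by
  -- Part 1: the matrices of the iteration lie in `K^o_N`.
  have hwd : ∀ y : Fin N → ℝ, KoMat (𝔄 u₀ + ρ • AminMat 𝔄 𝔅 umin y) := by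
    intro y
    constructor
    · intro r s hrs
      have h1 : (𝔄 u₀) r s ≤ 0 := (hKo u₀ hu₀).1 r s hrs
      have h2 : AminMat 𝔄 𝔅 umin y r s ≤ 0 := by
        unfold AminMat
        split_ifs with h
        · exact (hKo _ (hsel y r).1).1 r s hrs
        · exact le_rfl
      simp only [Matrix.add_apply, Matrix.smul_apply, smul_eq_mul]
      nlinarith
    · intro r
      have habs : ∀ s ∈ Finset.univ.erase r,
          |(𝔄 u₀ + ρ • AminMat 𝔄 𝔅 umin y) r s|
            = |(𝔄 u₀) r s| + ρ * |AminMat 𝔄 𝔅 umin y r s| := by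
        intro s hs
        have hsr : r ≠ s := (Finset.ne_of_mem_erase hs).symm
        have h1 : (𝔄 u₀) r s ≤ 0 := (hKo u₀ hu₀).1 r s hsr
        have h2 : AminMat 𝔄 𝔅 umin y r s ≤ 0 := by
          unfold AminMat
          split_ifs with h
          · exact (hKo _ (hsel y r).1).1 r s hsr
          · exact le_rfl
        simp only [Matrix.add_apply, Matrix.smul_apply, smul_eq_mul]
        rw [abs_of_nonpos (by nlinarith), abs_of_nonpos h1, abs_of_nonpos h2]
        ring
      rw [Finset.sum_congr rfl habs, Finset.sum_add_distrib, ← Finset.mul_sum]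
      have h3 : ∑ s ∈ Finset.univ.erase r, |AminMat 𝔄 𝔅 umin y r s|
          ≤ AminMat 𝔄 𝔅 umin y r r := by
        unfold AminMat
        by_cases hc : 0 < (𝔅 (umin y r) - 𝔄 (umin y r) *ᵥ y) r
        · simp only [if_pos hc]
          exact ((hKo _ (hsel y r).1).2 r).le
        · simp only [if_neg hc]
          simp
      have h4 := (hKo u₀ hu₀).2 r
      simp only [Matrix.add_apply, Matrix.smul_apply, smul_eq_mul]
      nlinarith [mul_le_mul_of_nonneg_left h3 hρ.le]
  refine ⟨fun y => ⟨hwd y, koMat_isUnit (hwd y)⟩, ?_⟩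
  -- key pointwise estimate
  have hrow : ∀ (z y : Fin N → ℝ) (i : Fin N),
      (AminMat 𝔄 𝔅 umin z *ᵥ y) i
        = if 0 < (𝔅 (umin z i) - 𝔄 (umin z i) *ᵥ z) i then (𝔄 (umin z i) *ᵥ y) i else 0 := by
    intro z y i
    simp only [AminMat, Matrix.mulVec, dotProduct]
    split_ifs with h
    · rfl
    · simp
  have hkey : ∀ (z y : Fin N → ℝ) (i : Fin N),
      bminVec 𝔄 𝔅 umin z i - (AminMat 𝔄 𝔅 umin z *ᵥ y) i
        ≤ bminVec 𝔄 𝔅 umin y i - (AminMat 𝔄 𝔅 umin y *ᵥ y) i := by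
    intro z y i
    rw [hrow, hrow]
    simp only [bminVec]
    have hub : (𝔅 (umin z i) - 𝔄 (umin z i) *ᵥ y) i
        ≤ (𝔅 (umin y i) - 𝔄 (umin y i) *ᵥ y) i :=
      (hsel y i).2.2 ⟨umin z i, (hsel z i).1, rfl⟩
    simp only [Pi.sub_apply] at hub ⊢
    split_ifs with h1 h2 h2 <;> linarith
  intro n hn
  obtain ⟨m, rfl⟩ : ∃ m, n = m + 1 := ⟨n - 1, (Nat.succ_pred_eq_of_pos hn).symm⟩
  have h0 : 0 ≤ (𝔄 u₀ + ρ • AminMat 𝔄 𝔅 umin (x (m + 1))) *ᵥ (x (m + 2) - x (m + 1)) := by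
    intro i
    have e1 := congrFun (hiter (m + 1)) i
    have e2 := congrFun (hiter m) i
    have hk := hkey (x m) (x (m + 1)) i
    simp only [Matrix.add_mulVec, Matrix.smul_mulVec, Pi.add_apply, Pi.smul_apply,
      smul_eq_mul] at e1 e2
    simp only [Matrix.mulVec_sub, Matrix.add_mulVec, Matrix.smul_mulVec, Pi.sub_apply,
      Pi.add_apply, Pi.smul_apply, Pi.zero_apply, smul_eq_mul]
    nlinarith [mul_le_mul_of_nonneg_left hk hρ.le]
  have hle := koMat_inv_nonneg (hwd (x (m + 1))) h0
  intro i
  have := hle i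
  simp only [Pi.sub_apply, Pi.zero_apply] at this
  linarith
end

section
/- There exists a constant C > 0 such that for every starting value x^0 ∈ ℝ^N, the sequence (x^n)_{n≥0} generated by the Newton-like iteration for the penalised HJB equation with Π(y) = max{y,0} satisfies ‖x^n‖∞ ≤ C for all n ≥ 1. -/
open Matrix Filter

lemma dd_solve_bound {N : ℕ} [Nonempty (Fin N)] {M : Matrix (Fin N) (Fin N) ℝ}
    {x c : Fin N → ℝ} {δ B : ℝ} (hδ : 0 < δ)
    (hdom : ∀ i, δ ≤ M i i - ∑ j ∈ Finset.univ.erase i, |M i j|)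
    (hc : ∀ i, |c i| ≤ B) (hMx : M *ᵥ x = c) : ‖x‖ ≤ B / δ := by
  have hB : 0 ≤ B := le_trans (abs_nonneg _) (hc (Classical.arbitrary _))
  obtain ⟨i, -, hi⟩ := Finset.exists_max_image (Finset.univ : Finset (Fin N))
    (fun j => |x j|) Finset.univ_nonempty
  have key : δ * |x i| ≤ B := by
    have hsplit : M i i * x i = c i - ∑ j ∈ Finset.univ.erase i, M i j * x j := by
      have := congrFun hMx i
      simp only [mulVec, dotProduct] at this
      rw [← this, ← Finset.sum_erase_add Finset.univ _ (Finset.mem_univ i)]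
      ring
    have h1 : M i i * |x i| ≤ B + (∑ j ∈ Finset.univ.erase i, |M i j|) * |x i| := by
      have hMii : 0 < M i i := by
        have := hdom i
        have hs : 0 ≤ ∑ j ∈ Finset.univ.erase i, |M i j| :=
          Finset.sum_nonneg fun j _ => abs_nonneg _
        linarith
      calc M i i * |x i| = |M i i * x i| := by
              rw [abs_mul, abs_of_pos hMii]
        _ = |c i - ∑ j ∈ Finset.univ.erase i, M i j * x j| := by rw [hsplit]
        _ ≤ |c i| + |∑ j ∈ Finset.univ.erase i, M i j * x j| := abs_sub _ _
        _ ≤ B + ∑ j ∈ Finset.univ.erase i, |M i j| * |x i| := by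
              gcongr
              · exact hc i
              · refine le_trans (Finset.abs_sum_le_sum_abs _ _) ?_
                refine Finset.sum_le_sum fun j _ => ?_
                rw [abs_mul]
                exact mul_le_mul_of_nonneg_left (hi j (Finset.mem_univ j)) (abs_nonneg _)
        _ = B + (∑ j ∈ Finset.univ.erase i, |M i j|) * |x i| := by
              rw [Finset.sum_mul]
    have h2 : (M i i - ∑ j ∈ Finset.univ.erase i, |M i j|) * |x i| ≤ B := by
      nlinarith [abs_nonneg (x i)]
    calc δ * |x i| ≤ (M i i - ∑ j ∈ Finset.univ.erase i, |M i j|) * |x i| :=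
          mul_le_mul_of_nonneg_right (hdom i) (abs_nonneg _)
      _ ≤ B := h2
  have hxi : |x i| ≤ B / δ := (le_div_iff₀ hδ).mpr (by linarith [key])
  refine (pi_norm_le_iff_of_nonneg (by positivity)).mpr fun j => ?_
  rw [Real.norm_eq_abs]
  exact le_trans (hi j (Finset.mem_univ j)) hxi

/-- The iterates of the Newton-like iteration for the penalised HJB equation
(with `Π(y) = max{y,0}`) are bounded from step 1 on, uniformly in the starting
value. -/
theorem newton_like_HJB_bounded
    (N : ℕ) (hN : 0 < N) (a b : ℝ) (hab : a ≤ b)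
    (𝔄 : ℝ → Matrix (Fin N) (Fin N) ℝ) (𝔅 : ℝ → (Fin N → ℝ))
    (hAcont : ContinuousOn 𝔄 (Set.Icc a b)) (hbcont : ContinuousOn 𝔅 (Set.Icc a b))
    (hKo : ∀ u ∈ Set.Icc a b, KoMat (𝔄 u))
    (u₀ : ℝ) (hu₀ : u₀ ∈ Set.Icc a b) (ρ : ℝ) (hρ : 0 < ρ)
    (umin : (Fin N → ℝ) → Fin N → ℝ)
    (hsel : ∀ (y : Fin N → ℝ) (i : Fin N), umin y i ∈ Set.Icc a b ∧
      IsGreatest ((fun v => (𝔅 v - 𝔄 v *ᵥ y) i) '' Set.Icc a b)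
        ((𝔅 (umin y i) - 𝔄 (umin y i) *ᵥ y) i)) :
    ∃ C > (0:ℝ), ∀ x : ℕ → (Fin N → ℝ),
      (∀ n : ℕ,
        (𝔄 u₀ + ρ • AminMat 𝔄 𝔅 umin (x n)) *ᵥ x (n + 1) =
          𝔅 u₀ + ρ • bminVec 𝔄 𝔅 umin (x n)) →
      ∀ n : ℕ, 1 ≤ n → ‖x n‖ ≤ C := by
  haveI : Nonempty (Fin N) := Fin.pos_iff_nonempty.mp hN
  -- bound on 𝔅 over the compact interval
  obtain ⟨β, hβ⟩ := isCompact_Icc.exists_bound_of_continuousOn hbcont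
  have hβ₀ : (0:ℝ) ≤ β := le_trans (norm_nonneg _) (hβ u₀ hu₀)
  -- dominance of 𝔄 u₀
  set dom : Matrix (Fin N) (Fin N) ℝ → Fin N → ℝ :=
    fun A i => A i i - ∑ j ∈ Finset.univ.erase i, |A i j| with hdomdef
  set δ : ℝ := Finset.univ.inf' Finset.univ_nonempty (dom (𝔄 u₀)) with hδdef
  have hδpos : 0 < δ := by
    rw [hδdef, Finset.lt_inf'_iff]
    intro i _
    have := (hKo u₀ hu₀).2 i
    simp only [hdomdef]
    linarith
  have hδle : ∀ i, δ ≤ dom (𝔄 u₀) i := fun i =>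
    Finset.inf'_le _ (Finset.mem_univ i)
  set B : ℝ := ‖𝔅 u₀‖ + ρ * β with hBdef
  refine ⟨B / δ + 1, by positivity, fun x hx n hn => ?_⟩
  obtain ⟨m, rfl⟩ := Nat.exists_eq_add_of_le hn
  rw [Nat.add_comm]
  have hb1 : ‖x (m + 1)‖ ≤ B / δ := by
    apply dd_solve_bound hδpos ?_ ?_ (hx m)
    · -- dominance of the iteration matrix
      intro i
      set y := x m
      set u := umin y i with hu
      by_cases hP : 0 < (𝔅 u - 𝔄 u *ᵥ y) i
      · have hrow : ∀ j, (𝔄 u₀ + ρ • AminMat 𝔄 𝔅 umin y) i j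
            = 𝔄 u₀ i j + ρ * 𝔄 u i j := by
          intro j
          simp only [Matrix.add_apply, Matrix.smul_apply, smul_eq_mul, AminMat,
            ← hu, if_pos hP]
        have huab : u ∈ Set.Icc a b := (hsel y i).1
        have hA0 := hKo u₀ hu₀
        have hAu := hKo u huab
        have habs : ∀ j ∈ Finset.univ.erase i,
            |𝔄 u₀ i j + ρ * 𝔄 u i j| = |𝔄 u₀ i j| + ρ * |𝔄 u i j| := by
          intro j hj
          have hji : j ≠ i := Finset.ne_of_mem_erase hj
          have h0 : 𝔄 u₀ i j ≤ 0 := hA0.1 i j (Ne.symm hji)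
          have h1 : 𝔄 u i j ≤ 0 := hAu.1 i j (Ne.symm hji)
          rw [abs_of_nonpos h0, abs_of_nonpos h1,
            abs_of_nonpos (by nlinarith)]
          ring
        simp only [hrow]
        rw [Finset.sum_congr rfl habs, Finset.sum_add_distrib, ← Finset.mul_sum]
        have hdu : 0 < dom (𝔄 u) i := by
          have := hAu.2 i; simp only [hdomdef]; linarith
        have := hδle i
        simp only [hdomdef] at this hdu
        nlinarith
      · have hrow : ∀ j, (𝔄 u₀ + ρ • AminMat 𝔄 𝔅 umin y) i j = 𝔄 u₀ i j := by
          intro j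
          simp only [Matrix.add_apply, Matrix.smul_apply, smul_eq_mul, AminMat,
            ← hu, if_neg hP, mul_zero, add_zero]
        simp only [hrow]
        exact hδle i
    · -- bound on the right-hand side
      intro i
      set y := x m
      have h1 : |bminVec 𝔄 𝔅 umin y i| ≤ β := by
        unfold bminVec
        split
        · calc |𝔅 (umin y i) i| = ‖𝔅 (umin y i) i‖ := (Real.norm_eq_abs _).symm
            _ ≤ ‖𝔅 (umin y i)‖ := norm_le_pi_norm _ i
            _ ≤ β := hβ _ (hsel y i).1
        · simpa using hβ₀
      have h2 : |𝔅 u₀ i| ≤ ‖𝔅 u₀‖ := by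
        rw [← Real.norm_eq_abs]; exact norm_le_pi_norm _ i
      calc |(𝔅 u₀ + ρ • bminVec 𝔄 𝔅 umin y) i|
          = |𝔅 u₀ i + ρ * bminVec 𝔄 𝔅 umin y i| := by simp
        _ ≤ |𝔅 u₀ i| + ρ * |bminVec 𝔄 𝔅 umin y i| := by
            refine le_trans (abs_add_le _ _) ?_
            rw [abs_mul, abs_of_pos hρ]
        _ ≤ B := by rw [hBdef]; gcongr
  have : (0:ℝ) ≤ B / δ := by positivity
  linarith
end

section
/- For every starting value x^0 ∈ ℝ^N, the sequence (x^n)_{n≥0} generated by the Newton-like iteration for the penalised HJB equation with Π(y) = max{y,0} converges to a limit x_ρ ∈ ℝ^N which satisfies (A_{u_0}x_ρ − b_{u_0}) − ρ·max_{u∈U} max{b_u − A_u x_ρ , 0} = 0. -/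
open Matrix Filter

/-- A Ko-matrix is inverse-positive: `M z ≥ 0` implies `z ≥ 0`. -/
lemma ko_solve_nonneg {N : ℕ} (M : Matrix (Fin N) (Fin N) ℝ) (hM : KoMat M)
    (z : Fin N → ℝ) (h : ∀ i, 0 ≤ (M *ᵥ z) i) : ∀ i, 0 ≤ z i := by
  by_contra hc
  push_neg at hc
  obtain ⟨i0, hi0⟩ := hc
  obtain ⟨i, -, hi⟩ := Finset.exists_min_image Finset.univ z ⟨i0, Finset.mem_univ i0⟩
  have hzi : z i < 0 := lt_of_le_of_lt (hi i0 (Finset.mem_univ i0)) hi0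
  have h1 : (M *ᵥ z) i = M i i * z i + ∑ s ∈ Finset.univ.erase i, M i s * z s := by
    simp only [mulVec, dotProduct]
    exact (Finset.add_sum_erase _ _ (Finset.mem_univ i)).symm
  have h2 : ∑ s ∈ Finset.univ.erase i, M i s * z s ≤
      (∑ s ∈ Finset.univ.erase i, M i s) * z i := by
    rw [Finset.sum_mul]
    refine Finset.sum_le_sum fun s hs => ?_
    exact mul_le_mul_of_nonpos_left (hi s (Finset.mem_univ s))
      (hM.1 i s (Finset.ne_of_mem_erase hs).symm)
  have h3 : ∑ s ∈ Finset.univ.erase i, M i s = -∑ s ∈ Finset.univ.erase i, |M i s| := by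
    rw [← Finset.sum_neg_distrib]
    refine Finset.sum_congr rfl fun s hs => ?_
    rw [abs_of_nonpos (hM.1 i s (Finset.ne_of_mem_erase hs).symm)]; ring
  have h4 := hM.2 i
  have h5 : (M *ᵥ z) i ≤ (M i i + ∑ s ∈ Finset.univ.erase i, M i s) * z i := by
    rw [h1, add_mul]; linarith
  have h6 : 0 < M i i + ∑ s ∈ Finset.univ.erase i, M i s := by rw [h3]; linarith
  have := h i
  nlinarith

/-- Uniform sup-norm bound for solutions of uniformly diagonally dominant systems. -/
lemma ko_solve_bound {N : ℕ} (M : Matrix (Fin N) (Fin N) ℝ) (z : Fin N → ℝ)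
    (δ C : ℝ) (hδ : 0 < δ)
    (hgap : ∀ r, ∑ s ∈ Finset.univ.erase r, |M r s| + δ ≤ M r r)
    (hC : ∀ j, |(M *ᵥ z) j| ≤ C) (i : Fin N) : |z i| ≤ C / δ := by
  obtain ⟨m, -, hm⟩ := Finset.exists_max_image Finset.univ (fun j => |z j|)
    ⟨i, Finset.mem_univ i⟩
  have hMm : 0 < M m m := lt_of_lt_of_le (by positivity) <|
    le_trans (by
      linarith [Finset.sum_nonneg
        (fun s (_ : s ∈ Finset.univ.erase m) => abs_nonneg (M m s))]) (hgap m)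
  have h1 : (M *ᵥ z) m = M m m * z m + ∑ s ∈ Finset.univ.erase m, M m s * z s := by
    simp only [mulVec, dotProduct]
    exact (Finset.add_sum_erase _ _ (Finset.mem_univ m)).symm
  have h2 : |∑ s ∈ Finset.univ.erase m, M m s * z s| ≤
      (∑ s ∈ Finset.univ.erase m, |M m s|) * |z m| := by
    refine le_trans (Finset.abs_sum_le_sum_abs _ _) ?_
    rw [Finset.sum_mul]
    refine Finset.sum_le_sum fun s _ => ?_
    rw [abs_mul]
    exact mul_le_mul_of_nonneg_left (hm s (Finset.mem_univ s)) (abs_nonneg _)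
  have h3 : δ * |z m| ≤ |(M *ᵥ z) m| := by
    have hkey : M m m * |z m| - (∑ s ∈ Finset.univ.erase m, |M m s|) * |z m| ≤
        |(M *ᵥ z) m| := by
      rw [h1]
      have habs := abs_sub_abs_le_abs_sub (M m m * z m)
        (-(∑ s ∈ Finset.univ.erase m, M m s * z s))
      simp only [sub_neg_eq_add, abs_neg] at habs
      calc M m m * |z m| - (∑ s ∈ Finset.univ.erase m, |M m s|) * |z m|
          ≤ |M m m * z m| - |∑ s ∈ Finset.univ.erase m, M m s * z s| := by
            rw [abs_mul, abs_of_pos hMm]; linarith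
        _ ≤ _ := habs
    nlinarith [hgap m, abs_nonneg (z m), hm i (Finset.mem_univ i)]
  have h4 : δ * |z i| ≤ C :=
    le_trans (by nlinarith [hm i (Finset.mem_univ i)]) (le_trans h3 (hC m))
  rw [le_div_iff₀ hδ]; linarith

/-- For every starting value, the Newton-like iteration for the penalised HJB
equation (with `Π(y) = max{y,0}`) converges to a limit solving the penalised
HJB equation. -/
theorem newton_like_HJB_converges
    (N : ℕ) (hN : 0 < N) (a b : ℝ) (hab : a ≤ b)
    (𝔄 : ℝ → Matrix (Fin N) (Fin N) ℝ) (𝔅 : ℝ → (Fin N → ℝ))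
    (hAcont : ContinuousOn 𝔄 (Set.Icc a b)) (hbcont : ContinuousOn 𝔅 (Set.Icc a b))
    (hKo : ∀ u ∈ Set.Icc a b, KoMat (𝔄 u))
    (u₀ : ℝ) (hu₀ : u₀ ∈ Set.Icc a b) (ρ : ℝ) (hρ : 0 < ρ)
    (umin : (Fin N → ℝ) → Fin N → ℝ)
    (hsel : ∀ (y : Fin N → ℝ) (i : Fin N), umin y i ∈ Set.Icc a b ∧
      IsGreatest ((fun v => (𝔅 v - 𝔄 v *ᵥ y) i) '' Set.Icc a b)
        ((𝔅 (umin y i) - 𝔄 (umin y i) *ᵥ y) i))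
    (x : ℕ → (Fin N → ℝ))
    (hiter : ∀ n : ℕ,
      (𝔄 u₀ + ρ • AminMat 𝔄 𝔅 umin (x n)) *ᵥ x (n + 1) =
        𝔅 u₀ + ρ • bminVec 𝔄 𝔅 umin (x n)) :
    ∃ xρ : Fin N → ℝ,
      Tendsto x atTop (nhds xρ) ∧
      ∀ i : Fin N,
        (𝔄 u₀ *ᵥ xρ - 𝔅 u₀) i -
          ρ * sSup ((fun u => max ((𝔅 u - 𝔄 u *ᵥ xρ) i) 0) '' Set.Icc a b) = 0 := by
  haveI : Nonempty (Fin N) := Fin.pos_iff_nonempty.mp hN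
  -- the uniform diagonal dominance gap of 𝔄 u₀
  set δ : ℝ := Finset.univ.inf' Finset.univ_nonempty
      (fun r => 𝔄 u₀ r r - ∑ s ∈ Finset.univ.erase r, |𝔄 u₀ r s|) with hδdef
  have hδpos : 0 < δ := by
    rw [hδdef, Finset.lt_inf'_iff]
    intro r _
    linarith [(hKo u₀ hu₀).2 r]
  have hδle : ∀ r, ∑ s ∈ Finset.univ.erase r, |𝔄 u₀ r s| + δ ≤ 𝔄 u₀ r r := by
    intro r
    have := Finset.inf'_le (b := r)
      (fun r => 𝔄 u₀ r r - ∑ s ∈ Finset.univ.erase r, |𝔄 u₀ r s|) (Finset.mem_univ r)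
    rw [hδdef]; linarith
  -- a uniform bound C on all entries of 𝔄 v and 𝔅 v, v ∈ [a,b]
  obtain ⟨C, hC0, hCA, hCb⟩ :
      ∃ C : ℝ, 0 ≤ C ∧ (∀ v ∈ Set.Icc a b, ∀ i j, |𝔄 v i j| ≤ C) ∧
        (∀ v ∈ Set.Icc a b, ∀ i, |𝔅 v i| ≤ C) := by
    set h : ℝ → ℝ := fun v => (∑ i, ∑ j, |𝔄 v i j|) + ∑ i, |𝔅 v i| with hhdef
    have hhc : ContinuousOn h (Set.Icc a b) := by
      apply ContinuousOn.add
      · apply continuousOn_finset_sum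
        intro i _
        apply continuousOn_finset_sum
        intro j _
        exact (((continuous_apply j).comp
          (continuous_apply i)).comp_continuousOn hAcont).abs
      · apply continuousOn_finset_sum
        intro i _
        exact ((continuous_apply i).comp_continuousOn hbcont).abs
    obtain ⟨v0, hv0, hmax⟩ := isCompact_Icc.exists_isMaxOn (Set.nonempty_Icc.mpr hab) hhc
    have hnonneg : ∀ v, 0 ≤ h v := by
      intro v
      apply add_nonneg
      · exact Finset.sum_nonneg fun i _ => Finset.sum_nonneg fun j _ => abs_nonneg _
      · exact Finset.sum_nonneg fun i _ => abs_nonneg _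
    refine ⟨h v0, hnonneg v0, ?_, ?_⟩
    · intro v hv i j
      refine le_trans ?_ (hmax hv)
      have h1 : |𝔄 v i j| ≤ ∑ j, |𝔄 v i j| :=
        Finset.single_le_sum (f := fun j => |𝔄 v i j|) (fun j _ => abs_nonneg _)
          (Finset.mem_univ j)
      have h2 : ∑ j, |𝔄 v i j| ≤ ∑ i, ∑ j, |𝔄 v i j| :=
        Finset.single_le_sum (f := fun i => ∑ j, |𝔄 v i j|)
          (fun i _ => Finset.sum_nonneg fun j _ => abs_nonneg _) (Finset.mem_univ i)
      have h3 : 0 ≤ ∑ i, |𝔅 v i| := Finset.sum_nonneg fun i _ => abs_nonneg _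
      simp only [hhdef]; linarith
    · intro v hv i
      refine le_trans ?_ (hmax hv)
      have h1 : |𝔅 v i| ≤ ∑ i, |𝔅 v i| :=
        Finset.single_le_sum (f := fun i => |𝔅 v i|) (fun i _ => abs_nonneg _)
          (Finset.mem_univ i)
      have h2 : 0 ≤ ∑ i, ∑ j, |𝔄 v i j| :=
        Finset.sum_nonneg fun i _ => Finset.sum_nonneg fun j _ => abs_nonneg _
      simp only [hhdef]; linarith
  -- the iteration matrices
  set M : ℕ → Matrix (Fin N) (Fin N) ℝ :=
    fun n => 𝔄 u₀ + ρ • AminMat 𝔄 𝔅 umin (x n) with hMdef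
  have hMgap : ∀ n r, ∑ s ∈ Finset.univ.erase r, |M n r s| + δ ≤ M n r r := by
    intro n r
    have hv : umin (x n) r ∈ Set.Icc a b := (hsel (x n) r).1
    by_cases hc : 0 < (𝔅 (umin (x n) r) - 𝔄 (umin (x n) r) *ᵥ x n) r
    · have he : ∀ s, M n r s = 𝔄 u₀ r s + ρ * 𝔄 (umin (x n) r) r s := by
        intro s
        have e : AminMat 𝔄 𝔅 umin (x n) r s = 𝔄 (umin (x n) r) r s := if_pos hc
        simp [hMdef, Matrix.add_apply, Matrix.smul_apply, e]
      have habs : ∀ s ∈ Finset.univ.erase r,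
          |M n r s| = |𝔄 u₀ r s| + ρ * |𝔄 (umin (x n) r) r s| := by
        intro s hs
        have hs' := (Finset.ne_of_mem_erase hs)
        have h1 := (hKo u₀ hu₀).1 r s hs'.symm
        have h2 := (hKo _ hv).1 r s hs'.symm
        rw [he s, abs_of_nonpos (by nlinarith), abs_of_nonpos h1, abs_of_nonpos h2]
        ring
      rw [Finset.sum_congr rfl habs, Finset.sum_add_distrib, he r]
      have h1 := hδle r
      have h2 := ((hKo _ hv).2 r).le
      have h3 : ∑ s ∈ Finset.univ.erase r, ρ * |𝔄 (umin (x n) r) r s| =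
          ρ * ∑ s ∈ Finset.univ.erase r, |𝔄 (umin (x n) r) r s| :=
        (Finset.mul_sum _ _ _).symm
      rw [h3]
      nlinarith
    · have he : ∀ s, M n r s = 𝔄 u₀ r s := by
        intro s
        have e : AminMat 𝔄 𝔅 umin (x n) r s = 0 := if_neg hc
        simp [hMdef, Matrix.add_apply, Matrix.smul_apply, e]
      simp only [he]
      exact hδle r
  have hMko : ∀ n, KoMat (M n) := by
    intro n
    constructor
    · intro r s hrs
      have hv := (hsel (x n) r).1
      have h1 := (hKo u₀ hu₀).1 r s hrs
      have hA' : AminMat 𝔄 𝔅 umin (x n) r s ≤ 0 := by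
        by_cases hc : 0 < (𝔅 (umin (x n) r) - 𝔄 (umin (x n) r) *ᵥ x n) r
        · have e : AminMat 𝔄 𝔅 umin (x n) r s = 𝔄 (umin (x n) r) r s := if_pos hc
          rw [e]; exact (hKo _ hv).1 r s hrs
        · have e : AminMat 𝔄 𝔅 umin (x n) r s = 0 := if_neg hc
          rw [e]
      simp only [hMdef, Matrix.add_apply, Matrix.smul_apply, smul_eq_mul]
      nlinarith
    · intro r
      exact lt_of_lt_of_le (lt_add_of_pos_right _ hδpos) (hMgap n r)
  have hMentry : ∀ n i j, |M n i j| ≤ C * (1 + ρ) := by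
    intro n i j
    have hv := (hsel (x n) i).1
    have hA' : |AminMat 𝔄 𝔅 umin (x n) i j| ≤ C := by
      by_cases hc : 0 < (𝔅 (umin (x n) i) - 𝔄 (umin (x n) i) *ᵥ x n) i
      · have e : AminMat 𝔄 𝔅 umin (x n) i j = 𝔄 (umin (x n) i) i j := if_pos hc
        rw [e]; exact hCA _ hv i j
      · have e : AminMat 𝔄 𝔅 umin (x n) i j = 0 := if_neg hc
        rw [e]; simpa using hC0
    simp only [hMdef, Matrix.add_apply, Matrix.smul_apply, smul_eq_mul]
    calc |𝔄 u₀ i j + ρ * AminMat 𝔄 𝔅 umin (x n) i j|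
        ≤ |𝔄 u₀ i j| + ρ * |AminMat 𝔄 𝔅 umin (x n) i j| := by
          refine le_trans (abs_add_le _ _) ?_
          rw [abs_mul, abs_of_pos hρ]
    _ ≤ C * (1 + ρ) := by nlinarith [hCA u₀ hu₀ i j]
  -- the value function g
  set g : (Fin N → ℝ) → Fin N → ℝ :=
    fun y i => (𝔅 (umin y i) - 𝔄 (umin y i) *ᵥ y) i with hgdef
  have hAmv : ∀ y (z : Fin N → ℝ) i, (AminMat 𝔄 𝔅 umin y *ᵥ z) i =
      if 0 < (𝔅 (umin y i) - 𝔄 (umin y i) *ᵥ y) i then (𝔄 (umin y i) *ᵥ z) i else 0 := by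
    intro y z i
    by_cases hc : 0 < (𝔅 (umin y i) - 𝔄 (umin y i) *ᵥ y) i
    · rw [if_pos hc]
      simp only [mulVec, dotProduct]
      refine Finset.sum_congr rfl fun j _ => ?_
      have e : AminMat 𝔄 𝔅 umin y i j = 𝔄 (umin y i) i j := if_pos hc
      rw [e]
    · rw [if_neg hc]
      simp only [mulVec, dotProduct]
      refine Finset.sum_eq_zero fun j _ => ?_
      have e : AminMat 𝔄 𝔅 umin y i j = 0 := if_neg hc
      rw [e, zero_mul]
  have hgapp : ∀ z i, g z i = 𝔅 (umin z i) i - (𝔄 (umin z i) *ᵥ z) i := by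
    intro z i
    simp [hgdef]
  have hD1 : ∀ y z i, bminVec 𝔄 𝔅 umin y i - (AminMat 𝔄 𝔅 umin y *ᵥ z) i ≤
      max (g z i) 0 := by
    intro y z i
    by_cases hc : 0 < (𝔅 (umin y i) - 𝔄 (umin y i) *ᵥ y) i
    · have hb : bminVec 𝔄 𝔅 umin y i = 𝔅 (umin y i) i := if_pos hc
      rw [hb, hAmv y z i, if_pos hc]
      have hub : (𝔅 (umin y i) - 𝔄 (umin y i) *ᵥ z) i ≤ g z i :=
        (hsel z i).2.2 ⟨umin y i, (hsel y i).1, rfl⟩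
      have hub' : 𝔅 (umin y i) i - (𝔄 (umin y i) *ᵥ z) i ≤ g z i := by
        simpa using hub
      exact le_trans hub' (le_max_left _ _)
    · have hb : bminVec 𝔄 𝔅 umin y i = 0 := if_neg hc
      rw [hb, hAmv y z i, if_neg hc]
      simp
  have hD2 : ∀ z i, bminVec 𝔄 𝔅 umin z i - (AminMat 𝔄 𝔅 umin z *ᵥ z) i =
      max (g z i) 0 := by
    intro z i
    by_cases hc : 0 < (𝔅 (umin z i) - 𝔄 (umin z i) *ᵥ z) i
    · have hgpos : 0 < g z i := by rw [hgapp]; simpa using hc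
      have hb : bminVec 𝔄 𝔅 umin z i = 𝔅 (umin z i) i := if_pos hc
      rw [hb, hAmv z z i, if_pos hc, max_eq_left hgpos.le, hgapp]
    · have hgnp : g z i ≤ 0 := by rw [hgapp]; simpa using not_lt.mp hc
      have hb : bminVec 𝔄 𝔅 umin z i = 0 := if_neg hc
      rw [hb, hAmv z z i, if_neg hc, max_eq_right hgnp]
      norm_num
  -- monotonicity from step 1 on
  have hmono : ∀ m i, x (m + 1) i ≤ x (m + 2) i := by
    intro m
    have key : ∀ i, 0 ≤ (M (m + 1) *ᵥ (x (m + 2) - x (m + 1))) i := by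
      intro i
      have e1 := congrFun (hiter (m + 1)) i
      have e0 := congrFun (hiter m) i
      simp only [add_mulVec, smul_mulVec, Pi.add_apply, Pi.smul_apply,
        smul_eq_mul] at e0 e1
      have expand : (M (m + 1) *ᵥ (x (m + 2) - x (m + 1))) i
          = ((𝔄 u₀ *ᵥ x (m + 2)) i + ρ * (AminMat 𝔄 𝔅 umin (x (m + 1)) *ᵥ x (m + 2)) i)
            - ((𝔄 u₀ *ᵥ x (m + 1)) i
              + ρ * (AminMat 𝔄 𝔅 umin (x (m + 1)) *ᵥ x (m + 1)) i) := by
        simp only [hMdef, mulVec_sub, add_mulVec, smul_mulVec, Pi.sub_apply,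
          Pi.add_apply, Pi.smul_apply, smul_eq_mul]
        try ring
      have d2 := hD2 (x (m + 1)) i
      have d1 := hD1 (x m) (x (m + 1)) i
      have d1' := mul_le_mul_of_nonneg_left d1 hρ.le
      have d2' : ρ * (bminVec 𝔄 𝔅 umin (x (m + 1)) i
          - (AminMat 𝔄 𝔅 umin (x (m + 1)) *ᵥ x (m + 1)) i) = ρ * max (g (x (m + 1)) i) 0 := by
        rw [d2]
      rw [expand]
      nlinarith [d1', d2']
    intro i
    have := ko_solve_nonneg (M (m + 1)) (hMko (m + 1)) _ key i
    simp only [Pi.sub_apply] at this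
    linarith
  -- uniform bound
  have hbdd : ∀ n i, |x (n + 1) i| ≤ C * (1 + ρ) / δ := by
    intro n i
    refine ko_solve_bound (M n) (x (n + 1)) δ (C * (1 + ρ)) hδpos (hMgap n) ?_ i
    intro j
    rw [hiter n]
    have hv := (hsel (x n) j).1
    simp only [Pi.add_apply, Pi.smul_apply, smul_eq_mul, bminVec]
    split
    · calc |𝔅 u₀ j + ρ * 𝔅 (umin (x n) j) j|
          ≤ |𝔅 u₀ j| + ρ * |𝔅 (umin (x n) j) j| := by
            refine le_trans (abs_add_le _ _) ?_
            rw [abs_mul, abs_of_pos hρ]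
      _ ≤ C * (1 + ρ) := by nlinarith [hCb u₀ hu₀ j, hCb _ hv j]
    · simp only [mul_zero, add_zero]
      nlinarith [hCb u₀ hu₀ j]
  -- the limit
  set xρ : Fin N → ℝ := fun i => ⨆ n, x (n + 1) i with hxρdef
  have hcomp : ∀ i, Tendsto (fun n => x n i) atTop (nhds (xρ i)) := by
    intro i
    have hmon : Monotone fun n => x (n + 1) i :=
      monotone_nat_of_le_succ fun n => hmono n i
    have hbd : BddAbove (Set.range fun n => x (n + 1) i) := by
      refine ⟨C * (1 + ρ) / δ, ?_⟩
      rintro _ ⟨n, rfl⟩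
      exact le_trans (le_abs_self _) (hbdd n i)
    have h1 : Tendsto (fun n => x (n + 1) i) atTop (nhds (xρ i)) :=
      tendsto_atTop_ciSup hmon hbd
    exact (tendsto_add_atTop_iff_nat 1).mp h1
  have hx : Tendsto x atTop (nhds xρ) := tendsto_pi_nhds.mpr hcomp
  refine ⟨xρ, hx, fun i => ?_⟩
  have hF1 : ∀ n, (𝔅 u₀ - 𝔄 u₀ *ᵥ x n) i + ρ * max (g (x n) i) 0 =
      (M n *ᵥ (x (n + 1) - x n)) i := by
    intro n
    have e := congrFun (hiter n) i
    simp only [add_mulVec, smul_mulVec, Pi.add_apply, Pi.smul_apply,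
      smul_eq_mul] at e
    have expand : (M n *ᵥ (x (n + 1) - x n)) i
        = ((𝔄 u₀ *ᵥ x (n + 1)) i + ρ * (AminMat 𝔄 𝔅 umin (x n) *ᵥ x (n + 1)) i)
          - ((𝔄 u₀ *ᵥ x n) i + ρ * (AminMat 𝔄 𝔅 umin (x n) *ᵥ x n) i) := by
      simp only [hMdef, mulVec_sub, add_mulVec, smul_mulVec, Pi.sub_apply,
        Pi.add_apply, Pi.smul_apply, smul_eq_mul]
      try ring
    have d2 := hD2 (x n) i
    have d2' : ρ * (bminVec 𝔄 𝔅 umin (x n) i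
        - (AminMat 𝔄 𝔅 umin (x n) *ᵥ x n) i) = ρ * max (g (x n) i) 0 := by rw [d2]
    rw [expand]
    simp only [Pi.sub_apply]
    linarith [d2', e]
  have hdj : ∀ j, Tendsto (fun n => |x n j - xρ j|) atTop (nhds 0) := by
    intro j
    have := ((hcomp j).sub (tendsto_const_nhds (x := xρ j))).abs
    simpa using this
  have hF2 : Tendsto (fun n => (M n *ᵥ (x (n + 1) - x n)) i) atTop (nhds 0) := by
    have hdiff : ∀ j, Tendsto (fun n => |x (n + 1) j - x n j|) atTop (nhds 0) := by
      intro j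
      have h1 : Tendsto (fun n => x (n + 1) j) atTop (nhds (xρ j)) :=
        (tendsto_add_atTop_iff_nat 1).mpr (hcomp j)
      have := (h1.sub (hcomp j)).abs
      simpa using this
    have he : Tendsto (fun n => C * (1 + ρ) * ∑ j, |x (n + 1) j - x n j|)
        atTop (nhds 0) := by
      have h0 : Tendsto (fun n => ∑ j, |x (n + 1) j - x n j|) atTop (nhds 0) := by
        have := tendsto_finset_sum (Finset.univ : Finset (Fin N))
          (fun j _ => hdiff j)
        simpa using this
      simpa using h0.const_mul (C * (1 + ρ))
    refine squeeze_zero_norm (fun n => ?_) he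
    rw [Real.norm_eq_abs]
    simp only [mulVec, dotProduct]
    refine le_trans (Finset.abs_sum_le_sum_abs _ _) ?_
    rw [Finset.mul_sum]
    refine Finset.sum_le_sum fun j _ => ?_
    rw [abs_mul]
    have h1 := hMentry n i j
    have h2 : |(x (n + 1) - x n) j| = |x (n + 1) j - x n j| := by simp
    rw [h2]
    exact mul_le_mul h1 le_rfl (abs_nonneg _) (by nlinarith)
  have hg : Tendsto (fun n => g (x n) i) atTop (nhds (g xρ i)) := by
    have hlip : ∀ y z, g y i - g z i ≤ C * ∑ j, |y j - z j| := by
      intro y z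
      have hv := (hsel y i).1
      have h1 : (𝔅 (umin y i) - 𝔄 (umin y i) *ᵥ z) i ≤ g z i :=
        (hsel z i).2.2 ⟨umin y i, hv, rfl⟩
      have h2 : g y i - (𝔅 (umin y i) - 𝔄 (umin y i) *ᵥ z) i
          = ∑ j, 𝔄 (umin y i) i j * (z j - y j) := by
        simp only [hgdef, Pi.sub_apply, mulVec, dotProduct, Finset.mul_sum,
          mul_sub, Finset.sum_sub_distrib]
        ring
      have h3 : ∑ j, 𝔄 (umin y i) i j * (z j - y j) ≤ C * ∑ j, |y j - z j| := by
        rw [Finset.mul_sum]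
        refine Finset.sum_le_sum fun j _ => ?_
        have := hCA _ hv i j
        calc 𝔄 (umin y i) i j * (z j - y j) ≤ |𝔄 (umin y i) i j * (z j - y j)| :=
              le_abs_self _
          _ = |𝔄 (umin y i) i j| * |y j - z j| := by
              rw [abs_mul, abs_sub_comm]
          _ ≤ C * |y j - z j| := mul_le_mul_of_nonneg_right this (abs_nonneg _)
      linarith
    have habs : ∀ n, |g (x n) i - g xρ i| ≤ C * ∑ j, |x n j - xρ j| := by
      intro n
      rw [abs_le]
      constructor
      · have := hlip xρ (x n)
        have hsym : ∑ j, |xρ j - x n j| = ∑ j, |x n j - xρ j| :=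
          Finset.sum_congr rfl fun j _ => abs_sub_comm _ _
        rw [hsym] at this
        linarith
      · exact hlip (x n) xρ
    have he : Tendsto (fun n => C * ∑ j, |x n j - xρ j|) atTop (nhds 0) := by
      have h0 : Tendsto (fun n => ∑ j, |x n j - xρ j|) atTop (nhds 0) := by
        have := tendsto_finset_sum (Finset.univ : Finset (Fin N)) (fun j _ => hdj j)
        simpa using this
      simpa using h0.const_mul C
    have hsq : Tendsto (fun n => g (x n) i - g xρ i) atTop (nhds 0) :=
      squeeze_zero_norm (fun n => by rw [Real.norm_eq_abs]; exact habs n) he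
    have := hsq.add (tendsto_const_nhds (x := g xρ i))
    simpa using this
  have hA0 : Tendsto (fun n => (𝔄 u₀ *ᵥ x n) i) atTop (nhds ((𝔄 u₀ *ᵥ xρ) i)) := by
    simp only [mulVec, dotProduct]
    exact tendsto_finset_sum _ fun j _ => tendsto_const_nhds.mul (hcomp j)
  have hF3 : Tendsto (fun n => (𝔅 u₀ - 𝔄 u₀ *ᵥ x n) i + ρ * max (g (x n) i) 0)
      atTop (nhds ((𝔅 u₀ - 𝔄 u₀ *ᵥ xρ) i + ρ * max (g xρ i) 0)) := by
    simp only [Pi.sub_apply]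
    exact (tendsto_const_nhds.sub hA0).add ((hg.max tendsto_const_nhds).const_mul ρ)
  have hFeq : (𝔅 u₀ - 𝔄 u₀ *ᵥ xρ) i + ρ * max (g xρ i) 0 = 0 := by
    refine tendsto_nhds_unique ?_ hF2
    exact hF3.congr fun n => hF1 n
  have hsSup : sSup ((fun u => max ((𝔅 u - 𝔄 u *ᵥ xρ) i) 0) '' Set.Icc a b) =
      max (g xρ i) 0 := by
    refine IsGreatest.csSup_eq ⟨⟨umin xρ i, (hsel xρ i).1, rfl⟩, ?_⟩
    rintro _ ⟨v, hv, rfl⟩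
    exact max_le_max ((hsel xρ i).2.2 ⟨v, hv, rfl⟩) le_rfl
  rw [hsSup]
  have hneg : (𝔄 u₀ *ᵥ xρ - 𝔅 u₀) i = -((𝔅 u₀ - 𝔄 u₀ *ᵥ xρ) i) := by
    simp
  rw [hneg]
  linarith
end

section
/- For any fixed ρ > 0 and penalty term Π, the penalised obstacle equation max_{u∈U}{A_u z − b_u} − ρ·Π(b̃ − Ãz) = 0 has at most one solution z ∈ ℝ^N: if z_1 and z_2 both solve it, then z_1 = z_2. -/
open Matrix Filter

/-- The penalised obstacle equation
`max_{u∈U}{A_u z - b_u} - ρ · Π(b̃ - Ã z) = 0` (componentwise); the maximum over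
the compact set `U` is expressed via `sSup` of the image. -/
def PenObstEq {N : ℕ} (𝔄 : ℝ → Matrix (Fin N) (Fin N) ℝ) (𝔅 : ℝ → (Fin N → ℝ))
    (U : Set ℝ) (At : Matrix (Fin N) (Fin N) ℝ) (bt : Fin N → ℝ)
    (P : PenaltyTerm N) (ρ : ℝ) (z : Fin N → ℝ) : Prop :=
  ∀ i : Fin N,
    sSup ((fun u => (𝔄 u *ᵥ z - 𝔅 u) i) '' U) -
      ρ * P.π i ((bt - At *ᵥ z) i) = 0

lemma KoMat.mulVec_pos {N : ℕ} {A : Matrix (Fin N) (Fin N) ℝ} (hA : KoMat A)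
    {w : Fin N → ℝ} {i : Fin N} (hmax : ∀ s, w s ≤ w i) (hpos : 0 < w i) :
    0 < (A *ᵥ w) i := by
  have hsum : ∀ s ∈ Finset.univ.erase i, -|A i s| * w i ≤ A i s * w s := by
    intro s hs
    have hs' : s ≠ i := Finset.ne_of_mem_erase hs
    have hneg : A i s ≤ 0 := hA.1 i s (Ne.symm hs')
    calc -|A i s| * w i = A i s * w i := by rw [abs_of_nonpos hneg]; ring
      _ ≤ A i s * w s := mul_le_mul_of_nonpos_left (hmax s) hneg
  have hsum' : ∑ s ∈ Finset.univ.erase i, -|A i s| * w i ≤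
      ∑ s ∈ Finset.univ.erase i, A i s * w s := Finset.sum_le_sum hsum
  have heq : (A *ᵥ w) i = A i i * w i + ∑ s ∈ Finset.univ.erase i, A i s * w s := by
    simp only [mulVec, dotProduct]
    rw [← Finset.add_sum_erase _ _ (Finset.mem_univ i)]
  have h2 : ∑ s ∈ Finset.univ.erase i, -|A i s| * w i =
      -(∑ s ∈ Finset.univ.erase i, |A i s|) * w i := by
    rw [← Finset.sum_mul, ← Finset.sum_neg_distrib]
  have h3 : 0 < (A i i - ∑ s ∈ Finset.univ.erase i, |A i s|) * w i :=
    mul_pos (sub_pos.2 (hA.2 i)) hpos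
  rw [heq]
  rw [h2] at hsum'
  nlinarith [hsum', h3]

lemma penalised_obstacle_le
    (N : ℕ) (a b : ℝ) (hab : a ≤ b)
    (𝔄 : ℝ → Matrix (Fin N) (Fin N) ℝ) (𝔅 : ℝ → (Fin N → ℝ))
    (hAcont : ContinuousOn 𝔄 (Set.Icc a b)) (hbcont : ContinuousOn 𝔅 (Set.Icc a b))
    (hKo : ∀ u ∈ Set.Icc a b, KoMat (𝔄 u))
    (At : Matrix (Fin N) (Fin N) ℝ) (bt : Fin N → ℝ) (hAt : KoMat At)
    (ρ : ℝ) (hρ : 0 < ρ) (P : PenaltyTerm N) (z₁ z₂ : Fin N → ℝ)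
    (h₁ : PenObstEq 𝔄 𝔅 (Set.Icc a b) At bt P ρ z₁)
    (h₂ : PenObstEq 𝔄 𝔅 (Set.Icc a b) At bt P ρ z₂) :
    z₁ ≤ z₂ := by
  by_contra hcon
  simp only [Pi.le_def, not_forall, not_le] at hcon
  obtain ⟨j, hj⟩ := hcon
  set w : Fin N → ℝ := z₁ - z₂ with hw
  obtain ⟨i, -, hi⟩ := Finset.exists_max_image Finset.univ w ⟨j, Finset.mem_univ j⟩
  have hmax : ∀ s, w s ≤ w i := fun s => hi s (Finset.mem_univ s)
  have hpos : 0 < w i := lt_of_lt_of_le (sub_pos.2 hj) (hmax j)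
  have hz : z₁ = z₂ + w := by simp [hw]
  have ha : a ∈ Set.Icc a b := ⟨le_refl a, hab⟩
  -- continuity of the entry functions on Icc a b
  have hc : ∀ z : Fin N → ℝ, ContinuousOn (fun u => (𝔄 u *ᵥ z - 𝔅 u) i) (Set.Icc a b) := by
    intro z
    have h1 : ContinuousOn (fun u => (𝔄 u *ᵥ z) i) (Set.Icc a b) := by
      simp only [mulVec, dotProduct]
      exact continuousOn_finset_sum _ fun s _ =>
        (((continuous_apply_apply i s)).comp_continuousOn hAcont).mul continuousOn_const
    exact h1.sub ((continuous_apply i).comp_continuousOn hbcont)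
  -- max of f₂ is attained at some u₀
  obtain ⟨u₀, hu₀, hmax₂⟩ := isCompact_Icc.exists_isMaxOn ⟨a, ha⟩ (hc z₂)
  have hbdd : ∀ z : Fin N → ℝ, BddAbove ((fun u => (𝔄 u *ᵥ z - 𝔅 u) i) '' Set.Icc a b) :=
    fun z => (isCompact_Icc.image_of_continuousOn (hc z)).bddAbove
  have hS₂ : sSup ((fun u => (𝔄 u *ᵥ z₂ - 𝔅 u) i) '' Set.Icc a b) =
      (𝔄 u₀ *ᵥ z₂ - 𝔅 u₀) i := by
    apply le_antisymm
    · apply csSup_le (Set.Nonempty.image _ ⟨a, ha⟩)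
      rintro x ⟨u, hu, rfl⟩
      exact hmax₂ hu
    · exact le_csSup (hbdd z₂) (Set.mem_image_of_mem _ hu₀)
  have hS₁ : (𝔄 u₀ *ᵥ z₁ - 𝔅 u₀) i ≤
      sSup ((fun u => (𝔄 u *ᵥ z₁ - 𝔅 u) i) '' Set.Icc a b) :=
    le_csSup (hbdd z₁) (Set.mem_image_of_mem _ hu₀)
  -- strict gain at u₀
  have hgain : 0 < (𝔄 u₀ *ᵥ w) i := (hKo u₀ hu₀).mulVec_pos hmax hpos
  have hstep : (𝔄 u₀ *ᵥ z₂ - 𝔅 u₀) i < (𝔄 u₀ *ᵥ z₁ - 𝔅 u₀) i := by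
    rw [hz, mulVec_add]
    simp only [Pi.sub_apply, Pi.add_apply]
    linarith
  -- penalty side
  have hgain' : 0 < (At *ᵥ w) i := hAt.mulVec_pos hmax hpos
  have hpen : (bt - At *ᵥ z₁) i ≤ (bt - At *ᵥ z₂) i := by
    rw [hz, mulVec_add]
    simp only [Pi.sub_apply, Pi.add_apply]
    linarith
  have hπ : P.π i ((bt - At *ᵥ z₁) i) ≤ P.π i ((bt - At *ᵥ z₂) i) := P.mono i hpen
  have e₁ := h₁ i
  have e₂ := h₂ i
  have hρπ : ρ * P.π i ((bt - At *ᵥ z₁) i) ≤ ρ * P.π i ((bt - At *ᵥ z₂) i) :=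
    mul_le_mul_of_nonneg_left hπ hρ.le
  rw [hS₂] at e₂
  linarith

/-- The penalised obstacle equation has at most one solution. -/
theorem penalised_obstacle_unique
    (N : ℕ) (hN : 0 < N) (a b : ℝ) (hab : a ≤ b)
    (𝔄 : ℝ → Matrix (Fin N) (Fin N) ℝ) (𝔅 : ℝ → (Fin N → ℝ))
    (hAcont : ContinuousOn 𝔄 (Set.Icc a b)) (hbcont : ContinuousOn 𝔅 (Set.Icc a b))
    (hKo : ∀ u ∈ Set.Icc a b, KoMat (𝔄 u))
    (At : Matrix (Fin N) (Fin N) ℝ) (bt : Fin N → ℝ) (hAt : KoMat At)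
    (ρ : ℝ) (hρ : 0 < ρ) (P : PenaltyTerm N) (z₁ z₂ : Fin N → ℝ)
    (h₁ : PenObstEq 𝔄 𝔅 (Set.Icc a b) At bt P ρ z₁)
    (h₂ : PenObstEq 𝔄 𝔅 (Set.Icc a b) At bt P ρ z₂) :
    z₁ = z₂ :=
  le_antisymm
    (penalised_obstacle_le N a b hab 𝔄 𝔅 hAcont hbcont hKo At bt hAt ρ hρ P z₁ z₂ h₁ h₂)
    (penalised_obstacle_le N a b hab 𝔄 𝔅 hAcont hbcont hKo At bt hAt ρ hρ P z₂ z₁ h₂ h₁)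
end

section
/- There exists a constant C > 0, independent of ρ and of the penalty term Π, such that for every ρ > 0, every penalty term Π, and every solution z_ρ of the penalised obstacle equation, one has ‖z_ρ‖∞ ≤ C. -/
open Matrix Filter

lemma row_lb {N : ℕ} (A : Matrix (Fin N) (Fin N) ℝ) (i : Fin N) (z : Fin N → ℝ) (δ : ℝ)
    (hoff : ∀ s, s ≠ i → A i s ≤ 0)
    (hgap : δ ≤ A i i - ∑ s ∈ Finset.univ.erase i, |A i s|)
    (hzi : 0 ≤ z i) (hzs : ∀ s, z s ≤ z i) :
    δ * z i ≤ (A *ᵥ z) i := by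
  have hmv : (A *ᵥ z) i = A i i * z i + ∑ s ∈ Finset.univ.erase i, A i s * z s := by
    simp only [Matrix.mulVec, dotProduct]
    rw [← Finset.add_sum_erase _ _ (Finset.mem_univ i)]
  have h1 : ∑ s ∈ Finset.univ.erase i, A i s * z i ≤ ∑ s ∈ Finset.univ.erase i, A i s * z s := by
    refine Finset.sum_le_sum fun s hs => ?_
    exact mul_le_mul_of_nonpos_left (hzs s) (hoff s (Finset.ne_of_mem_erase hs))
  have h2 : (-(∑ s ∈ Finset.univ.erase i, |A i s|)) * z i ≤
      (∑ s ∈ Finset.univ.erase i, A i s) * z i := by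
    refine mul_le_mul_of_nonneg_right ?_ hzi
    rw [neg_le]
    calc -∑ s ∈ Finset.univ.erase i, A i s = ∑ s ∈ Finset.univ.erase i, -(A i s) := by
          rw [Finset.sum_neg_distrib]
      _ ≤ ∑ s ∈ Finset.univ.erase i, |A i s| := Finset.sum_le_sum fun s _ => neg_le_abs _
  rw [hmv, ← Finset.sum_mul] at *
  nlinarith [mul_le_mul_of_nonneg_right hgap hzi]

lemma row_ub {N : ℕ} (A : Matrix (Fin N) (Fin N) ℝ) (i : Fin N) (z : Fin N → ℝ) (δ : ℝ)
    (hoff : ∀ s, s ≠ i → A i s ≤ 0)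
    (hgap : δ ≤ A i i - ∑ s ∈ Finset.univ.erase i, |A i s|)
    (hzi : z i ≤ 0) (hzs : ∀ s, z i ≤ z s) :
    (A *ᵥ z) i ≤ δ * z i := by
  have := row_lb A i (-z) δ hoff hgap (by simpa using hzi) (fun s => by simpa using hzs s)
  rw [Matrix.mulVec_neg] at this
  simp only [Pi.neg_apply] at this
  linarith

/-- Solutions of the penalised obstacle equation are bounded in the maximum
norm by a constant independent of `ρ` and of the penalty term `Π`. -/
theorem penalised_obstacle_solution_bounded
    (N : ℕ) (hN : 0 < N) (a b : ℝ) (hab : a ≤ b)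
    (𝔄 : ℝ → Matrix (Fin N) (Fin N) ℝ) (𝔅 : ℝ → (Fin N → ℝ))
    (hAcont : ContinuousOn 𝔄 (Set.Icc a b)) (hbcont : ContinuousOn 𝔅 (Set.Icc a b))
    (hKo : ∀ u ∈ Set.Icc a b, KoMat (𝔄 u))
    (At : Matrix (Fin N) (Fin N) ℝ) (bt : Fin N → ℝ) (hAt : KoMat At) :
    ∃ C > (0:ℝ), ∀ ρ > (0:ℝ), ∀ P : PenaltyTerm N, ∀ z : Fin N → ℝ,
      PenObstEq 𝔄 𝔅 (Set.Icc a b) At bt P ρ z → ‖z‖ ≤ C := by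
  haveI : Nonempty (Fin N) := Fin.pos_iff_nonempty.mp hN
  have haI : a ∈ Set.Icc a b := Set.left_mem_Icc.2 hab
  have hEnt : ∀ i s : Fin N, ContinuousOn (fun u => 𝔄 u i s) (Set.Icc a b) :=
    fun i s => (continuous_apply_apply i s).comp_continuousOn hAcont
  have hBent : ∀ i : Fin N, ContinuousOn (fun u => 𝔅 u i) (Set.Icc a b) :=
    fun i => (continuous_apply i).comp_continuousOn hbcont
  set g : Fin N → ℝ → ℝ := fun i u => 𝔄 u i i - ∑ s ∈ Finset.univ.erase i, |𝔄 u i s| with hg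
  have hgcont : ∀ i, ContinuousOn (g i) (Set.Icc a b) := fun i =>
    (hEnt i i).sub (continuousOn_finset_sum _ fun s _ => (hEnt i s).abs)
  have hδ : ∀ i, ∃ δi > (0:ℝ), ∀ u ∈ Set.Icc a b, δi ≤ g i u := by
    intro i
    obtain ⟨u0, hu0, hmin⟩ := isCompact_Icc.exists_isMinOn ⟨a, haI⟩ (hgcont i)
    refine ⟨g i u0, ?_, fun u hu => hmin hu⟩
    have := (hKo u0 hu0).2 i
    simp only [hg]; linarith
  choose δf hδfpos hδf using hδ
  have hM : ∀ i, ∃ Mi : ℝ, ∀ u ∈ Set.Icc a b, |𝔅 u i| ≤ Mi := by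
    intro i
    obtain ⟨Mi, hMi⟩ :=
      (isCompact_Icc.image_of_continuousOn (hBent i).abs).bddAbove
    exact ⟨Mi, fun u hu => hMi ⟨u, hu, rfl⟩⟩
  choose Mf hMf using hM
  -- constants
  set δ : ℝ := min (Finset.univ.inf' Finset.univ_nonempty δf)
      (Finset.univ.inf' Finset.univ_nonempty fun i =>
        At i i - ∑ s ∈ Finset.univ.erase i, |At i s|) with hδdef
  have hδpos : 0 < δ := by
    refine lt_min ((Finset.lt_inf'_iff _).2 fun i _ => hδfpos i)
      ((Finset.lt_inf'_iff _).2 fun i _ => by linarith [hAt.2 i])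
  have hδleA : ∀ i, ∀ u ∈ Set.Icc a b, δ ≤ g i u := fun i u hu =>
    le_trans (le_trans (min_le_left _ _) (Finset.inf'_le _ (Finset.mem_univ i))) (hδf i u hu)
  have hδleAt : ∀ i, δ ≤ At i i - ∑ s ∈ Finset.univ.erase i, |At i s| := fun i =>
    le_trans (min_le_right _ _) (Finset.inf'_le _ (Finset.mem_univ i))
  set M : ℝ := max 0 (max (Finset.univ.sup' Finset.univ_nonempty Mf)
      (Finset.univ.sup' Finset.univ_nonempty fun i => |bt i|)) with hMdef
  have hMB : ∀ i, ∀ u ∈ Set.Icc a b, |𝔅 u i| ≤ M := fun i u hu =>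
    le_trans (hMf i u hu) (le_trans (Finset.le_sup' _ (Finset.mem_univ i))
      (le_trans (le_max_left _ _) (le_max_right _ _)))
  have hMbt : ∀ i, |bt i| ≤ M := fun i =>
    le_trans (Finset.le_sup' (fun i => |bt i|) (Finset.mem_univ i))
      (le_trans (le_max_right _ _) (le_max_right _ _))
  refine ⟨max 1 (M / δ), lt_of_lt_of_le one_pos (le_max_left _ _), ?_⟩
  intro ρ hρ P z heq
  obtain ⟨i, _, hi⟩ := Finset.exists_max_image Finset.univ (fun s => |z s|)
    ⟨Classical.arbitrary (Fin N), Finset.mem_univ _⟩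
  have hi' : ∀ s, |z s| ≤ |z i| := fun s => hi s (Finset.mem_univ s)
  -- the sup set
  have hfcont : ContinuousOn (fun u => (𝔄 u *ᵥ z - 𝔅 u) i) (Set.Icc a b) := by
    have : (fun u => (𝔄 u *ᵥ z - 𝔅 u) i) =
        fun u => (∑ s, 𝔄 u i s * z s) - 𝔅 u i := by
      funext u; simp [Matrix.mulVec, dotProduct]
    rw [this]
    exact (continuousOn_finset_sum _ fun s _ => (hEnt i s).mul continuousOn_const).sub (hBent i)
  set S : Set ℝ := (fun u => (𝔄 u *ᵥ z - 𝔅 u) i) '' Set.Icc a b with hS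
  have hScomp : IsCompact S := isCompact_Icc.image_of_continuousOn hfcont
  have hSne : S.Nonempty := ⟨_, a, haI, rfl⟩
  have hπnn : 0 ≤ P.π i ((bt - At *ᵥ z) i) := by
    rcases le_or_gt ((bt - At *ᵥ z) i) 0 with h | h
    · rw [P.eq_zero i _ h]
    · exact (P.pos i _ h).le
  have hsup : sSup S = ρ * P.π i ((bt - At *ᵥ z) i) := by
    have := heq i; rw [← hS] at this; linarith
  -- main estimate: δ * |z i| ≤ M
  have hkey : δ * |z i| ≤ M := by
    rcases le_or_gt 0 (z i) with hzi | hzi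
    · have habs : |z i| = z i := abs_of_nonneg hzi
      have hzs : ∀ s, z s ≤ z i := fun s => le_trans (le_abs_self _) (habs ▸ hi' s)
      rcases le_or_gt ((bt - At *ᵥ z) i) 0 with h | h
      · -- penalty vanishes, sSup = 0
        have hsup0 : sSup S = 0 := by rw [hsup, P.eq_zero i _ h]; ring
        have hle : (𝔄 a *ᵥ z - 𝔅 a) i ≤ 0 := by
          rw [← hsup0]; exact le_csSup hScomp.bddAbove ⟨a, haI, rfl⟩
        have hrow : δ * z i ≤ (𝔄 a *ᵥ z) i :=
          row_lb _ i z δ (fun s hs => (hKo a haI).1 i s (Ne.symm hs)) (hδleA i a haI) hzi hzs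
        have hb : 𝔅 a i ≤ M := le_trans (le_abs_self _) (hMB i a haI)
        simp only [Pi.sub_apply] at hle
        rw [habs]; linarith
      · have hrow : δ * z i ≤ (At *ᵥ z) i :=
          row_lb At i z δ (fun s hs => hAt.1 i s (Ne.symm hs)) (hδleAt i) hzi hzs
        have : (At *ᵥ z) i < bt i := by simp only [Pi.sub_apply] at h; linarith
        have := le_trans (le_abs_self (bt i)) (hMbt i)
        rw [habs]; linarith
    · have habs : |z i| = -z i := abs_of_neg hzi
      have hzs : ∀ s, z i ≤ z s := fun s => by
        have := habs ▸ hi' s; have := neg_abs_le (z s); linarith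
      obtain ⟨u0, hu0, hfu0⟩ := hScomp.sSup_mem hSne
      have hge : 0 ≤ (𝔄 u0 *ᵥ z - 𝔅 u0) i := by
        have h0 : (𝔄 u0 *ᵥ z - 𝔅 u0) i = sSup S := hfu0
        rw [h0, hsup]; positivity
      have hrow : (𝔄 u0 *ᵥ z) i ≤ δ * z i :=
        row_ub _ i z δ (fun s hs => (hKo u0 hu0).1 i s (Ne.symm hs)) (hδleA i u0 hu0)
          hzi.le hzs
      have hb : -M ≤ 𝔅 u0 i := by
        have := hMB i u0 hu0; have := neg_abs_le (𝔅 u0 i); linarith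
      simp only [Pi.sub_apply] at hge
      rw [habs]; linarith
  have hMnn : 0 ≤ M := le_max_left _ _
  have hbound : ∀ s, |z s| ≤ max 1 (M / δ) := fun s =>
    le_trans (hi' s) (le_trans ((le_div_iff₀' hδpos).2 hkey) (le_max_right _ _))
  exact (pi_norm_le_iff_of_nonneg (le_trans zero_le_one (le_max_left _ _))).2
    fun s => by simpa using hbound s
end
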